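/- arXiv:2507.12342 — 7 statements merged into one kernel-verified Lean document; each statement's English description precedes it below -/
import Mathlib

section
/- There is an absolute constant C such that for every integer q ≥ 3, every non-principal Dirichlet character χ modulo q, every positive integer m with gcd(m, q) = 1, and every real x ≥ 2, one has |∑_{n ≤ x, gcd(n, m) = 1} μ(n)^2 · χ(n) · f(n)| ≤ C · τ(m) · q^{1/2} · (log q) · x^{1/2} · (log x). -/
open Finset ArithmeticFunction
open scoped ArithmeticFunction.Moebius ArithmeticFunction.zeta

/-- `f(n) = ∏_{p ∣ n} (1 + 1/p)⁻¹`. -/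
noncomputable def fmul (n : ℕ) : ℝ := ∏ p ∈ n.primeFactors, ((1 : ℝ) + 1 / p)⁻¹

namespace CSNP

noncomputable def F : ArithmeticFunction ℝ :=
  ⟨fun n => if n = 0 then 0 else fmul n, by simp⟩

lemma F_apply {n : ℕ} (hn : n ≠ 0) : F n = fmul n := if_neg hn

lemma F_mult : F.IsMultiplicative := by
  rw [ArithmeticFunction.IsMultiplicative.iff_ne_zero]
  constructor
  · simp [F, fmul]
  · intro m n hm hn hmn
    rw [F_apply hm, F_apply hn, F_apply (mul_ne_zero hm hn)]
    unfold fmul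
    rw [Nat.primeFactors_mul hm hn, Finset.prod_union hmn.disjoint_primeFactors]

noncomputable def M : ArithmeticFunction ℝ :=
  ((μ : ArithmeticFunction ℝ).pmul (μ : ArithmeticFunction ℝ)).pmul F

lemma M_apply (n : ℕ) : M n = (μ n : ℝ)^2 * F n := by
  simp [M, ArithmeticFunction.pmul_apply, sq]

lemma M_mult : M.IsMultiplicative :=
  (isMultiplicative_moebius.intCast.pmul isMultiplicative_moebius.intCast).pmul F_mult

noncomputable def hker : ArithmeticFunction ℝ := (μ : ArithmeticFunction ℝ) * M

lemma hker_mult : hker.IsMultiplicative :=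
  isMultiplicative_moebius.intCast.mul M_mult

lemma zeta_mul_hker : (↑ζ * hker : ArithmeticFunction ℝ) = M := by
  rw [hker, ← mul_assoc, coe_zeta_mul_coe_moebius, one_mul]

lemma sum_divisors_hker (n : ℕ) (hn : n ≠ 0) :
    ∑ d ∈ n.divisors, hker d = M n := by
  conv_rhs => rw [← zeta_mul_hker]
  rw [coe_zeta_mul_apply]

end CSNP

namespace CSNP

lemma F_prime {p : ℕ} (hp : p.Prime) : F p = ((1 : ℝ) + 1 / p)⁻¹ := by
  rw [F_apply hp.ne_zero, fmul, hp.primeFactors, Finset.prod_singleton]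

lemma F_prime_nonneg {p : ℕ} (hp : p.Prime) : 0 ≤ F p := by
  rw [F_prime hp]
  positivity

lemma F_prime_le_one {p : ℕ} (hp : p.Prime) : F p ≤ 1 := by
  rw [F_prime hp]
  rw [inv_le_one_iff₀]
  right
  have : 0 ≤ 1/(p:ℝ) := by positivity
  linarith

lemma one_sub_F_prime_le {p : ℕ} (hp : p.Prime) : 1 - F p ≤ 1 / p := by
  have hp0 : (0:ℝ) < p := by exact_mod_cast hp.pos
  rw [F_prime hp]
  have h1 : (0:ℝ) < 1 + 1/p := by positivity
  have key : 1 - ((1:ℝ)+1/p)⁻¹ = 1/(p+1) := by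
    field_simp
    ring
  rw [key]
  apply one_div_le_one_div_of_le hp0
  linarith

lemma hker_pp {p k : ℕ} (hp : p.Prime) :
    hker (p ^ k) = if k = 0 then 1 else if k = 1 then F p - 1
      else if k = 2 then -F p else 0 := by
  have hμ : ∀ i : ℕ, (μ (p ^ i) : ℝ) = if i = 1 then -1 else if i = 0 then 1 else 0 := by
    intro i
    match i with
    | 0 => simp
    | 1 => simp [moebius_apply_prime hp]
    | (j+2) =>
      rw [moebius_apply_prime_pow hp (by omega)]
      have h1 : ¬ (j + 2 = 1) := by omega
      have h0 : ¬ (j + 2 = 0) := by omega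
      simp [h1, h0]
  have hM : ∀ i : ℕ, M (p ^ i) = if i = 0 then 1 else if i = 1 then F p else 0 := by
    intro i
    rw [M_apply, hμ i]
    match i with
    | 0 => simp [F_mult.map_one]
    | 1 => simp
    | (j+2) => simp
  rw [show hker (p ^ k) = ∑ x ∈ (p^k).divisorsAntidiagonal, (fun d e => ((μ d : ℝ)) * M e) x.1 x.2 from rfl,
    Nat.sum_divisorsAntidiagonal (fun d e => ((μ d : ℝ)) * M e), Nat.sum_divisors_prime_pow hp]
  have key : ∀ i ∈ Finset.range (k+1), (μ (p^i) : ℝ) * M (p ^ k / p ^ i) =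
      (μ (p^i) : ℝ) * M (p ^ (k - i)) := by
    intro i hi
    rw [Nat.pow_div (by simpa using Nat.lt_succ_iff.mp (Finset.mem_range.mp hi)) hp.pos]
  rw [Finset.sum_congr rfl key]
  match k with
  | 0 => simp [M_apply, F_mult.map_one]
  | 1 =>
    simp [hμ, hM, Finset.sum_range_succ]
    ring
  | 2 =>
    simp only [Finset.sum_range_succ, Finset.sum_range_zero, hμ, hM]
    norm_num
  | (j+3) =>
    have h0 : ¬(j+3 = 0) := by omega
    have h1 : ¬(j+3 = 1) := by omega
    have h2 : ¬(j+3 = 2) := by omega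
    simp only [h0, h1, h2, if_false]
    rw [Finset.sum_eq_zero]
    intro i hi
    rw [hμ, hM]
    rcases Nat.lt_or_ge i 2 with h2' | h2'
    · have hge : ¬(j + 3 - i = 0) := by omega
      have hge1 : ¬(j + 3 - i = 1) := by omega
      simp [hge, hge1]
    · have hi1 : ¬(i = 1) := by omega
      have hi0 : ¬(i = 0) := by omega
      simp [hi1, hi0]

end CSNP

namespace CSNP

noncomputable def sq2 (n : ℕ) : ℕ := n.factorization.prod fun p k => if k = 2 then p else 1

lemma sq2_pos (n : ℕ) : 0 < sq2 n := by
  rw [sq2, Finsupp.prod]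
  apply Finset.prod_pos
  intro p hp
  have hp' : p.Prime := Nat.prime_of_mem_primeFactors (by rwa [Nat.support_factorization] at hp)
  split <;> [exact hp'.pos; norm_num]

lemma sq2_sq_dvd (n : ℕ) (hn : n ≠ 0) : (sq2 n)^2 ∣ n := by
  conv_rhs => rw [← Nat.factorization_prod_pow_eq_self hn]
  rw [sq2, Finsupp.prod, ← Finset.prod_pow, Finsupp.prod]
  apply Finset.prod_dvd_prod_of_dvd
  intro p hp
  split
  · rename_i h; rw [h]
  · simp

lemma abs_hker_le (n : ℕ) (hn : n ≠ 0) : |hker n| ≤ (sq2 n : ℝ)^2 / n := by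
  rw [hker_mult.multiplicative_factorization hker hn]
  have hn' : (n : ℝ) = n.factorization.prod fun p k => (p : ℝ)^k := by
    conv_lhs => rw [← Nat.factorization_prod_pow_eq_self hn]
    rw [Finsupp.prod, Finsupp.prod, Nat.cast_prod]
    push_cast
    rfl
  have hs : ((sq2 n : ℝ))^2 = n.factorization.prod fun p k => if k = 2 then (p:ℝ)^2 else 1 := by
    rw [sq2, Finsupp.prod, Finsupp.prod, Nat.cast_prod, ← Finset.prod_pow]
    apply Finset.prod_congr rfl
    intro p _
    split <;> simp
  rw [hn', hs, Finsupp.prod, Finsupp.prod, Finsupp.prod, ← Finset.prod_div_distrib, Finset.abs_prod]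
  apply Finset.prod_le_prod
  · intro p _; exact abs_nonneg _
  intro p hp
  have hp' : p.Prime := Nat.prime_of_mem_primeFactors (by rwa [Nat.support_factorization] at hp)
  have hk : n.factorization p ≠ 0 := Finsupp.mem_support_iff.mp hp
  have hppos : (0:ℝ) < p := by exact_mod_cast hp'.pos
  rw [hker_pp hp']
  rcases Nat.lt_or_ge (n.factorization p) 3 with h3 | h3
  · interval_cases h : (n.factorization p)
    · omega
    · norm_num
      rw [abs_sub_comm, abs_of_nonneg (by linarith [F_prime_le_one hp']), ← one_div]
      exact one_sub_F_prime_le hp'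
    · norm_num
      rw [abs_of_nonneg (F_prime_nonneg hp'), div_self (by positivity)]
      exact F_prime_le_one hp'
  · have h0 : n.factorization p ≠ 0 := hk
    have h1 : n.factorization p ≠ 1 := by omega
    have h2 : n.factorization p ≠ 2 := by omega
    simp only [if_neg h0, if_neg h1, if_neg h2, abs_zero]
    positivity

end CSNP

open Finset ArithmeticFunction

namespace CSNP

variable {q : ℕ}

lemma chi_range_le (hq : 3 ≤ q) {χ : DirichletCharacter ℂ q} (hχ : χ ≠ 1) (N : ℕ) :
    ‖∑ j ∈ Finset.range N, χ (j : ZMod q)‖ ≤ q := by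
  haveI : NeZero q := ⟨by omega⟩
  induction N using Nat.strong_induction_on with
  | _ N ih =>
    rcases Nat.lt_or_ge N q with h | h
    · calc ‖∑ j ∈ range N, χ (j : ZMod q)‖ ≤ ∑ j ∈ range N, ‖χ (j : ZMod q)‖ :=
            norm_sum_le _ _
        _ ≤ ∑ _j ∈ range N, (1:ℝ) := sum_le_sum fun j _ => χ.norm_le_one _
        _ = N := by simp
        _ ≤ q := by exact_mod_cast h.le
    · have hsplit : ∑ j ∈ range N, χ (j:ZMod q)
          = ∑ j ∈ range (N - q), χ (j:ZMod q) + ∑ j ∈ Ico (N-q) N, χ (j:ZMod q) := by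
        rw [range_eq_Ico, range_eq_Ico]
        exact (Finset.sum_Ico_consecutive (fun j : ℕ => χ (j : ZMod q)) (Nat.zero_le _) (Nat.sub_le N q)).symm
      have hper : ∑ j ∈ Ico (N-q) N, χ (j : ZMod q) = 0 := by
        rw [Finset.sum_Ico_eq_sum_range]
        have hNq : N - (N - q) = q := by omega
        rw [hNq]
        have step1 : ∀ i, χ (((N - q) + i : ℕ) : ZMod q) = χ ((((N-q) : ℕ) : ZMod q) + (i : ZMod q)) := by
          intro i; push_cast; ring_nf
        simp only [step1]
        have step2 : ∑ i ∈ range q, χ ((((N-q) : ℕ) : ZMod q) + (i : ZMod q))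
            = ∑ c : ZMod q, χ ((((N-q) : ℕ) : ZMod q) + c) := by
          refine Finset.sum_bij' (fun (i : ℕ) (_ : i ∈ range q) => ((i : ZMod q)))
            (fun (c : ZMod q) (_ : c ∈ Finset.univ) => c.val) ?_ ?_ ?_ ?_ ?_
          · intro i _; exact Finset.mem_univ _
          · intro c _
            simpa using (ZMod.val_lt c)
          · intro i hi
            simp only [Finset.mem_range] at hi
            exact ZMod.val_cast_of_lt hi
          · intro c _
            exact ZMod.natCast_rightInverse c
          · intro i _
            rfl
        rw [step2]
        rw [Fintype.sum_bijective (fun c : ZMod q => (((N-q) : ℕ) : ZMod q) + c)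
          (AddGroup.addLeft_bijective _) _ (fun c => χ c) (fun c => rfl)]
        exact MulChar.sum_eq_zero_of_ne_one hχ
      rw [hsplit, hper, add_zero]
      exact ih (N - q) (by omega)

lemma chi_Icc_le (hq : 3 ≤ q) {χ : DirichletCharacter ℂ q} (hχ : χ ≠ 1) (N : ℕ) :
    ‖∑ j ∈ Finset.Icc 1 N, χ (j : ZMod q)‖ ≤ q := by
  haveI : Fact (1 < q) := ⟨by omega⟩
  have h0 : (χ ((0:ℕ) : ZMod q)) = 0 := by
    rw [Nat.cast_zero]
    exact χ.map_zero
  have hins : Finset.range (N+1) = insert 0 (Finset.Icc 1 N) := by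
    ext k; simp; omega
  have := chi_range_le hq hχ (N+1)
  rw [hins, Finset.sum_insert (by simp)] at this
  rwa [h0, zero_add] at this

end CSNP

namespace CSNP

lemma chi_dvd_filter (hq : 3 ≤ q) {χ : DirichletCharacter ℂ q} (N e : ℕ) (he : 1 ≤ e) :
    ∑ k ∈ (Finset.Icc 1 N).filter (fun k => e ∣ k), χ (k : ZMod q)
      = χ (e : ZMod q) * ∑ j ∈ Finset.Icc 1 (N / e), χ (j : ZMod q) := by
  rw [Finset.mul_sum]
  refine Finset.sum_bij' (fun (k : ℕ) (_ : k ∈ _) => k / e)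
    (fun (j : ℕ) (_ : j ∈ _) => e * j) ?_ ?_ ?_ ?_ ?_
  · intro k hk
    simp only [Finset.mem_filter, Finset.mem_Icc] at hk
    obtain ⟨⟨h1, h2⟩, hd⟩ := hk
    simp only [Finset.mem_Icc]
    constructor
    · exact Nat.one_le_div_iff (by omega) |>.mpr (Nat.le_of_dvd (by omega) hd)
    · exact Nat.div_le_div_right h2
  · intro j hj
    simp only [Finset.mem_Icc] at hj
    simp only [Finset.mem_filter, Finset.mem_Icc]
    refine ⟨⟨by nlinarith [hj.1], ?_⟩, Dvd.intro j rfl⟩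
    have h2 := (Nat.le_div_iff_mul_le (show 0 < e by omega)).mp hj.2
    have h3 : e * j = j * e := Nat.mul_comm e j
    omega
  · intro k hk
    simp only [Finset.mem_filter] at hk
    exact Nat.mul_div_cancel' hk.2
  · intro j _
    exact Nat.mul_div_cancel_left j (by omega)
  · intro k hk
    simp only [Finset.mem_filter] at hk
    conv_lhs => rw [← Nat.mul_div_cancel' hk.2]
    push_cast
    rw [map_mul]

end CSNP

namespace CSNP

lemma moebius_sum_divisors (n : ℕ) :
    (∑ e ∈ n.divisors, ((μ e : ℤ) : ℂ)) = if n = 1 then 1 else 0 := by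
  have h := congrArg (fun f : ArithmeticFunction ℂ => f n)
    (coe_moebius_mul_coe_zeta (R := ℂ))
  simp only [coe_mul_zeta_apply, one_apply, intCoe_apply] at h
  exact h

lemma abs_mu_le (e : ℕ) : ‖((μ e : ℤ) : ℂ)‖ ≤ 1 := by
  rw [Complex.norm_intCast, ← Int.cast_abs, abs_moebius]
  split <;> norm_num

lemma chi_coprime_le (hq : 3 ≤ q) {χ : DirichletCharacter ℂ q} (hχ : χ ≠ 1)
    (N M : ℕ) (hM : 1 ≤ M) :
    ‖∑ k ∈ (Finset.Icc 1 N).filter (fun k => Nat.Coprime k M), χ (k : ZMod q)‖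
      ≤ (M.divisors.card : ℝ) * q := by
  have key : ∑ k ∈ (Finset.Icc 1 N).filter (fun k => Nat.Coprime k M), χ (k:ZMod q)
      = ∑ e ∈ M.divisors, ((μ e : ℤ):ℂ) *
          ∑ k ∈ (Finset.Icc 1 N).filter (fun k => e ∣ k), χ (k:ZMod q) := by
    rw [Finset.sum_filter]
    have step1 : ∀ k ∈ Finset.Icc 1 N,
        (if Nat.Coprime k M then χ (k:ZMod q) else 0)
          = ∑ e ∈ M.divisors.filter (· ∣ k), ((μ e : ℤ):ℂ) * χ (k:ZMod q) := by
      intro k hk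
      have hdg : M.divisors.filter (· ∣ k) = (Nat.gcd k M).divisors := by
        ext e
        simp only [Finset.mem_filter, Nat.mem_divisors, Nat.dvd_gcd_iff]
        constructor
        · rintro ⟨⟨h1, h2⟩, h3⟩
          exact ⟨⟨h3, h1⟩, Nat.gcd_ne_zero_right h2⟩
        · rintro ⟨⟨h1, h2⟩, h3⟩
          exact ⟨⟨h2, by omega⟩, h1⟩
      rw [hdg, ← Finset.sum_mul, moebius_sum_divisors]
      by_cases hc : Nat.Coprime k M
      · rw [if_pos hc, if_pos hc, one_mul]
      · rw [if_neg hc, if_neg hc, zero_mul]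
    rw [Finset.sum_congr rfl step1]
    simp_rw [Finset.sum_filter]
    rw [Finset.sum_comm]
    apply Finset.sum_congr rfl
    intro e _
    rw [Finset.mul_sum]
    apply Finset.sum_congr rfl
    intro k _
    split <;> simp
  rw [key]
  calc ‖∑ e ∈ M.divisors, ((μ e : ℤ):ℂ) *
          ∑ k ∈ (Finset.Icc 1 N).filter (fun k => e ∣ k), χ (k:ZMod q)‖
      ≤ ∑ e ∈ M.divisors, ‖((μ e : ℤ):ℂ) *
          ∑ k ∈ (Finset.Icc 1 N).filter (fun k => e ∣ k), χ (k:ZMod q)‖ := norm_sum_le _ _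
    _ ≤ ∑ _e ∈ M.divisors, (q : ℝ) := ?_
    _ = (M.divisors.card : ℝ) * q := by rw [Finset.sum_const, nsmul_eq_mul]
  apply Finset.sum_le_sum
  intro e he
  have he1 : 1 ≤ e := (Nat.one_le_iff_ne_zero.mpr (Nat.pos_of_mem_divisors he).ne')
  rw [norm_mul, chi_dvd_filter hq N e he1, norm_mul]
  calc ‖((μ e : ℤ):ℂ)‖ * (‖χ (e:ZMod q)‖ * ‖∑ j ∈ Finset.Icc 1 (N/e), χ (j:ZMod q)‖)
      ≤ 1 * (1 * q) := by
        apply mul_le_mul (abs_mu_le e) ?_ (by positivity) zero_le_one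
        apply mul_le_mul (χ.norm_le_one _) (chi_Icc_le hq hχ _) (norm_nonneg _) zero_le_one
    _ = q := by ring

end CSNP

open Finset ArithmeticFunction

namespace CSNP

lemma sum_inv_le (N : ℕ) : ∑ t ∈ Finset.Icc 1 N, (t:ℝ)⁻¹ ≤ 1 + Real.log N := by
  have h1 := harmonic_le_one_add_log N
  have h2 : (harmonic N : ℝ) = ∑ t ∈ Finset.Icc 1 N, (t:ℝ)⁻¹ := by
    rw [harmonic_eq_sum_Icc]
    push_cast
    rfl
  linarith [h2 ▸ h1]

lemma sum_u32_le (N : ℕ) : ∑ u ∈ Finset.Icc 1 N, 1/((u:ℝ) * Real.sqrt u) ≤ 3 := by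
  have main : ∀ N : ℕ, 1 ≤ N → ∑ u ∈ Finset.Icc 1 N, 1/((u:ℝ) * Real.sqrt u)
      ≤ 3 - 2 / Real.sqrt N := by
    intro N hN
    induction N with
    | zero => omega
    | succ n ih =>
      rcases Nat.lt_or_ge n 1 with h | h
      · have hn : n = 0 := by omega
        subst hn
        norm_num
      · have hstep : (1:ℝ)/((n+1) * Real.sqrt (n+1))
            ≤ 2 / Real.sqrt n - 2 / Real.sqrt (n+1) := by
          set s := Real.sqrt n with hs
          set t := Real.sqrt (n+1) with ht
          have hs1 : 1 ≤ s := by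
            rw [hs, show (1:ℝ) = Real.sqrt 1 by simp]
            exact Real.sqrt_le_sqrt (by exact_mod_cast h)
          have hspos : 0 < s := by linarith
          have htpos : 0 < t := by
            rw [ht]; positivity
          have hst : s ≤ t := Real.sqrt_le_sqrt (by push_cast; linarith)
          have hs2 : s^2 = n := Real.sq_sqrt (by positivity)
          have ht2 : t^2 = (n:ℝ)+1 := by
            rw [ht, Real.sq_sqrt (by positivity)]
          have hcast : ((n:ℝ)+1) = t^2 := ht2.symm
          have hmain : ((n:ℝ)+1) * t = t^2 * t := by rw [hcast]
          rw [show ((n:ℝ)+1) * t = t^2*t from hmain, div_sub_div _ _ hspos.ne' htpos.ne',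
            div_le_div_iff₀ (by positivity) (by positivity)]
          have hd : (t - s) * (t + s) = 1 := by nlinarith
          nlinarith [mul_pos hspos htpos, sq_nonneg (t - s), mul_pos (mul_pos hspos htpos) htpos]
        have hsum : ∑ u ∈ Finset.Icc 1 (n+1), 1/((u:ℝ) * Real.sqrt u)
            = (∑ u ∈ Finset.Icc 1 n, 1/((u:ℝ) * Real.sqrt u)) + 1/((n+1:ℕ) * Real.sqrt (n+1:ℕ)) := by
          rw [Finset.sum_Icc_succ_top (by omega)]
        rw [hsum]
        have := ih h
        push_cast
        push_cast at hstep
        linarith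
  rcases Nat.lt_or_ge N 1 with h | h
  · have : N = 0 := by omega
    subst this
    simp
  · have := main N h
    have hpos : 0 ≤ 2 / Real.sqrt N := by positivity
    linarith

end CSNP

namespace CSNP

lemma sum_abs_hker_le (N : ℕ) :
    ∑ d ∈ Finset.Icc 1 N, |hker d| / Real.sqrt d ≤ 3 * (1 + Real.log N) := by
  set w : ℕ × ℕ → ℝ := fun p => (1/(p.1:ℝ)) * (1/((p.2:ℝ) * Real.sqrt p.2)) with hw
  set e : ℕ → ℕ × ℕ := fun d => (sq2 d, d / (sq2 d)^2) with he
  have hw0 : ∀ p : ℕ × ℕ, 0 ≤ w p := by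
    intro p; rw [hw]; positivity
  have hrec : ∀ d, 1 ≤ d → ((sq2 d)^2 * (d / (sq2 d)^2) = d) := by
    intro d hd
    exact Nat.mul_div_cancel' (sq2_sq_dvd d (by omega))
  have step1 : ∀ d ∈ Finset.Icc 1 N, |hker d| / Real.sqrt d ≤ w (e d) := by
    intro d hd
    simp only [Finset.mem_Icc] at hd
    obtain ⟨hd1, hd2⟩ := hd
    have htpos : 0 < sq2 d := sq2_pos d
    have hdu : (sq2 d)^2 * (d / (sq2 d)^2) = d := hrec d hd1
    set t := sq2 d with htdef
    set u := d / t^2 with hudef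
    have hupos : 0 < u := by
      rcases Nat.eq_zero_or_pos u with h0 | h
      · rw [h0, mul_zero] at hdu; omega
      · exact h
    have htR : (0:ℝ) < t := by exact_mod_cast htpos
    have huR : (0:ℝ) < u := by exact_mod_cast hupos
    have hdR : (d:ℝ) = (t:ℝ)^2 * u := by exact_mod_cast hdu.symm
    have hsq : Real.sqrt d = t * Real.sqrt u := by
      rw [hdR, Real.sqrt_mul (by positivity), Real.sqrt_sq htR.le]
    have hb := abs_hker_le d (by omega)
    have hsu : (0:ℝ) < Real.sqrt u := Real.sqrt_pos.mpr huR
    have hwe : w (e d) = (1/(t:ℝ)) * (1/((u:ℝ) * Real.sqrt u)) := by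
      rw [hw, he]
    rw [hsq, hwe]
    calc |hker d| / ((t:ℝ) * Real.sqrt u)
        ≤ ((t:ℝ)^2 / d) / ((t:ℝ) * Real.sqrt u) := by
          exact (div_le_div_iff_of_pos_right (by positivity)).mpr hb
      _ = (1/(t:ℝ)) * (1/((u:ℝ) * Real.sqrt u)) := by
          rw [hdR, div_div, div_mul_div_comm, one_mul]
          rw [div_eq_div_iff (by positivity) (by positivity)]
          have : Real.sqrt u * Real.sqrt u = u := Real.mul_self_sqrt huR.le
          nlinarith [this]
  calc ∑ d ∈ Finset.Icc 1 N, |hker d| / Real.sqrt d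
      ≤ ∑ d ∈ Finset.Icc 1 N, w (e d) := Finset.sum_le_sum step1
    _ = ∑ p ∈ (Finset.Icc 1 N).image e, w p := by
        refine (Finset.sum_image ?_).symm
        intro a ha b hb hab
        simp only [he] at hab
        have ha1 : 1 ≤ a := (Finset.mem_Icc.mp ha).1
        have hb1 : 1 ≤ b := (Finset.mem_Icc.mp hb).1
        have h3 : sq2 a = sq2 b := congrArg Prod.fst hab
        have h4 : a / (sq2 a)^2 = b / (sq2 b)^2 := congrArg Prod.snd hab
        calc a = (sq2 a)^2 * (a/(sq2 a)^2) := (hrec a ha1).symm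
          _ = (sq2 b)^2 * (b/(sq2 b)^2) := by rw [h4, h3]
          _ = b := hrec b hb1
    _ ≤ ∑ p ∈ Finset.Icc 1 N ×ˢ Finset.Icc 1 N, w p := by
        apply Finset.sum_le_sum_of_subset_of_nonneg
        · intro p hp
          simp only [Finset.mem_image] at hp
          obtain ⟨d, hd, rfl⟩ := hp
          simp only [Finset.mem_Icc] at hd
          have h1 : 1 ≤ sq2 d := sq2_pos d
          have hdvd := sq2_sq_dvd d (by omega)
          have hle : (sq2 d)^2 ≤ d := Nat.le_of_dvd (by omega) hdvd
          have hts : sq2 d ≤ d := by nlinarith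
          simp only [he, Finset.mem_product, Finset.mem_Icc]
          refine ⟨⟨h1, le_trans hts hd.2⟩, ?_, le_trans (Nat.div_le_self _ _) hd.2⟩
          exact (Nat.one_le_div_iff (by positivity)).mpr hle
        · intro p _ _; exact hw0 p
    _ = (∑ t ∈ Finset.Icc 1 N, (1/(t:ℝ)))
          * (∑ u ∈ Finset.Icc 1 N, 1/((u:ℝ)*Real.sqrt u)) := by
        rw [Finset.sum_mul_sum, Finset.sum_product]
    _ ≤ (1 + Real.log N) * 3 := by
        have hlog : 0 ≤ Real.log N := by
          rcases Nat.eq_zero_or_pos N with h0 | h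
          · simp [h0]
          · apply Real.log_nonneg; exact_mod_cast h
        apply mul_le_mul ?_ (sum_u32_le N) ?_ (by linarith)
        · simpa [one_div] using sum_inv_le N
        · apply Finset.sum_nonneg; intro u _; positivity
    _ = 3 * (1 + Real.log N) := mul_comm _ _

end CSNP

open Finset ArithmeticFunction

namespace CSNP

variable {q : ℕ}

lemma rearrange (χ : DirichletCharacter ℂ q) (m N : ℕ) :
    ∑ n ∈ (Finset.Icc 1 N).filter (fun n => Nat.Coprime n m),
        (χ (n : ZMod q) * ∑ d ∈ n.divisors, ((hker d : ℝ) : ℂ))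
      = ∑ d ∈ (Finset.Icc 1 N).filter (fun d => Nat.Coprime d m),
          ((hker d : ℝ) : ℂ) * χ (d : ZMod q) *
            ∑ k ∈ (Finset.Icc 1 (N/d)).filter (fun k => Nat.Coprime k m), χ (k : ZMod q) := by
  have expand : ∀ n ∈ (Finset.Icc 1 N).filter (fun n => Nat.Coprime n m),
      χ (n : ZMod q) * ∑ d ∈ n.divisors, ((hker d : ℝ) : ℂ)
        = ∑ p ∈ n.divisorsAntidiagonal,
            ((hker p.1 : ℝ):ℂ) * χ (p.1 : ZMod q) * χ (p.2 : ZMod q) := by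
    intro n hn
    simp only [Finset.mem_filter, Finset.mem_Icc] at hn
    rw [Nat.sum_divisorsAntidiagonal (fun d k => ((hker d : ℝ):ℂ) * χ (d : ZMod q) * χ (k : ZMod q)),
      Finset.mul_sum]
    apply Finset.sum_congr rfl
    intro d hd
    obtain ⟨hdvd, hn0⟩ := Nat.mem_divisors.mp hd
    have hmul : (d * (n / d) : ℕ) = n := Nat.mul_div_cancel' hdvd
    have : χ (n : ZMod q) = χ (d : ZMod q) * χ ((n/d : ℕ) : ZMod q) := by
      rw [← map_mul, ← Nat.cast_mul, hmul]
    rw [this]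
    ring
  rw [Finset.sum_congr rfl expand]
  simp only [Finset.mul_sum]
  rw [Finset.sum_sigma', Finset.sum_sigma']
  refine Finset.sum_bij'
    (fun (a : (_ : ℕ) × ℕ × ℕ) (_ : a ∈ _) => (⟨a.2.1, a.2.2⟩ : (_ : ℕ) × ℕ))
    (fun (b : (_ : ℕ) × ℕ) (_ : b ∈ _) => (⟨b.1 * b.2, (b.1, b.2)⟩ : (_ : ℕ) × ℕ × ℕ))
    ?_ ?_ ?_ ?_ ?_
  · rintro ⟨n, d, k⟩ ha
    simp only [Finset.mem_sigma, Finset.mem_filter, Finset.mem_Icc,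
      Nat.mem_divisorsAntidiagonal] at ha ⊢
    obtain ⟨⟨⟨h1n, hnN⟩, hcop⟩, hdk, hn0⟩ := ha
    subst hdk
    have hd0 : d ≠ 0 := by rintro rfl; simp at hn0
    have hk0 : k ≠ 0 := by rintro rfl; simp at hn0
    refine ⟨⟨⟨by omega, ?_⟩, Nat.Coprime.coprime_dvd_left (dvd_mul_right d k) hcop⟩,
      ⟨by omega, ?_⟩, Nat.Coprime.coprime_dvd_left (dvd_mul_left k d) hcop⟩
    · calc d ≤ d * k := Nat.le_mul_of_pos_right d (by omega)
        _ ≤ N := hnN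
    · rw [Nat.le_div_iff_mul_le (by omega)]
      rw [mul_comm]
      exact hnN
  · rintro ⟨d, k⟩ hb
    simp only [Finset.mem_sigma, Finset.mem_filter, Finset.mem_Icc,
      Nat.mem_divisorsAntidiagonal] at hb ⊢
    obtain ⟨⟨⟨h1d, hdN⟩, hcopd⟩, ⟨h1k, hkN⟩, hcopk⟩ := hb
    have hdk : d * k ≤ N := by
      have h1 := (Nat.le_div_iff_mul_le (by omega : 0 < d)).mp hkN
      have h2 : d * k = k * d := Nat.mul_comm d k
      omega
    refine ⟨⟨⟨?_, hdk⟩, Nat.Coprime.mul hcopd hcopk⟩, ?_⟩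
    · exact Nat.one_le_iff_ne_zero.mpr (by positivity)
    · exact ⟨trivial, by positivity⟩
  · rintro ⟨n, d, k⟩ ha
    simp only [Finset.mem_sigma, Nat.mem_divisorsAntidiagonal] at ha
    obtain ⟨_, hdk, _⟩ := ha
    subst hdk
    rfl
  · rintro ⟨d, k⟩ _
    rfl
  · rintro ⟨n, d, k⟩ _
    rfl

end CSNP

open Finset ArithmeticFunction

theorem character_sum_nonprincipal :
    ∃ C : ℝ, 0 < C ∧
      ∀ (q : ℕ), 3 ≤ q → ∀ (χ : DirichletCharacter ℂ q), χ ≠ 1 →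
        ∀ (m : ℕ), 0 < m → Nat.Coprime m q →
        ∀ (x : ℝ), 2 ≤ x →
        ‖∑ n ∈ (Finset.Icc 1 ⌊x⌋₊).filter fun n => Nat.Coprime n m,
            ((ArithmeticFunction.moebius n : ℤ) : ℂ) ^ 2 * χ (n : ZMod q) * (fmul n : ℂ)‖ ≤
          C * (m.divisors.card : ℝ) * Real.sqrt q * Real.log q * Real.sqrt x * Real.log x := by
  classical
  refine ⟨100, by norm_num, ?_⟩
  intro q hq χ hχ m hm hmq x hx
  haveI : NeZero q := ⟨by omega⟩
  set N := ⌊x⌋₊ with hN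
  have hx0 : (0:ℝ) < x := by linarith
  have hN2 : 2 ≤ N := Nat.le_floor (by exact_mod_cast hx)
  have hNx : (N:ℝ) ≤ x := Nat.floor_le hx0.le
  have hterm : ∀ n ∈ (Finset.Icc 1 N).filter (fun n => Nat.Coprime n m),
      ((ArithmeticFunction.moebius n : ℤ) : ℂ)^2 * χ (n:ZMod q) * (fmul n : ℂ)
        = χ (n:ZMod q) * ∑ d ∈ n.divisors, ((CSNP.hker d:ℝ):ℂ) := by
    intro n hn
    simp only [Finset.mem_filter, Finset.mem_Icc] at hn
    have hn0 : n ≠ 0 := by omega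
    have hId : ((CSNP.M n : ℝ):ℂ) = ∑ d ∈ n.divisors, ((CSNP.hker d:ℝ):ℂ) := by
      rw [← CSNP.sum_divisors_hker n hn0]
      push_cast
      rfl
    rw [CSNP.M_apply, CSNP.F_apply hn0] at hId
    rw [← hId]
    push_cast
    ring
  rw [Finset.sum_congr rfl hterm, CSNP.rearrange χ m N]
  set τ : ℝ := (m.divisors.card : ℝ) with hτ
  have hτ1 : (1:ℝ) ≤ τ := by
    have h1 : 1 ∈ m.divisors := Nat.one_mem_divisors.mpr (by omega)
    have h2 : 0 < m.divisors.card := Finset.card_pos.mpr ⟨1, h1⟩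
    rw [hτ]
    exact_mod_cast h2
  have hqR : (3:ℝ) ≤ q := by exact_mod_cast hq
  -- bound on inner character sums
  have inner_bound : ∀ d ∈ (Finset.Icc 1 N).filter (fun d => Nat.Coprime d m),
      ‖∑ k ∈ (Finset.Icc 1 (N/d)).filter (fun k => Nat.Coprime k m), χ (k:ZMod q)‖
        ≤ (Real.sqrt x / Real.sqrt d) * Real.sqrt (τ * q) := by
    intro d hd
    simp only [Finset.mem_filter, Finset.mem_Icc] at hd
    have hd1 : (1:ℝ) ≤ (d:ℝ) := by exact_mod_cast hd.1.1
    have hd0 : (0:ℝ) < d := by linarith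
    set S := ∑ k ∈ (Finset.Icc 1 (N/d)).filter (fun k => Nat.Coprime k m), χ (k:ZMod q) with hS
    have hnn : 0 ≤ ‖S‖ := norm_nonneg S
    have b1 : ‖S‖ ≤ ((N/d : ℕ):ℝ) := by
      calc ‖S‖ ≤ ∑ k ∈ (Finset.Icc 1 (N/d)).filter (fun k => Nat.Coprime k m), ‖χ (k:ZMod q)‖ :=
            norm_sum_le _ _
        _ ≤ ∑ _k ∈ (Finset.Icc 1 (N/d)).filter (fun k => Nat.Coprime k m), (1:ℝ) :=
            Finset.sum_le_sum fun k _ => χ.norm_le_one _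
        _ = ((Finset.Icc 1 (N/d)).filter (fun k => Nat.Coprime k m)).card := by
            rw [Finset.sum_const, nsmul_eq_mul, mul_one]
        _ ≤ ((Finset.Icc 1 (N/d)).card : ℝ) := by
            exact_mod_cast Finset.card_filter_le _ _
        _ = ((N/d : ℕ):ℝ) := by rw [Nat.card_Icc]; norm_num
    have b2 : ‖S‖ ≤ τ * q := by
      have := CSNP.chi_coprime_le hq hχ (N/d) m hm
      rw [← hS] at this
      exact this
    have hxd : ((N/d:ℕ):ℝ) ≤ x / d := by
      calc ((N/d:ℕ):ℝ) ≤ (N:ℝ)/(d:ℝ) := Nat.cast_div_le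
        _ ≤ x / d := by exact div_le_div_of_nonneg_right hNx hd0.le
    have b1' : ‖S‖ ≤ x / d := b1.trans hxd
    have hxdpos : 0 ≤ x / d := le_trans hnn b1'
    have hsq : ‖S‖^2 ≤ (x/d) * (τ * q) := by
      rw [sq]
      exact mul_le_mul b1' b2 hnn hxdpos
    calc ‖S‖ = Real.sqrt (‖S‖^2) := (Real.sqrt_sq hnn).symm
      _ ≤ Real.sqrt ((x/d) * (τ * q)) := Real.sqrt_le_sqrt hsq
      _ = Real.sqrt (x/d) * Real.sqrt (τ * q) := Real.sqrt_mul (by positivity) _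
      _ = (Real.sqrt x / Real.sqrt d) * Real.sqrt (τ * q) := by
          rw [Real.sqrt_div hx0.le]
  have hlogq : 1 ≤ Real.log q := by
    rw [Real.le_log_iff_exp_le (by positivity)]
    calc Real.exp 1 ≤ 2.7182818286 := Real.exp_one_lt_d9.le
      _ ≤ 3 := by norm_num
      _ ≤ q := hqR
  have hlogx2 : Real.log 2 ≤ Real.log x := Real.log_le_log (by norm_num) hx
  have hlog2 : (0.6931471803:ℝ) < Real.log 2 := Real.log_two_gt_d9
  have hlogx0 : 0 < Real.log x := by linarith
  have hNpos : (0:ℝ) < N := by exact_mod_cast (by omega : 0 < N)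
  have hlogN : Real.log N ≤ Real.log x := Real.log_le_log hNpos hNx
  have hlogN0 : 0 ≤ Real.log N := by
    apply Real.log_nonneg
    exact_mod_cast (by omega : 1 ≤ N)
  have hsqτq : Real.sqrt (τ * q) ≤ τ * Real.sqrt q := by
    rw [Real.sqrt_mul (by linarith)]
    apply mul_le_mul_of_nonneg_right ?_ (Real.sqrt_nonneg _)
    calc Real.sqrt τ ≤ Real.sqrt (τ^2) := Real.sqrt_le_sqrt (by nlinarith)
      _ = τ := Real.sqrt_sq (by linarith)
  calc ‖∑ d ∈ (Finset.Icc 1 N).filter (fun d => Nat.Coprime d m),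
          ((CSNP.hker d : ℝ) : ℂ) * χ (d : ZMod q) *
            ∑ k ∈ (Finset.Icc 1 (N/d)).filter (fun k => Nat.Coprime k m), χ (k : ZMod q)‖
      ≤ ∑ d ∈ (Finset.Icc 1 N).filter (fun d => Nat.Coprime d m),
          ‖((CSNP.hker d : ℝ) : ℂ) * χ (d : ZMod q) *
            ∑ k ∈ (Finset.Icc 1 (N/d)).filter (fun k => Nat.Coprime k m), χ (k : ZMod q)‖ :=
        norm_sum_le _ _
    _ ≤ ∑ d ∈ (Finset.Icc 1 N).filter (fun d => Nat.Coprime d m),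
          |CSNP.hker d| * ((Real.sqrt x / Real.sqrt d) * Real.sqrt (τ * q)) := by
        apply Finset.sum_le_sum
        intro d hd
        rw [norm_mul, norm_mul]
        have h1 : ‖((CSNP.hker d:ℝ):ℂ)‖ = |CSNP.hker d| := by
          rw [Complex.norm_real, Real.norm_eq_abs]
        rw [h1]
        have hib := inner_bound d hd
        calc |CSNP.hker d| * ‖χ (d:ZMod q)‖ *
              ‖∑ k ∈ (Finset.Icc 1 (N/d)).filter (fun k => Nat.Coprime k m), χ (k:ZMod q)‖
            ≤ (|CSNP.hker d| * 1) * ((Real.sqrt x / Real.sqrt d) * Real.sqrt (τ * q)) := by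
              apply mul_le_mul (mul_le_mul_of_nonneg_left (χ.norm_le_one _) (abs_nonneg _))
                hib (norm_nonneg _) (by positivity)
          _ = |CSNP.hker d| * ((Real.sqrt x / Real.sqrt d) * Real.sqrt (τ * q)) := by ring
    _ ≤ ∑ d ∈ Finset.Icc 1 N,
          |CSNP.hker d| * ((Real.sqrt x / Real.sqrt d) * Real.sqrt (τ * q)) := by
        apply Finset.sum_le_sum_of_subset_of_nonneg (Finset.filter_subset _ _)
        intro d _ _
        positivity
    _ = (Real.sqrt x * Real.sqrt (τ * q)) * ∑ d ∈ Finset.Icc 1 N, |CSNP.hker d| / Real.sqrt d := by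
        rw [Finset.mul_sum]
        apply Finset.sum_congr rfl
        intro d _
        ring
    _ ≤ (Real.sqrt x * Real.sqrt (τ * q)) * (3 * (1 + Real.log N)) := by
        apply mul_le_mul_of_nonneg_left (CSNP.sum_abs_hker_le N) (by positivity)
    _ ≤ (Real.sqrt x * (τ * Real.sqrt q)) * (3 * (2.5 * Real.log x)) := by
        apply mul_le_mul (mul_le_mul_of_nonneg_left hsqτq (Real.sqrt_nonneg x)) ?_ (by positivity)
          (by positivity)
        have h1 : 1 + Real.log N ≤ 2.5 * Real.log x := by linarith
        linarith
    _ = 7.5 * τ * Real.sqrt q * Real.sqrt x * Real.log x := by ring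
    _ ≤ 100 * τ * Real.sqrt q * Real.log q * Real.sqrt x * Real.log x := by
        have hP : (0:ℝ) ≤ τ * Real.sqrt q * Real.sqrt x * Real.log x := by positivity
        nlinarith [mul_le_mul_of_nonneg_right hlogq hP]
end

section
/- There is an absolute constant C such that the following holds. Let q0, q1 be coprime positive integers with q1 ≥ 3, let q = q0·q1, let χ be a non-principal Dirichlet character modulo q1, let a be an integer with gcd(a, q0) = 1, and let m be a positive integer with gcd(m, q) = 1. Then for every real x ≥ 2, |∑_{n ≤ x, gcd(n, m) = 1, n ≡ a (mod q0)} μ(n)^2 · χ(n) · f(n)| ≤ C · τ(m) · q^{1/2} · x^{1/2} · (log x) · (log q). -/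
open Finset

section AuxCharSum
open ArithmeticFunction

lemma fmul_one : fmul 1 = 1 := by simp [fmul]

lemma fmul_nonneg (n : ℕ) : 0 ≤ fmul n := by
  apply Finset.prod_nonneg; intro p hp; positivity

lemma fmul_le_one (n : ℕ) : fmul n ≤ 1 := by
  apply Finset.prod_le_one
  · intro p hp; positivity
  · intro p hp
    have hp1 : 1 ≤ (p:ℝ) := by
      exact_mod_cast (Nat.mem_primeFactors.mp hp).1.one_lt.le
    rw [inv_le_one_iff₀]
    right
    have : 0 < (p:ℝ) := by linarith
    have : 0 ≤ 1/(p:ℝ) := by positivity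
    linarith

lemma fmul_mul {a b : ℕ} (h : Nat.Coprime a b) (ha : a ≠ 0) (hb : b ≠ 0) :
    fmul (a*b) = fmul a * fmul b := by
  unfold fmul
  rw [Nat.primeFactors_mul ha hb, Finset.prod_union (Nat.Coprime.disjoint_primeFactors h)]

lemma fmul_prime {p : ℕ} (hp : p.Prime) : fmul p = ((1:ℝ) + 1/p)⁻¹ := by
  unfold fmul
  rw [Nat.Prime.primeFactors hp, Finset.prod_singleton]



noncomputable def Ffun : ArithmeticFunction ℝ :=
  ⟨fun n => if n = 0 then 0 else ((moebius n : ℤ) : ℝ)^2 * fmul n, by simp⟩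

lemma Ffun_apply {n : ℕ} (hn : n ≠ 0) : Ffun n = ((moebius n : ℤ) : ℝ)^2 * fmul n := if_neg hn

lemma Ffun_mult : Ffun.IsMultiplicative := by
  constructor
  · rw [Ffun_apply one_ne_zero]
    simp [fmul_one]
  · intro a b hab
    rcases eq_or_ne a 0 with rfl | ha
    · have : b = 1 := Nat.coprime_zero_left b |>.mp hab
      subst this; simp [Ffun]
    rcases eq_or_ne b 0 with rfl | hb
    · have : a = 1 := Nat.coprime_zero_right a |>.mp hab
      subst this; simp [Ffun]
    rw [Ffun_apply (Nat.mul_ne_zero ha hb), Ffun_apply ha, Ffun_apply hb,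
      isMultiplicative_moebius.map_mul_of_coprime hab, fmul_mul hab ha hb]
    push_cast
    ring

noncomputable def hfun : ArithmeticFunction ℝ :=
  Ffun * ((moebius : ArithmeticFunction ℤ) : ArithmeticFunction ℝ)

lemma hfun_mult : hfun.IsMultiplicative :=
  Ffun_mult.mul isMultiplicative_moebius.intCast

lemma sum_divisors_hfun (n : ℕ) : ∑ e ∈ n.divisors, hfun e = Ffun n := by
  have : (↑(zeta : ArithmeticFunction ℕ) * hfun) = Ffun := by
    rw [hfun, mul_comm Ffun _, ← mul_assoc, coe_zeta_mul_coe_moebius, one_mul]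
  calc ∑ e ∈ n.divisors, hfun e = (↑(zeta : ArithmeticFunction ℕ) * hfun) n := by
        rw [coe_zeta_mul_apply]
    _ = Ffun n := by rw [this]



lemma Ffun_one : Ffun 1 = 1 := by rw [Ffun_apply one_ne_zero]; simp [fmul_one]

lemma Ffun_prime {p : ℕ} (hp : p.Prime) : Ffun p = fmul p := by
  rw [Ffun_apply hp.ne_zero, moebius_apply_prime hp]; push_cast; ring

lemma Ffun_prime_pow {p k : ℕ} (hp : p.Prime) (hk : 2 ≤ k) : Ffun (p^k) = 0 := by
  rw [Ffun_apply (pow_ne_zero _ hp.ne_zero), moebius_apply_prime_pow hp (by omega),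
    if_neg (by omega)]
  push_cast; ring

lemma hfun_prime_pow {p k : ℕ} (hp : p.Prime) :
    hfun (p^k) = ∑ i ∈ range (k+1), Ffun (p^i) * ((moebius (p^(k-i)) : ℤ) : ℝ) := by
  rw [hfun, mul_apply,
    Nat.sum_divisorsAntidiagonal (f := fun d e => Ffun d * (((moebius : ArithmeticFunction ℤ) :
      ArithmeticFunction ℝ) e)), Nat.sum_divisors_prime_pow hp]
  refine Finset.sum_congr rfl fun i hi => ?_
  rw [mem_range, Nat.lt_succ_iff] at hi
  rw [Nat.pow_div hi hp.pos, intCoe_apply]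

lemma hfun_prime {p : ℕ} (hp : p.Prime) : hfun p = fmul p - 1 := by
  have h := hfun_prime_pow (k := 1) hp
  rw [pow_one] at h
  rw [h]
  simp [Finset.sum_range_succ, Ffun_one, Ffun_prime hp, moebius_apply_prime hp]
  ring

lemma hfun_prime_sq {p : ℕ} (hp : p.Prime) : hfun (p^2) = -fmul p := by
  rw [hfun_prime_pow hp]
  simp [Finset.sum_range_succ, Ffun_one, Ffun_prime hp, Ffun_prime_pow hp le_rfl,
    moebius_apply_prime hp, moebius_apply_prime_pow hp]

lemma hfun_prime_pow_big {p k : ℕ} (hp : p.Prime) (hk : 3 ≤ k) : hfun (p^k) = 0 := by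
  rw [hfun_prime_pow hp]
  refine Finset.sum_eq_zero fun i hi => ?_
  rw [mem_range, Nat.lt_succ_iff] at hi
  rcases le_or_gt i 1 with h1 | h1
  · rw [moebius_apply_prime_pow hp (by omega), if_neg (by omega)]
    push_cast; ring
  · rw [Ffun_prime_pow hp h1, zero_mul]

lemma abs_hfun_prime {p : ℕ} (hp : p.Prime) : |hfun p| ≤ 1/p := by
  rw [hfun_prime hp, fmul_prime hp, abs_le]
  have hp1 : (1:ℝ) ≤ (p:ℝ) := by exact_mod_cast hp.one_le
  have hp0 : (0:ℝ) < p := by linarith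
  have h1 : (0:ℝ) < 1 + 1/p := by positivity
  have hc : (1 + 1/(p:ℝ)) * (1 + 1/(p:ℝ))⁻¹ = 1 := mul_inv_cancel₀ (ne_of_gt h1)
  have h2 : (0:ℝ) ≤ (1 + 1/(p:ℝ))⁻¹ := by positivity
  have h3 : (0:ℝ) < 1/p := by positivity
  have h4 : (1:ℝ)/p ≤ 1 := by rw [div_le_one hp0]; exact hp1
  constructor
  · nlinarith
  · nlinarith

lemma abs_hfun_prime_sq {p : ℕ} (hp : p.Prime) : |hfun (p^2)| ≤ 1 := by
  rw [hfun_prime_sq hp, abs_neg, abs_of_nonneg (fmul_nonneg p)]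
  exact fmul_le_one p



noncomputable section
def rfun (d : ℕ) : ℕ := ∏ p ∈ d.primeFactors.filter (fun p => d.factorization p = 1), p
def sfun (d : ℕ) : ℕ := ∏ p ∈ d.primeFactors.filter (fun p => d.factorization p = 2), p

lemma rfun_pos (d : ℕ) : 0 < rfun d := by
  apply Finset.prod_pos
  intro p hp
  exact (Nat.prime_of_mem_primeFactors (Finset.mem_filter.mp hp).1).pos

lemma sfun_pos (d : ℕ) : 0 < sfun d := by
  apply Finset.prod_pos
  intro p hp
  exact (Nat.prime_of_mem_primeFactors (Finset.mem_filter.mp hp).1).pos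

lemma hfun_struct {d : ℕ} (hd : d ≠ 0) (hne : hfun d ≠ 0) :
    rfun d * sfun d ^ 2 = d := by
  have hexp : ∀ p ∈ d.primeFactors, d.factorization p = 1 ∨ d.factorization p = 2 := by
    intro p hp
    by_contra hcon
    push_neg at hcon
    have hp' : p.Prime := Nat.prime_of_mem_primeFactors hp
    have h1 : 1 ≤ d.factorization p := by
      have := Nat.Prime.factorization_pos_of_dvd hp' hd (Nat.dvd_of_mem_primeFactors hp)
      omega
    have h3 : 3 ≤ d.factorization p := by omega
    apply hne
    rw [hfun_mult.multiplicative_factorization hfun hd]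
    rw [Finsupp.prod]
    apply Finset.prod_eq_zero (i := p) (by simpa using hp)
    exact hfun_prime_pow_big hp' h3
  -- d = ∏ p^(v p) over primeFactors
  have hd2 : ∏ p ∈ d.primeFactors, p ^ d.factorization p = d := by
    conv_rhs => rw [← Nat.factorization_prod_pow_eq_self hd]
    rfl
  have hsplit : d.primeFactors =
      (d.primeFactors.filter (fun p => d.factorization p = 1)) ∪
      (d.primeFactors.filter (fun p => d.factorization p = 2)) := by
    ext p
    simp only [Finset.mem_union, Finset.mem_filter]
    constructor
    · intro hp; rcases hexp p hp with h | h
      · exact Or.inl ⟨hp, h⟩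
      · exact Or.inr ⟨hp, h⟩
    · rintro (⟨hp, _⟩ | ⟨hp, _⟩) <;> exact hp
  have hdisj : Disjoint (d.primeFactors.filter (fun p => d.factorization p = 1))
      (d.primeFactors.filter (fun p => d.factorization p = 2)) := by
    rw [Finset.disjoint_left]
    intro p hp1 hp2
    have h1 := (Finset.mem_filter.mp hp1).2
    have h2 := (Finset.mem_filter.mp hp2).2
    omega
  calc rfun d * sfun d ^ 2 = ∏ p ∈ d.primeFactors, p ^ d.factorization p := ?_
    _ = d := hd2
  rw [hsplit, Finset.prod_union hdisj]
  rw [rfun, sfun]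
  rw [← Finset.prod_pow]
  congr 1
  · apply Finset.prod_congr rfl
    intro p hp
    rw [(Finset.mem_filter.mp hp).2, pow_one]
  · apply Finset.prod_congr rfl
    intro p hp
    rw [(Finset.mem_filter.mp hp).2]

lemma abs_hfun_le {d : ℕ} (hd : d ≠ 0) : |hfun d| ≤ 1 / rfun d := by
  rcases eq_or_ne (hfun d) 0 with h0 | h0
  · rw [h0, abs_zero]
    positivity
  rw [hfun_mult.multiplicative_factorization hfun hd, Finsupp.prod]
  have habs : |∏ p ∈ d.factorization.support, hfun (p ^ d.factorization p)| =
      ∏ p ∈ d.factorization.support, |hfun (p ^ d.factorization p)| :=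
    Finset.abs_prod _ _
  rw [habs]
  have hle : ∀ p ∈ d.factorization.support,
      |hfun (p ^ d.factorization p)| ≤
        (if d.factorization p = 1 then (1:ℝ)/p else 1) := by
    intro p hp
    have hp' : p.Prime := Nat.prime_of_mem_primeFactors (by simpa using hp)
    by_cases h1 : d.factorization p = 1
    · rw [if_pos h1, h1, pow_one]
      exact abs_hfun_prime hp'
    · rw [if_neg h1]
      by_cases h2 : d.factorization p = 2
      · rw [h2]; exact abs_hfun_prime_sq hp'
      · rcases Nat.lt_or_ge (d.factorization p) 3 with h3 | h3
        · have : d.factorization p ≠ 0 := Finsupp.mem_support_iff.mp hp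
          exfalso; omega
        · rw [hfun_prime_pow_big hp' h3, abs_zero]; norm_num
  calc ∏ p ∈ d.factorization.support, |hfun (p ^ d.factorization p)|
      ≤ ∏ p ∈ d.factorization.support,
          (if d.factorization p = 1 then (1:ℝ)/p else 1) := by
        apply Finset.prod_le_prod (fun p _ => abs_nonneg _) hle
    _ = 1 / rfun d := by
        rw [Finset.prod_ite, Finset.prod_const_one, mul_one,
          Finset.prod_div_distrib, Finset.prod_const_one]
        congr 1
        rw [rfun, Nat.cast_prod]
        rfl
end


lemma harmonic_le (N : ℕ) : ∑ s ∈ Icc 1 N, (1:ℝ)/s ≤ 1 + Real.log N := by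
  induction N with
  | zero => simp
  | succ N ih =>
    rcases Nat.eq_zero_or_pos N with rfl | hN
    · simp
    have hstep : (1:ℝ)/(N+1) ≤ Real.log (N+1) - Real.log N := by
      have hN' : (0:ℝ) < N := by exact_mod_cast hN
      have h1 : Real.log ((N:ℝ)/(N+1)) ≤ (N:ℝ)/(N+1) - 1 :=
        Real.log_le_sub_one_of_pos (by positivity)
      rw [Real.log_div (by positivity) (by positivity)] at h1
      have h2 : (N:ℝ)/(N+1) - 1 = -(1/(N+1)) := by field_simp; ring
      rw [h2] at h1
      linarith
    rw [Finset.sum_Icc_succ_top (by omega)]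
    push_cast
    have : Real.log N ≤ Real.log (N+1) - 1/(N+1) := by linarith
    calc (∑ s ∈ Icc 1 N, (1:ℝ)/s) + 1/(N+1) ≤ (1 + Real.log N) + 1/(N+1) := by linarith
      _ ≤ 1 + Real.log (N+1) := by linarith

lemma rsum_le (N : ℕ) : ∑ r ∈ Icc 1 N, 1/((r:ℝ) * Real.sqrt r) ≤ 3 := by
  have key : ∀ N : ℕ, 1 ≤ N → ∑ r ∈ Icc 1 N, 1/((r:ℝ) * Real.sqrt r) ≤ 3 - 2 / Real.sqrt N := by
    intro N hN
    induction N with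
    | zero => omega
    | succ N ih =>
      rcases Nat.eq_zero_or_pos N with rfl | hN'
      · norm_num
      have ihN := ih hN'
      rw [Finset.sum_Icc_succ_top (by omega)]
      have hN1 : (0:ℝ) < N := by exact_mod_cast hN'
      set u := Real.sqrt N with hu
      set v := Real.sqrt (N+1) with hv
      have hu0 : 0 < u := Real.sqrt_pos.mpr hN1
      have hv0 : 0 < v := Real.sqrt_pos.mpr (by positivity)
      have hu2 : u^2 = N := Real.sq_sqrt hN1.le
      have hv2 : v^2 = (N:ℝ)+1 := by
        rw [hv]
        rw [Real.sq_sqrt (by positivity)]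
      have huv : u ≤ v := Real.sqrt_le_sqrt (by linarith)
      have hid : (v - u)*(v + u) = 1 := by nlinarith
      have hstep : 1/(((N:ℝ)+1) * v) ≤ 2/u - 2/v := by
        rw [div_sub_div _ _ (ne_of_gt hu0) (ne_of_gt hv0)]
        rw [div_le_div_iff₀ (by positivity) (by positivity)]
        have h1 : u*v*(u+v) ≤ 2*((N:ℝ)+1)*v := by nlinarith
        have h2 : (0:ℝ) ≤ v - u := by linarith
        have h3 : (v-u)*(v+u)*(u*v) = u*v := by rw [hid]; ring
        nlinarith [mul_le_mul_of_nonneg_left h1 h2, h3]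
      have hc : ((N+1 : ℕ):ℝ) = (N:ℝ)+1 := by push_cast; ring
      rw [hc, ← hv]
      linarith
  rcases Nat.eq_zero_or_pos N with rfl | hN
  · norm_num
  have h := key N hN
  have : 0 < Real.sqrt N := Real.sqrt_pos.mpr (by exact_mod_cast hN)
  have : 0 < 2 / Real.sqrt N := by positivity
  linarith



lemma hsum_le (X : ℕ) (hX : 1 ≤ X) :
    ∑ e ∈ Icc 1 X, |hfun e| / Real.sqrt e ≤ 3 * (1 + Real.log X) := by
  classical
  set S := (Icc 1 X).filter (fun e => hfun e ≠ 0) with hS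
  have h1 : ∑ e ∈ Icc 1 X, |hfun e| / Real.sqrt e = ∑ e ∈ S, |hfun e| / Real.sqrt e := by
    rw [hS]
    rw [Finset.sum_filter_of_ne]
    intro e he hne
    intro h0
    apply hne
    rw [h0, abs_zero, zero_div]
  rw [h1]
  -- pointwise bound
  have key : ∀ e ∈ S, |hfun e| / Real.sqrt e ≤
      (1/((rfun e : ℝ) * Real.sqrt (rfun e))) * (1/(sfun e : ℝ)) := by
    intro e he
    rw [hS, Finset.mem_filter, Finset.mem_Icc] at he
    obtain ⟨⟨he1, heX⟩, hne⟩ := he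
    have he0 : e ≠ 0 := by omega
    have hstruct := hfun_struct he0 hne
    have hr0 : (0:ℝ) < rfun e := by exact_mod_cast rfun_pos e
    have hs0 : (0:ℝ) < sfun e := by exact_mod_cast sfun_pos e
    have hsqrt : Real.sqrt e = Real.sqrt (rfun e) * (sfun e : ℝ) := by
      have hc : (e:ℝ) = (rfun e : ℝ) * ((sfun e:ℝ))^2 := by exact_mod_cast hstruct.symm
      rw [hc, Real.sqrt_mul (by positivity), Real.sqrt_sq hs0.le]
    rw [hsqrt]
    have habs := abs_hfun_le he0
    have hsr : (0:ℝ) < Real.sqrt (rfun e) := Real.sqrt_pos.mpr hr0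
    rw [div_le_iff₀ (by positivity)]
    calc |hfun e| ≤ 1 / rfun e := habs
      _ = (1/((rfun e:ℝ) * Real.sqrt (rfun e))) * (1/(sfun e:ℝ)) *
          (Real.sqrt (rfun e) * (sfun e : ℝ)) := by
        have hss : Real.sqrt ((rfun e:ℕ):ℝ) * Real.sqrt ((rfun e:ℕ):ℝ) = ((rfun e:ℕ):ℝ) :=
          Real.mul_self_sqrt hr0.le
        have hsr : (0:ℝ) < Real.sqrt (rfun e) := Real.sqrt_pos.mpr hr0
        field_simp
  have h2 : ∑ e ∈ S, |hfun e| / Real.sqrt e ≤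
      ∑ e ∈ S, (1/((rfun e : ℝ) * Real.sqrt (rfun e))) * (1/(sfun e : ℝ)) :=
    Finset.sum_le_sum key
  -- inject into product set
  have hinj : ∀ x ∈ S, ∀ y ∈ S,
      (fun e => (rfun e, sfun e)) x = (fun e => (rfun e, sfun e)) y → x = y := by
    intro x hx y hy hxy
    rw [hS, Finset.mem_filter, Finset.mem_Icc] at hx hy
    have hx0 : x ≠ 0 := by omega
    have hy0 : y ≠ 0 := by omega
    have h1 := hfun_struct hx0 hx.2
    have h2 := hfun_struct hy0 hy.2
    simp only [Prod.mk.injEq] at hxy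
    rw [← h1, ← h2, hxy.1, hxy.2]
  have h3 : ∑ e ∈ S, (1/((rfun e : ℝ) * Real.sqrt (rfun e))) * (1/(sfun e : ℝ)) =
      ∑ P ∈ S.image (fun e => (rfun e, sfun e)),
        (1/((P.1 : ℝ) * Real.sqrt P.1)) * (1/(P.2 : ℝ)) := by
    rw [Finset.sum_image hinj]
  have hsub : S.image (fun e => (rfun e, sfun e)) ⊆ (Icc 1 X) ×ˢ (Icc 1 X) := by
    intro P hP
    rw [Finset.mem_image] at hP
    obtain ⟨e, he, rfl⟩ := hP
    rw [hS, Finset.mem_filter, Finset.mem_Icc] at he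
    obtain ⟨⟨he1, heX⟩, hne⟩ := he
    have he0 : e ≠ 0 := by omega
    have hstruct := hfun_struct he0 hne
    have hr := rfun_pos e
    have hs := sfun_pos e
    rw [Finset.mem_product, Finset.mem_Icc, Finset.mem_Icc]
    have hsq : 1 ≤ sfun e ^ 2 := Nat.one_le_iff_ne_zero.mpr (by positivity)
    have hre : rfun e ≤ e := by nlinarith
    have hse : sfun e ≤ e := by nlinarith [sq_nonneg (sfun e - 1)]
    exact ⟨⟨by omega, by omega⟩, ⟨by omega, by omega⟩⟩
  have h4 : ∑ P ∈ S.image (fun e => (rfun e, sfun e)),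
        (1/((P.1 : ℝ) * Real.sqrt P.1)) * (1/(P.2 : ℝ)) ≤
      ∑ P ∈ (Icc 1 X) ×ˢ (Icc 1 X), (1/((P.1 : ℝ) * Real.sqrt P.1)) * (1/(P.2 : ℝ)) := by
    apply Finset.sum_le_sum_of_subset_of_nonneg hsub
    intro P _ _
    positivity
  have h5 : ∑ P ∈ (Icc 1 X) ×ˢ (Icc 1 X), (1/((P.1 : ℝ) * Real.sqrt P.1)) * (1/(P.2 : ℝ)) =
      (∑ r ∈ Icc 1 X, 1/((r:ℝ) * Real.sqrt r)) * (∑ s ∈ Icc 1 X, (1:ℝ)/s) := by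
    rw [Finset.sum_product]
    rw [Finset.sum_mul]
    apply Finset.sum_congr rfl
    intro r _
    rw [Finset.mul_sum]
  have hnn1 : (0:ℝ) ≤ ∑ r ∈ Icc 1 X, 1/((r:ℝ) * Real.sqrt r) := by
    apply Finset.sum_nonneg; intro r _; positivity
  have hnn2 : (0:ℝ) ≤ ∑ s ∈ Icc 1 X, (1:ℝ)/s := by
    apply Finset.sum_nonneg; intro s _; positivity
  have hlog : (0:ℝ) ≤ 1 + Real.log X := by
    have : (0:ℝ) ≤ Real.log X := Real.log_nonneg (by exact_mod_cast hX)
    linarith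
  calc ∑ e ∈ S, |hfun e| / Real.sqrt e
      ≤ (∑ r ∈ Icc 1 X, 1/((r:ℝ) * Real.sqrt r)) * (∑ s ∈ Icc 1 X, (1:ℝ)/s) := by
        rw [← h5]; rw [h3] at h2; exact le_trans h2 h4
    _ ≤ 3 * (1 + Real.log X) := by
        apply mul_le_mul (rsum_le X) (harmonic_le X) hnn2 (by norm_num)


lemma block_sum {q1 : ℕ} (hq1 : 3 ≤ q1) (χ : DirichletCharacter ℂ q1) (hχ : χ ≠ 1)
    (M c : ℕ)
    (hM : Nat.Coprime M q1 ∨ ∃ p, p.Prime ∧ p ∣ q1 ∧ p ∣ M ∧ p ∣ c) (s : ℕ) :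
    ∑ j ∈ Ico s (s + q1), χ ((c + j * M : ℕ) : ZMod q1) = 0 := by
  haveI : NeZero q1 := ⟨by omega⟩
  rcases hM with hcop | ⟨p, hp, hpq, hpM, hpc⟩
  · have h1 : ∑ j ∈ Ico s (s + q1), χ ((c + j * M : ℕ) : ZMod q1) =
        ∑ u : ZMod q1, χ ((c : ZMod q1) + u * (M : ZMod q1)) := by
      refine Finset.sum_nbij' (i := fun j => (j : ZMod q1))
        (j := fun u => s + (u - (s : ZMod q1)).val) ?_ ?_ ?_ ?_ ?_
      · intro j hj; exact Finset.mem_univ _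
      · intro u _
        show s + (u - (s : ZMod q1)).val ∈ Ico s (s + q1)
        rw [Finset.mem_Ico]
        have := ZMod.val_lt (u - (s : ZMod q1))
        omega
      · intro j hj
        rw [Finset.mem_Ico] at hj
        show s + (((j : ZMod q1) - (s : ZMod q1)).val) = j
        have h2 : ((j : ZMod q1) - (s : ZMod q1)) = ((j - s : ℕ) : ZMod q1) := by
          rw [Nat.cast_sub hj.1]
        rw [h2, ZMod.val_natCast_of_lt (by omega)]
        omega
      · intro u _
        show ((s + (u - (s : ZMod q1)).val : ℕ) : ZMod q1) = u
        push_cast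
        rw [ZMod.natCast_val, ZMod.cast_id]
        ring
      · intro j hj
        show χ ((c + j * M : ℕ) : ZMod q1) = χ ((c : ZMod q1) + (j : ZMod q1) * (M : ZMod q1))
        congr 1
        push_cast
        ring
    rw [h1]
    have hunit : IsUnit ((M : ZMod q1)) := (ZMod.isUnit_iff_coprime M q1).mpr hcop
    have hbij : Function.Bijective (fun u : ZMod q1 => (c : ZMod q1) + u * (M : ZMod q1)) := by
      have hb1 : Function.Bijective (fun w : ZMod q1 => (c : ZMod q1) + w) :=
        (Equiv.addLeft ((c : ZMod q1))).bijective
      have hb2 : Function.Bijective (fun u : ZMod q1 => u * (M : ZMod q1)) :=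
        IsUnit.isUnit_iff_mulRight_bijective.mp hunit
      exact hb1.comp hb2
    have hsum := Fintype.sum_bijective _ hbij
      (fun u => χ ((c : ZMod q1) + u * (M : ZMod q1))) (fun v => χ v) (fun u => rfl)
    rw [hsum]
    exact MulChar.sum_eq_zero_of_ne_one hχ
  · apply Finset.sum_eq_zero
    intro j _
    apply MulChar.map_nonunit
    rw [ZMod.isUnit_iff_coprime]
    intro hcon
    have hpd : p ∣ c + j * M := Nat.dvd_add hpc (Dvd.dvd.mul_left hpM j)
    have hgcd : p ∣ Nat.gcd (c + j * M) q1 := Nat.dvd_gcd hpd hpq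
    rw [hcon] at hgcd
    have := hp.two_le
    have := Nat.le_of_dvd one_pos hgcd
    omega



lemma ap_bound {q1 : ℕ} (hq1 : 3 ≤ q1) (χ : DirichletCharacter ℂ q1) (hχ : χ ≠ 1)
    (M c : ℕ)
    (hM : Nat.Coprime M q1 ∨ ∃ p, p.Prime ∧ p ∣ q1 ∧ p ∣ M ∧ p ∣ c) (J : ℕ) :
    ‖∑ j ∈ range J, χ ((c + j * M : ℕ) : ZMod q1)‖ ≤ q1 := by
  induction J using Nat.strong_induction_on with
  | _ J ih =>
    rcases lt_or_ge J q1 with hJ | hJ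
    · calc ‖∑ j ∈ range J, χ ((c + j * M : ℕ) : ZMod q1)‖
          ≤ ∑ j ∈ range J, ‖χ ((c + j * M : ℕ) : ZMod q1)‖ := norm_sum_le _ _
        _ ≤ ∑ j ∈ range J, 1 := by
            apply Finset.sum_le_sum
            intro j _
            exact DirichletCharacter.norm_le_one χ _
        _ = J := by simp
        _ ≤ q1 := by exact_mod_cast hJ.le
    · have hsplit : ∑ j ∈ range J, χ ((c + j * M : ℕ) : ZMod q1) =
          (∑ j ∈ range (J - q1), χ ((c + j * M : ℕ) : ZMod q1)) +
          ∑ j ∈ Ico (J - q1) J, χ ((c + j * M : ℕ) : ZMod q1) := by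
        rw [Finset.range_eq_Ico, Finset.range_eq_Ico]
        exact (Finset.sum_Ico_consecutive (fun j => χ ((c + j * M : ℕ) : ZMod q1)) (Nat.zero_le _) (Nat.sub_le J q1)).symm
      have hblock : ∑ j ∈ Ico (J - q1) J, χ ((c + j * M : ℕ) : ZMod q1) = 0 := by
        have hJJ : J = (J - q1) + q1 := by omega
        rw [show Ico (J - q1) J = Ico (J - q1) ((J - q1) + q1) by rw [← hJJ]]
        exact block_sum hq1 χ hχ M c hM (J - q1)
      rw [hsplit, hblock, add_zero]
      exact ih (J - q1) (by omega)



lemma W_bound {q0 q1 : ℕ} (hq0 : 0 < q0) (hq1 : 3 ≤ q1) (hcop : Nat.Coprime q0 q1)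
    (χ : DirichletCharacter ℂ q1) (hχ : χ ≠ 1) (a : ℤ) {m t : ℕ} (hm0 : 0 < m) (ht : t ∣ m)
    (hm : Nat.Coprime m q1) {X e : ℕ} (he1 : 1 ≤ e) (heX : e ≤ X) {x : ℝ}
    (hXx : (X:ℝ) ≤ x) :
    ‖∑ n ∈ (Icc 1 X).filter (fun n => t ∣ n ∧ e ∣ n ∧ ((n:ℤ) : ZMod q0) = ((a : ZMod q0))),
      χ ((n : ℕ) : ZMod q1)‖ ≤ Real.sqrt (2 * q1 * x / e) := by
  have ht0 : 0 < t := Nat.pos_of_dvd_of_pos ht hm0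
  have he0 : 0 < e := he1
  have hex : (e:ℝ) ≤ x := le_trans (by exact_mod_cast heX) hXx
  have hxpos : (0:ℝ) < x := lt_of_lt_of_le (by exact_mod_cast he0) hex
  set A := (Icc 1 X).filter
    (fun n => t ∣ n ∧ e ∣ n ∧ ((n:ℤ) : ZMod q0) = ((a : ZMod q0))) with hA
  by_cases hAne : A.Nonempty
  swap
  · rw [Finset.not_nonempty_iff_eq_empty] at hAne
    rw [hAne, Finset.sum_empty, norm_zero]
    positivity
  set c := A.min' hAne with hc
  have hcA : c ∈ A := A.min'_mem hAne
  rw [hA, Finset.mem_filter, Finset.mem_Icc] at hcA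
  obtain ⟨⟨hc1, hcX⟩, htc, hec, hcq0⟩ := hcA
  set M := Nat.lcm (Nat.lcm e t) q0 with hMdef
  have heM : e ∣ M := dvd_trans (Nat.dvd_lcm_left e t) (Nat.dvd_lcm_left _ q0)
  have htM : t ∣ M := dvd_trans (Nat.dvd_lcm_right e t) (Nat.dvd_lcm_left _ q0)
  have hq0M : q0 ∣ M := Nat.dvd_lcm_right _ q0
  have hM0 : 0 < M := Nat.lcm_pos (Nat.lcm_pos he0 ht0) hq0
  have heMle : e ≤ M := Nat.le_of_dvd hM0 heM
  set J := (X - c)/M + 1 with hJ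
  -- congruence cast helper
  have hcastq0 : ∀ n : ℕ, ((n:ℤ) : ZMod q0) = ((n : ℕ) : ZMod q0) := by
    intro n; push_cast; rfl
  have mem_iff : ∀ n : ℕ, n ∈ A ↔ ∃ j, j < J ∧ n = c + j * M := by
    intro n
    constructor
    · intro hn
      have hcn : c ≤ n := A.min'_le n hn
      rw [hA, Finset.mem_filter, Finset.mem_Icc] at hn
      obtain ⟨⟨hn1, hnX⟩, htn, hen, hnq0⟩ := hn
      have hdvd_e : e ∣ n - c := Nat.dvd_sub hen hec
      have hdvd_t : t ∣ n - c := Nat.dvd_sub htn htc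
      have hmodeq : n ≡ c [MOD q0] := by
        rw [← ZMod.natCast_eq_natCast_iff]
        rw [← hcastq0 n, ← hcastq0 c, hnq0, hcq0]
      have hdvd_q0 : q0 ∣ n - c := (Nat.modEq_iff_dvd' hcn).mp hmodeq.symm
      have hdvd_M : M ∣ n - c := Nat.lcm_dvd (Nat.lcm_dvd hdvd_e hdvd_t) hdvd_q0
      refine ⟨(n - c)/M, ?_, ?_⟩
      · have h1 : (n - c)/M ≤ (X - c)/M :=
          Nat.div_le_div_right (Nat.sub_le_sub_right hnX c)
        omega
      · have h2 : (n - c)/M * M = n - c := Nat.div_mul_cancel hdvd_M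
        omega
    · rintro ⟨j, hjJ, rfl⟩
      have hjM : j * M ≤ X - c := by
        have h1 : j ≤ (X - c)/M := by omega
        calc j * M ≤ ((X - c)/M) * M := Nat.mul_le_mul_right M h1
          _ ≤ X - c := Nat.div_mul_le_self _ _
      rw [hA, Finset.mem_filter, Finset.mem_Icc]
      refine ⟨⟨by omega, by omega⟩, ?_, ?_, ?_⟩
      · exact Nat.dvd_add htc (htM.mul_left j)
      · exact Nat.dvd_add hec (heM.mul_left j)
      · rw [hcastq0]
        push_cast
        have hM0' : ((M:ℕ) : ZMod q0) = 0 := (ZMod.natCast_eq_zero_iff M q0).mpr hq0M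
        rw [hM0', mul_zero, add_zero, ← hcastq0 c, hcq0]
  have hAimage : A = (range J).image (fun j => c + j * M) := by
    ext n
    rw [mem_iff n, Finset.mem_image]
    constructor
    · rintro ⟨j, hj, rfl⟩; exact ⟨j, Finset.mem_range.mpr hj, rfl⟩
    · rintro ⟨j, hj, rfl⟩; exact ⟨j, Finset.mem_range.mp hj, rfl⟩
  have hsum : ∑ n ∈ A, χ ((n : ℕ) : ZMod q1) =
      ∑ j ∈ range J, χ ((c + j * M : ℕ) : ZMod q1) := by
    rw [hAimage, Finset.sum_image]
    intro j _ j' _ hjj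
    have : j * M = j' * M := by simp only at hjj; omega
    exact Nat.eq_of_mul_eq_mul_right hM0 this
  -- case hypothesis for ap_bound
  have hMcase : Nat.Coprime M q1 ∨ ∃ p, p.Prime ∧ p ∣ q1 ∧ p ∣ M ∧ p ∣ c := by
    by_cases hMc : Nat.Coprime M q1
    · exact Or.inl hMc
    · right
      obtain ⟨p, hp, hpg⟩ := Nat.exists_prime_and_dvd hMc
      have hpM : p ∣ M := hpg.trans (Nat.gcd_dvd_left _ _)
      have hpq1 : p ∣ q1 := hpg.trans (Nat.gcd_dvd_right _ _)
      have hpe : p ∣ e := by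
        have h1 : p ∣ Nat.lcm e t * q0 := hpM.trans (Nat.lcm_dvd_mul _ _)
        rcases (Nat.Prime.dvd_mul hp).mp h1 with h2 | h2
        · have h3 : p ∣ e * t := h2.trans (Nat.lcm_dvd_mul _ _)
          rcases (Nat.Prime.dvd_mul hp).mp h3 with h4 | h4
          · exact h4
          · exfalso
            have : p ∣ Nat.gcd m q1 := Nat.dvd_gcd (h4.trans ht) hpq1
            rw [hm] at this
            have := Nat.le_of_dvd one_pos this
            have := hp.two_le
            omega
        · exfalso
          have : p ∣ Nat.gcd q0 q1 := Nat.dvd_gcd h2 hpq1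
          rw [hcop] at this
          have := Nat.le_of_dvd one_pos this
          have := hp.two_le
          omega
      exact ⟨p, hp, hpq1, hpM, hpe.trans hec⟩
  have hb1 : ‖∑ n ∈ A, χ ((n : ℕ) : ZMod q1)‖ ≤ q1 := by
    rw [hsum]; exact ap_bound hq1 χ hχ M c hMcase J
  have hb2 : ‖∑ n ∈ A, χ ((n : ℕ) : ZMod q1)‖ ≤ J := by
    rw [hsum]
    calc ‖∑ j ∈ range J, χ ((c + j * M : ℕ) : ZMod q1)‖
        ≤ ∑ j ∈ range J, ‖χ ((c + j * M : ℕ) : ZMod q1)‖ := norm_sum_le _ _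
      _ ≤ ∑ j ∈ range J, 1 := Finset.sum_le_sum
          (fun j _ => DirichletCharacter.norm_le_one χ _)
      _ = J := by simp
  -- numeric bound: J ≤ 2x/e
  have hJle : (J:ℝ) ≤ 2 * x / e := by
    have h1 : (X - c)/M ≤ X/e := le_trans (Nat.div_le_div_right (Nat.sub_le X c))
      (Nat.div_le_div_left heMle he0)
    have h2 : (J:ℝ) ≤ ((X/e : ℕ) : ℝ) + 1 := by
      rw [hJ]; push_cast
      have : ((X - c)/M : ℕ) ≤ (X/e : ℕ) := h1
      exact_mod_cast add_le_add_left (Nat.cast_le.mpr this) 1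
    have h3 : ((X/e : ℕ) : ℝ) ≤ (X:ℝ)/e := Nat.cast_div_le
    have h4 : (X:ℝ)/e ≤ x/e := by
      gcongr
    have h5 : (1:ℝ) ≤ x/e := by
      rw [le_div_iff₀ (by exact_mod_cast he0)]
      linarith
    calc (J:ℝ) ≤ (X:ℝ)/e + 1 := by linarith
      _ ≤ x/e + x/e := by linarith
      _ = 2 * x / e := by ring
  have hnn := norm_nonneg (∑ n ∈ A, χ ((n : ℕ) : ZMod q1))
  have hsq : ‖∑ n ∈ A, χ ((n : ℕ) : ZMod q1)‖^2 ≤ 2 * q1 * x / e := by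
    have hq1nn : (0:ℝ) ≤ q1 := by positivity
    calc ‖∑ n ∈ A, χ ((n : ℕ) : ZMod q1)‖^2 ≤ (q1:ℝ) * J := by
          rw [sq]; exact mul_le_mul hb1 hb2 hnn hq1nn
      _ ≤ (q1:ℝ) * (2 * x / e) := by
          apply mul_le_mul_of_nonneg_left hJle hq1nn
      _ = 2 * q1 * x / e := by ring
  calc ‖∑ n ∈ A, χ ((n : ℕ) : ZMod q1)‖
      = Real.sqrt (‖∑ n ∈ A, χ ((n : ℕ) : ZMod q1)‖^2) := (Real.sqrt_sq hnn).symm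
    _ ≤ Real.sqrt (2 * q1 * x / e) := Real.sqrt_le_sqrt hsq

end AuxCharSum

section Main
open ArithmeticFunction


theorem character_sum_in_residue_class_nonprincipal :
    ∃ C : ℝ, 0 < C ∧
      ∀ (q0 q1 : ℕ), 0 < q0 → 3 ≤ q1 → Nat.Coprime q0 q1 →
        ∀ (χ : DirichletCharacter ℂ q1), χ ≠ 1 →
        ∀ (a : ℤ), Int.gcd a (q0 : ℤ) = 1 →
        ∀ (m : ℕ), 0 < m → Nat.Coprime m (q0 * q1) →
        ∀ (x : ℝ), 2 ≤ x →
        ‖∑ n ∈ (Finset.Icc 1 ⌊x⌋₊).filter fun n =>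
              Nat.Coprime n m ∧ ((n : ℤ) : ZMod q0) = ((a : ZMod q0)),
            ((ArithmeticFunction.moebius n : ℤ) : ℂ) ^ 2 * χ (n : ZMod q1) * (fmul n : ℂ)‖ ≤
          C * (m.divisors.card : ℝ) * Real.sqrt ((q0 * q1 : ℕ) : ℝ) * Real.sqrt x *
            Real.log x * Real.log ((q0 * q1 : ℕ) : ℝ) := by
  classical
  refine ⟨100, by norm_num, ?_⟩
  intro q0 q1 hq0 hq1 hcop01 χ hχ a ha m hm0 hmcop x hx
  set X := ⌊x⌋₊ with hXdef
  have hx0 : (0:ℝ) < x := by linarith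
  have hX2 : 2 ≤ X := Nat.le_floor (by exact_mod_cast hx)
  have hX1 : 1 ≤ X := by omega
  have hXx : (X:ℝ) ≤ x := Nat.floor_le hx0.le
  have hm1 : Nat.Coprime m q1 := Nat.Coprime.coprime_dvd_right (dvd_mul_left q1 q0) hmcop
  -- Step A : rewrite summand
  have stepA : ∑ n ∈ (Icc 1 X).filter (fun n =>
        Nat.Coprime n m ∧ ((n:ℤ) : ZMod q0) = ((a : ZMod q0))),
      ((moebius n : ℤ) : ℂ) ^ 2 * χ ((n : ℕ) : ZMod q1) * ((fmul n : ℝ) : ℂ) =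
      ∑ n ∈ (Icc 1 X).filter (fun n =>
        Nat.Coprime n m ∧ ((n:ℤ) : ZMod q0) = ((a : ZMod q0))),
      χ ((n : ℕ) : ZMod q1) * ((Ffun n : ℝ) : ℂ) := by
    apply Finset.sum_congr rfl
    intro n hn
    rw [Finset.mem_filter, Finset.mem_Icc] at hn
    have hn0 : n ≠ 0 := by omega
    have hcast : ((Ffun n : ℝ) : ℂ) = ((moebius n : ℤ) : ℂ)^2 * ((fmul n : ℝ) : ℂ) := by
      rw [Ffun_apply hn0]
      push_cast
      ring
    rw [hcast]
    ring
  rw [stepA]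
  -- Moebius expansion of the coprimality indicator
  have hind : ∀ n, 1 ≤ n → (if Nat.Coprime n m then (1:ℂ) else 0) =
      ∑ t ∈ m.divisors, (if t ∣ n then ((moebius t : ℤ) : ℂ) else 0) := by
    intro n hn1
    have hg0 : Nat.gcd n m ≠ 0 := Nat.gcd_ne_zero_right hm0.ne'
    have hdiv : (Nat.gcd n m).divisors = m.divisors.filter (· ∣ n) := by
      ext d
      simp only [Nat.mem_divisors, Finset.mem_filter, Nat.dvd_gcd_iff]
      constructor
      · rintro ⟨⟨hdn, hdm⟩, _⟩; exact ⟨⟨hdm, hm0.ne'⟩, hdn⟩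
      · rintro ⟨⟨hdm, _⟩, hdn⟩; exact ⟨⟨hdn, hdm⟩, hg0⟩
    have key : ∑ d ∈ (Nat.gcd n m).divisors, ((moebius d : ℤ) : ℂ) =
        if Nat.Coprime n m then (1:ℂ) else 0 := by
      have h1 : ∑ d ∈ (Nat.gcd n m).divisors,
          ((moebius : ArithmeticFunction ℤ) : ArithmeticFunction ℂ) d =
          (1 : ArithmeticFunction ℂ) (Nat.gcd n m) := by
        rw [← coe_mul_zeta_apply, coe_moebius_mul_coe_zeta]
      simp only [intCoe_apply] at h1
      rw [h1, one_apply]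
    rw [← key, hdiv, ← Finset.sum_filter]
  -- Step B : open up the coprimality condition
  have stepB : ∑ n ∈ (Icc 1 X).filter (fun n =>
        Nat.Coprime n m ∧ ((n:ℤ) : ZMod q0) = ((a : ZMod q0))),
      χ ((n : ℕ) : ZMod q1) * ((Ffun n : ℝ) : ℂ) =
      ∑ t ∈ m.divisors, ((moebius t : ℤ) : ℂ) *
        ∑ n ∈ (Icc 1 X).filter (fun n =>
          t ∣ n ∧ ((n:ℤ) : ZMod q0) = ((a : ZMod q0))),
        χ ((n : ℕ) : ZMod q1) * ((Ffun n : ℝ) : ℂ) := by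
    have h1 : (Icc 1 X).filter (fun n =>
        Nat.Coprime n m ∧ ((n:ℤ) : ZMod q0) = ((a : ZMod q0)))
        = ((Icc 1 X).filter (fun n : ℕ => ((n:ℤ) : ZMod q0) = ((a : ZMod q0)))).filter
            (fun n => Nat.Coprime n m) := by
      rw [Finset.filter_filter]
      apply Finset.filter_congr
      intro n _
      tauto
    rw [h1, Finset.sum_filter]
    have h2 : ∀ n ∈ (Icc 1 X).filter (fun n : ℕ => ((n:ℤ) : ZMod q0) = ((a : ZMod q0))),
        (if Nat.Coprime n m then χ ((n : ℕ) : ZMod q1) * ((Ffun n : ℝ) : ℂ) else 0)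
        = ∑ t ∈ m.divisors, (if t ∣ n then
            ((moebius t:ℤ):ℂ) * (χ ((n : ℕ) : ZMod q1) * ((Ffun n : ℝ) : ℂ)) else 0) := by
      intro n hn
      rw [Finset.mem_filter, Finset.mem_Icc] at hn
      calc (if Nat.Coprime n m then χ ((n : ℕ) : ZMod q1) * ((Ffun n : ℝ) : ℂ) else 0)
          = (if Nat.Coprime n m then (1:ℂ) else 0) *
              (χ ((n : ℕ) : ZMod q1) * ((Ffun n : ℝ) : ℂ)) := by
            by_cases hc : Nat.Coprime n m <;> simp [hc]
        _ = (∑ t ∈ m.divisors, (if t ∣ n then ((moebius t:ℤ):ℂ) else 0)) *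
              (χ ((n : ℕ) : ZMod q1) * ((Ffun n : ℝ) : ℂ)) := by
            rw [hind n hn.1.1]
        _ = _ := by
            rw [Finset.sum_mul]
            apply Finset.sum_congr rfl
            intro t _
            rw [ite_mul, zero_mul]
    rw [Finset.sum_congr rfl h2, Finset.sum_comm]
    apply Finset.sum_congr rfl
    intro t _
    rw [← Finset.sum_filter]
    have h3 : ((Icc 1 X).filter (fun n : ℕ => ((n:ℤ) : ZMod q0) = ((a : ZMod q0)))).filter
        (fun n => t ∣ n)
        = (Icc 1 X).filter (fun n => t ∣ n ∧ ((n:ℤ) : ZMod q0) = ((a : ZMod q0))) := by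
      rw [Finset.filter_filter]
      apply Finset.filter_congr
      intro n _
      tauto
    rw [h3, Finset.mul_sum]
  rw [stepB]
  -- Step C : expand Ffun as a divisor sum
  have stepC : ∀ t, t ∣ m → ∑ n ∈ (Icc 1 X).filter (fun n =>
        t ∣ n ∧ ((n:ℤ) : ZMod q0) = ((a : ZMod q0))),
      χ ((n : ℕ) : ZMod q1) * ((Ffun n : ℝ) : ℂ)
      = ∑ e ∈ Icc 1 X, ((hfun e : ℝ) : ℂ) *
          ∑ n ∈ (Icc 1 X).filter (fun n =>
            t ∣ n ∧ e ∣ n ∧ ((n:ℤ) : ZMod q0) = ((a : ZMod q0))),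
          χ ((n:ℕ) : ZMod q1) := by
    intro t htm
    have hFd : ∀ n ∈ (Icc 1 X).filter (fun n =>
        t ∣ n ∧ ((n:ℤ) : ZMod q0) = ((a : ZMod q0))),
        χ ((n : ℕ) : ZMod q1) * ((Ffun n : ℝ) : ℂ) =
          ∑ e ∈ Icc 1 X, (if e ∣ n then χ ((n:ℕ):ZMod q1) * ((hfun e:ℝ):ℂ) else 0) := by
      intro n hn
      rw [Finset.mem_filter, Finset.mem_Icc] at hn
      have hn0 : n ≠ 0 := by omega
      have hdiv : n.divisors = (Icc 1 X).filter (· ∣ n) := by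
        ext d
        simp only [Nat.mem_divisors, Finset.mem_filter, Finset.mem_Icc]
        constructor
        · rintro ⟨hdn, _⟩
          have hd1 : 1 ≤ d := Nat.pos_of_dvd_of_pos hdn (by omega)
          have hdX : d ≤ X := le_trans (Nat.le_of_dvd (by omega) hdn) hn.1.2
          exact ⟨⟨hd1, hdX⟩, hdn⟩
        · rintro ⟨_, hdn⟩; exact ⟨hdn, hn0⟩
      have hF : ((Ffun n : ℝ) : ℂ) = ∑ e ∈ Icc 1 X, (if e ∣ n then ((hfun e:ℝ):ℂ) else 0) := by
        rw [← sum_divisors_hfun n, hdiv, Finset.sum_filter, Complex.ofReal_sum]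
        apply Finset.sum_congr rfl
        intro e _
        split_ifs <;> simp
      rw [hF, Finset.mul_sum]
      apply Finset.sum_congr rfl
      intro e _
      rw [mul_ite, mul_zero]
    rw [Finset.sum_congr rfl hFd, Finset.sum_comm]
    apply Finset.sum_congr rfl
    intro e _
    rw [← Finset.sum_filter]
    have h3 : ((Icc 1 X).filter (fun n =>
        t ∣ n ∧ ((n:ℤ) : ZMod q0) = ((a : ZMod q0)))).filter (fun n => e ∣ n)
        = (Icc 1 X).filter (fun n =>
            t ∣ n ∧ e ∣ n ∧ ((n:ℤ) : ZMod q0) = ((a : ZMod q0))) := by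
      rw [Finset.filter_filter]
      apply Finset.filter_congr
      intro n _
      tauto
    rw [h3, Finset.mul_sum]
    apply Finset.sum_congr rfl
    intro n _
    ring
  -- Step D : bound each T_t
  have hTbound : ∀ t, t ∣ m →
      ‖∑ e ∈ Icc 1 X, ((hfun e : ℝ) : ℂ) *
          ∑ n ∈ (Icc 1 X).filter (fun n =>
            t ∣ n ∧ e ∣ n ∧ ((n:ℤ) : ZMod q0) = ((a : ZMod q0))),
          χ ((n:ℕ) : ZMod q1)‖ ≤
        Real.sqrt (2 * q1 * x) * (3 * (1 + Real.log X)) := by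
    intro t ht
    calc ‖∑ e ∈ Icc 1 X, ((hfun e : ℝ) : ℂ) *
          ∑ n ∈ (Icc 1 X).filter (fun n =>
            t ∣ n ∧ e ∣ n ∧ ((n:ℤ) : ZMod q0) = ((a : ZMod q0))),
          χ ((n:ℕ) : ZMod q1)‖
        ≤ ∑ e ∈ Icc 1 X, ‖((hfun e : ℝ) : ℂ) *
            ∑ n ∈ (Icc 1 X).filter (fun n =>
              t ∣ n ∧ e ∣ n ∧ ((n:ℤ) : ZMod q0) = ((a : ZMod q0))),
            χ ((n:ℕ) : ZMod q1)‖ := norm_sum_le _ _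
      _ ≤ ∑ e ∈ Icc 1 X, |hfun e| * Real.sqrt (2*(q1:ℝ)*x/(e:ℝ)) := by
          apply Finset.sum_le_sum
          intro e he
          rw [Finset.mem_Icc] at he
          rw [norm_mul, Complex.norm_real]
          exact mul_le_mul_of_nonneg_left
            (W_bound hq0 hq1 hcop01 χ hχ a hm0 ht hm1 he.1 he.2 hXx) (abs_nonneg _)
      _ = ∑ e ∈ Icc 1 X, Real.sqrt (2*(q1:ℝ)*x) * (|hfun e| / Real.sqrt e) := by
          apply Finset.sum_congr rfl
          intro e _
          rw [Real.sqrt_div (by positivity) ((e:ℕ):ℝ)]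
          ring
      _ = Real.sqrt (2*(q1:ℝ)*x) * ∑ e ∈ Icc 1 X, |hfun e| / Real.sqrt e := by
          rw [Finset.mul_sum]
      _ ≤ Real.sqrt (2*(q1:ℝ)*x) * (3 * (1 + Real.log X)) :=
          mul_le_mul_of_nonneg_left (hsum_le X hX1) (Real.sqrt_nonneg _)
  -- moebius norm
  have hμ : ∀ t:ℕ, ‖((moebius t : ℤ):ℂ)‖ ≤ 1 := by
    intro t
    rcases eq_or_ne (moebius t) 0 with h | h
    · simp [h]
    · rcases moebius_ne_zero_iff_eq_or.mp h with h1 | h1 <;> simp [h1]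
  -- Step E : put everything together
  have stepE : ‖∑ t ∈ m.divisors, ((moebius t : ℤ) : ℂ) *
        ∑ n ∈ (Icc 1 X).filter (fun n =>
          t ∣ n ∧ ((n:ℤ) : ZMod q0) = ((a : ZMod q0))),
        χ ((n : ℕ) : ZMod q1) * ((Ffun n : ℝ) : ℂ)‖ ≤
      (m.divisors.card : ℝ) * (Real.sqrt (2*(q1:ℝ)*x) * (3 * (1 + Real.log X))) := by
    calc ‖∑ t ∈ m.divisors, ((moebius t : ℤ) : ℂ) *
        ∑ n ∈ (Icc 1 X).filter (fun n =>
          t ∣ n ∧ ((n:ℤ) : ZMod q0) = ((a : ZMod q0))),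
        χ ((n : ℕ) : ZMod q1) * ((Ffun n : ℝ) : ℂ)‖
        ≤ ∑ t ∈ m.divisors, ‖((moebius t : ℤ) : ℂ) *
            ∑ n ∈ (Icc 1 X).filter (fun n =>
              t ∣ n ∧ ((n:ℤ) : ZMod q0) = ((a : ZMod q0))),
            χ ((n : ℕ) : ZMod q1) * ((Ffun n : ℝ) : ℂ)‖ := norm_sum_le _ _
      _ ≤ ∑ t ∈ m.divisors, Real.sqrt (2*(q1:ℝ)*x) * (3 * (1 + Real.log X)) := by
          apply Finset.sum_le_sum
          intro t htm
          have ht : t ∣ m := (Nat.mem_divisors.mp htm).1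
          rw [norm_mul]
          have h2 := hTbound t ht
          rw [← stepC t ht] at h2
          have h3 := mul_le_mul (hμ t) h2 (norm_nonneg _) (by norm_num : (0:ℝ) ≤ 1)
          rw [one_mul] at h3
          exact h3
      _ = (m.divisors.card : ℝ) * (Real.sqrt (2*(q1:ℝ)*x) * (3 * (1 + Real.log X))) := by
          rw [Finset.sum_const, nsmul_eq_mul]
  refine le_trans stepE ?_
  -- numeric endgame
  have hcard : (0:ℝ) ≤ (m.divisors.card : ℝ) := by positivity
  have hq1r : (0:ℝ) < (q1:ℝ) := by exact_mod_cast (by omega : 0 < q1)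
  have hqq : (0:ℝ) < ((q0*q1 : ℕ):ℝ) := by
    have : 0 < q0*q1 := Nat.mul_pos hq0 (by omega)
    exact_mod_cast this
  have hsqrt2 : Real.sqrt 2 ≤ 2 := by
    nlinarith [Real.sq_sqrt (by norm_num : (0:ℝ) ≤ 2), Real.sqrt_nonneg 2]
  have hsqq1 : Real.sqrt (q1:ℝ) ≤ Real.sqrt ((q0*q1 : ℕ):ℝ) := by
    apply Real.sqrt_le_sqrt
    have : q1 ≤ q0*q1 := Nat.le_mul_of_pos_left q1 hq0
    exact_mod_cast this
  have hsq2 : Real.sqrt (2*(q1:ℝ)*x) ≤ 2 * Real.sqrt ((q0*q1:ℕ):ℝ) * Real.sqrt x := by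
    rw [Real.sqrt_mul (by positivity), Real.sqrt_mul (by norm_num)]
    apply mul_le_mul_of_nonneg_right _ (Real.sqrt_nonneg x)
    exact mul_le_mul hsqrt2 hsqq1 (Real.sqrt_nonneg _) (by norm_num)
  have hlog2 : (0.6931:ℝ) < Real.log 2 := by
    have := Real.log_two_gt_d9
    linarith
  have hlx : Real.log 2 ≤ Real.log x := Real.log_le_log (by norm_num) hx
  have hlX : Real.log X ≤ Real.log x := by
    apply Real.log_le_log _ hXx
    have : (0:ℕ) < X := by omega
    exact_mod_cast this
  have hlog1 : 3 * (1 + Real.log X) ≤ 9 * Real.log x := by linarith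
  have hlog1nn : 0 ≤ 3 * (1 + Real.log X) := by
    have h0 : (0:ℝ) ≤ Real.log X := by
      apply Real.log_nonneg
      exact_mod_cast hX1
    linarith
  have hlogq : 1 ≤ Real.log ((q0*q1:ℕ):ℝ) := by
    rw [Real.le_log_iff_exp_le hqq]
    have h1 := Real.exp_one_lt_d9
    have h2 : (3:ℝ) ≤ ((q0*q1:ℕ):ℝ) := by
      have : 3 ≤ q0*q1 := le_trans hq1 (Nat.le_mul_of_pos_left q1 hq0)
      exact_mod_cast this
    linarith
  have hlogx0 : 0 < Real.log x := Real.log_pos (by linarith)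
  have hmain : (m.divisors.card : ℝ) * (Real.sqrt (2*(q1:ℝ)*x) * (3 * (1 + Real.log X))) ≤
      (m.divisors.card : ℝ) * ((2 * Real.sqrt ((q0*q1:ℕ):ℝ) * Real.sqrt x) * (9 * Real.log x)) := by
    apply mul_le_mul_of_nonneg_left _ hcard
    exact mul_le_mul hsq2 hlog1 hlog1nn (by positivity)
  refine le_trans hmain ?_
  set B := (m.divisors.card : ℝ) * Real.sqrt ((q0*q1:ℕ):ℝ) * Real.sqrt x * Real.log x with hB
  have hBnn : 0 ≤ B := by positivity
  have h1 : (m.divisors.card : ℝ) * ((2 * Real.sqrt ((q0*q1:ℕ):ℝ) * Real.sqrt x) *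
      (9 * Real.log x)) = 18 * B := by rw [hB]; ring
  have h2 : 100 * (m.divisors.card : ℝ) * Real.sqrt ((q0*q1:ℕ):ℝ) * Real.sqrt x *
      Real.log x * Real.log ((q0*q1:ℕ):ℝ) = 100 * B * Real.log ((q0*q1:ℕ):ℝ) := by
    rw [hB]; ring
  rw [h1, h2]
  nlinarith [mul_le_mul_of_nonneg_left hlogq hBnn]

end Main
end

section
/- Let m1, m2, m3 be nonzero integers with m1 > 0 and |m1·m2·m3| squarefree. Then (m1, m2, m3) is ℚ-soluble if and only if all of the following hold: (i) for every odd prime p dividing m1, the Legendre symbol (−m2·m3 / p) equals 1; (ii) for every odd prime p dividing m2, the Legendre symbol (m1·m3 / p) equals 1; (iii) for every odd prime p dividing m3, the Legendre symbol (m1·m2 / p) equals 1; (iv) m2 and m3 are not both negative; (v) (m1, m2, m3) is ℚ₂-soluble, where ℚ₂ is the field of 2-adic numbers. -/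
lemma not_dvd_two_of_squarefree {a b c : ℤ} (hsf : Squarefree (a * b * c)) {p : ℕ}
    (hp : p.Prime) (hpa : (p:ℤ) ∣ a * b) (hpb : (p:ℤ) ∣ c) : False := by
  have hpp : Prime (p : ℤ) := Nat.prime_iff_prime_int.mp hp
  have : (p:ℤ) * (p:ℤ) ∣ a * b * c := mul_dvd_mul hpa hpb
  exact hpp.not_unit (hsf _ this)

lemma sum_two_squares_int {n : ℤ} (hn : 0 < n)
    (h : ∀ p : ℕ, p.Prime → p ≠ 2 → (p:ℤ) ∣ n → IsSquare (-1 : ZMod p)) :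
    ∃ u v : ℤ, n = u ^ 2 + v ^ 2 := by
  have key : ∀ {q : ℕ}, q.Prime → q % 4 = 3 → Even (padicValNat q n.toNat) := by
    intro q hq hq3
    have hq2 : q ≠ 2 := by rintro rfl; omega
    have h1 : ¬ (q:ℤ) ∣ n := fun hd =>
      (@ZMod.exists_sq_eq_neg_one_iff q ⟨hq⟩).mp (h q hq hq2 hd) hq3
    have h2 : ¬ q ∣ n.toNat := by
      intro hd
      apply h1
      have := Int.natCast_dvd_natCast.mpr hd
      rwa [Int.toNat_of_nonneg hn.le] at this
    simp [padicValNat.eq_zero_of_not_dvd h2]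
  obtain ⟨x, y, hxy⟩ := Nat.eq_sq_add_sq_iff.mpr (fun q hq => key (Nat.prime_of_mem_primeFactors hq))
  refine ⟨x, y, ?_⟩
  have hh : (n.toNat : ℤ) = n := Int.toNat_of_nonneg hn.le
  rw [← hh]
  exact_mod_cast congrArg (Nat.cast : ℕ → ℤ) hxy

lemma squarefree_aux {m x y : ℤ} (hsf : Squarefree m) {p : ℕ} (hp : p.Prime)
    (hx : (p:ℤ) ∣ x) (hy : (p:ℤ) ∣ y) (hd : x * y ∣ m) : False := by
  have hpp : Prime (p : ℤ) := Nat.prime_iff_prime_int.mp hp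
  have : (p:ℤ) * (p:ℤ) ∣ m := dvd_trans (mul_dvd_mul hx hy) hd
  exact hpp.not_unit (hsf _ this)

lemma exists_coeffs {a b c : ℤ} (hsf : Squarefree (a * b * c))
    (h1 : ∀ p : ℕ, p.Prime → p ≠ 2 → (p:ℤ) ∣ a → IsSquare ((-(b*c) : ℤ) : ZMod p))
    (h2 : ∀ p : ℕ, p.Prime → p ≠ 2 → (p:ℤ) ∣ b → IsSquare ((-(a*c) : ℤ) : ZMod p))
    (h3 : ∀ p : ℕ, p.Prime → p ≠ 2 → (p:ℤ) ∣ c → IsSquare ((-(a*b) : ℤ) : ZMod p))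
    {p : ℕ} (hp : p.Prime) (hpd : (p:ℤ) ∣ a * b * c) :
    ∃ α β γ : ZMod p, ∀ x y z : ℤ,
      α * (x : ZMod p) + β * (y : ZMod p) + γ * (z : ZMod p) = 0 →
      ((a * x^2 + b * y^2 + c * z^2 : ℤ) : ZMod p) = 0 := by
  haveI : Fact p.Prime := ⟨hp⟩
  by_cases hp2 : p = 2
  · subst hp2
    refine ⟨(a : ZMod 2), (b : ZMod 2), (c : ZMod 2), fun x y z hline => ?_⟩
    push_cast
    push_cast at hline
    have e1 : ((x:ℤ) : ZMod 2)^2 = ((x:ℤ) : ZMod 2) := ZMod.pow_card _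
    have e2 : ((y:ℤ) : ZMod 2)^2 = ((y:ℤ) : ZMod 2) := ZMod.pow_card _
    have e3 : ((z:ℤ) : ZMod 2)^2 = ((z:ℤ) : ZMod 2) := ZMod.pow_card _
    rw [e1, e2, e3]
    exact hline
  · have hpp : Prime (p : ℤ) := Nat.prime_iff_prime_int.mp hp
    rcases (hpp.dvd_mul.mp hpd) with hab | hc
    · rcases (hpp.dvd_mul.mp hab) with ha | hb
      · -- p ∣ a
        obtain ⟨r, hr⟩ := h1 p hp hp2 ha
        have hb0 : ((b : ℤ) : ZMod p) ≠ 0 := by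
          rw [Ne, ZMod.intCast_zmod_eq_zero_iff_dvd]
          exact fun hb => squarefree_aux hsf hp ha hb ⟨c, by ring⟩
        refine ⟨0, (b : ZMod p), -r, fun x y z hline => ?_⟩
        push_cast at hline ⊢
        push_cast at hr
        have ha0 : ((a : ℤ) : ZMod p) = 0 := (ZMod.intCast_zmod_eq_zero_iff_dvd a p).mpr ha
        have key : (b : ZMod p) * ((b:ZMod p) * (y:ZMod p)^2 + (c:ZMod p) * (z:ZMod p)^2) = 0 := by
          linear_combination ((b:ZMod p) * (y:ZMod p) + r * (z:ZMod p)) * hline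
            - (z:ZMod p)^2 * hr
        have := (mul_eq_zero.mp key).resolve_left hb0
        rw [ha0]
        linear_combination this
      · -- p ∣ b
        obtain ⟨s, hs⟩ := h2 p hp hp2 hb
        have hc0 : ((c : ℤ) : ZMod p) ≠ 0 := by
          rw [Ne, ZMod.intCast_zmod_eq_zero_iff_dvd]
          exact fun hc => squarefree_aux hsf hp hb hc ⟨a, by ring⟩
        refine ⟨-s, 0, (c : ZMod p), fun x y z hline => ?_⟩
        push_cast at hline ⊢
        push_cast at hs
        have hb0 : ((b : ℤ) : ZMod p) = 0 := (ZMod.intCast_zmod_eq_zero_iff_dvd b p).mpr hb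
        have key : (c : ZMod p) * ((c:ZMod p) * (z:ZMod p)^2 + (a:ZMod p) * (x:ZMod p)^2) = 0 := by
          linear_combination ((c:ZMod p) * (z:ZMod p) + s * (x:ZMod p)) * hline
            - (x:ZMod p)^2 * hs
        have := (mul_eq_zero.mp key).resolve_left hc0
        rw [hb0]
        linear_combination this
      -- p ∣ c
    · obtain ⟨t, ht⟩ := h3 p hp hp2 hc
      have ha0' : ((a : ℤ) : ZMod p) ≠ 0 := by
        rw [Ne, ZMod.intCast_zmod_eq_zero_iff_dvd]
        exact fun ha => squarefree_aux hsf hp hc ha ⟨b, by ring⟩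
      refine ⟨(a : ZMod p), -t, 0, fun x y z hline => ?_⟩
      push_cast at hline ⊢
      push_cast at ht
      have hc0 : ((c : ℤ) : ZMod p) = 0 := (ZMod.intCast_zmod_eq_zero_iff_dvd c p).mpr hc
      have key : (a : ZMod p) * ((a:ZMod p) * (x:ZMod p)^2 + (b:ZMod p) * (y:ZMod p)^2) = 0 := by
        linear_combination ((a:ZMod p) * (x:ZMod p) + t * (y:ZMod p)) * hline
          - (y:ZMod p)^2 * ht
      have := (mul_eq_zero.mp key).resolve_left ha0'
      rw [hc0]
      linear_combination this

lemma exists_small_vec {a b c : ℤ} (ha : a ≠ 0) (hb : b ≠ 0) (hc : c ≠ 0)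
    (hsf : Squarefree (a * b * c))
    (h1 : ∀ p : ℕ, p.Prime → p ≠ 2 → (p:ℤ) ∣ a → IsSquare ((-(b*c) : ℤ) : ZMod p))
    (h2 : ∀ p : ℕ, p.Prime → p ≠ 2 → (p:ℤ) ∣ b → IsSquare ((-(a*c) : ℤ) : ZMod p))
    (h3 : ∀ p : ℕ, p.Prime → p ≠ 2 → (p:ℤ) ∣ c → IsSquare ((-(a*b) : ℤ) : ZMod p)) :
    ∃ x y z : ℤ, ¬(x = 0 ∧ y = 0 ∧ z = 0) ∧
      x^2 ≤ ((b*c).natAbs : ℤ) ∧ y^2 ≤ ((a*c).natAbs : ℤ) ∧ z^2 ≤ ((a*b).natAbs : ℤ) ∧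
      (((a*b*c).natAbs : ℤ)) ∣ (a * x^2 + b * y^2 + c * z^2) := by
  set N : ℕ := (a*b*c).natAbs with hNdef
  have habc : a * b * c ≠ 0 := by
    exact mul_ne_zero (mul_ne_zero ha hb) hc
  have hN0 : N ≠ 0 := by simpa [hNdef, Int.natAbs_eq_zero] using habc
  have hNsf : Squarefree N := Int.squarefree_natAbs.mpr hsf
  have hNdvd : (N : ℤ) ∣ a * b * c := Int.natAbs_dvd.mpr dvd_rfl
  -- choose coefficients for each prime factor
  have H : ∀ p ∈ N.primeFactors, ∃ α β γ : ZMod p, ∀ x y z : ℤ,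
      α * (x : ZMod p) + β * (y : ZMod p) + γ * (z : ZMod p) = 0 →
      ((a * x^2 + b * y^2 + c * z^2 : ℤ) : ZMod p) = 0 := by
    intro p hp
    have hpp : p.Prime := Nat.prime_of_mem_primeFactors hp
    have hpd : (p:ℤ) ∣ a * b * c :=
      dvd_trans (Int.natCast_dvd_natCast.mpr (Nat.dvd_of_mem_primeFactors hp)) hNdvd
    exact exists_coeffs hsf h1 h2 h3 hpp hpd
  choose α β γ hP using H
  haveI : ∀ i : {x // x ∈ N.primeFactors}, NeZero (i : ℕ) :=
    fun i => ⟨(Nat.prime_of_mem_primeFactors i.2).pos.ne'⟩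
  set X : ℕ := Nat.sqrt ((b*c).natAbs) with hX
  set Y : ℕ := Nat.sqrt ((a*c).natAbs) with hY
  set Z : ℕ := Nat.sqrt ((a*b).natAbs) with hZ
  set S : Finset (ℤ × ℤ × ℤ) :=
    Finset.Icc (0:ℤ) X ×ˢ (Finset.Icc (0:ℤ) Y ×ˢ Finset.Icc (0:ℤ) Z) with hS
  have hcardS : S.card = (X+1) * ((Y+1) * (Z+1)) := by
    simp [hS, Finset.card_product, Int.card_Icc]
  -- target cardinality
  have hcardT : Fintype.card (∀ i : {x // x ∈ N.primeFactors}, ZMod i) = N := by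
    rw [Fintype.card_pi]
    have e1 : ∀ i : {x // x ∈ N.primeFactors}, Fintype.card (ZMod (i:ℕ)) = (i:ℕ) :=
      fun i => ZMod.card _
    rw [Finset.prod_congr rfl (fun i _ => e1 i)]
    rw [Finset.prod_coe_sort N.primeFactors (fun p => p)]
    exact Nat.prod_primeFactors_of_squarefree hNsf
  set Φ : ℤ × ℤ × ℤ → ∀ i : {x // x ∈ N.primeFactors}, ZMod i :=
    fun t i => α i i.2 * ((t.1 : ℤ) : ZMod i) + β i i.2 * ((t.2.1 : ℤ) : ZMod i)
      + γ i i.2 * ((t.2.2 : ℤ) : ZMod i) with hΦ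
  have hlt : (Finset.univ : Finset (∀ i : {x // x ∈ N.primeFactors}, ZMod i)).card < S.card := by
    rw [Finset.card_univ, hcardT, hcardS]
    have q1 : (b*c).natAbs < (X+1)*(X+1) := Nat.lt_succ_sqrt _
    have q2 : (a*c).natAbs < (Y+1)*(Y+1) := Nat.lt_succ_sqrt _
    have q3 : (a*b).natAbs < (Z+1)*(Z+1) := Nat.lt_succ_sqrt _
    have hNN : N * N = (b*c).natAbs * ((a*c).natAbs * (a*b).natAbs) := by
      simp only [hNdef, ← Int.natAbs_mul]
      congr 1
      ring
    have hlt2 : N * N < ((X+1) * ((Y+1) * (Z+1))) * ((X+1) * ((Y+1) * (Z+1))) := by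
      have e : ((X+1) * ((Y+1) * (Z+1))) * ((X+1) * ((Y+1) * (Z+1)))
          = ((X+1)*(X+1)) * (((Y+1)*(Y+1)) * ((Z+1)*(Z+1))) := by ring
      rw [e, hNN]
      exact mul_lt_mul'' q1 (mul_lt_mul'' q2 q3 (Nat.zero_le _) (Nat.zero_le _))
        (Nat.zero_le _) (Nat.zero_le _)
    by_contra hcon
    push_neg at hcon
    exact absurd hlt2 (not_lt.mpr (Nat.mul_le_mul hcon hcon))
  obtain ⟨⟨x1, y1, z1⟩, ht1, ⟨x2, y2, z2⟩, ht2, hne, heq⟩ :=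
    Finset.exists_ne_map_eq_of_card_lt_of_maps_to hlt (fun t _ => Finset.mem_univ (Φ t))
  simp only [hS, Finset.mem_product, Finset.mem_Icc] at ht1 ht2
  obtain ⟨⟨hx10, hx1X⟩, ⟨hy10, hy1Y⟩, hz10, hz1Z⟩ := ht1
  obtain ⟨⟨hx20, hx2X⟩, ⟨hy20, hy2Y⟩, hz20, hz2Z⟩ := ht2
  refine ⟨x1 - x2, y1 - y2, z1 - z2, ?_, ?_, ?_, ?_, ?_⟩
  · rintro ⟨e1, e2, e3⟩
    apply hne
    simp only [Prod.mk.injEq]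
    refine ⟨by omega, by omega, by omega⟩
  · calc (x1 - x2)^2 ≤ (X:ℤ)^2 := sq_le_sq' (by omega) (by omega)
      _ ≤ ((b*c).natAbs : ℤ) := by exact_mod_cast Nat.sqrt_le' _
  · calc (y1 - y2)^2 ≤ (Y:ℤ)^2 := sq_le_sq' (by omega) (by omega)
      _ ≤ ((a*c).natAbs : ℤ) := by exact_mod_cast Nat.sqrt_le' _
  · calc (z1 - z2)^2 ≤ (Z:ℤ)^2 := sq_le_sq' (by omega) (by omega)
      _ ≤ ((a*b).natAbs : ℤ) := by exact_mod_cast Nat.sqrt_le' _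
  · have hdvd : ∀ p ∈ N.primeFactors,
        (p:ℤ) ∣ (a*(x1-x2)^2 + b*(y1-y2)^2 + c*(z1-z2)^2) := by
      intro p hp
      have hfun := congrFun heq ⟨p, hp⟩
      simp only [hΦ] at hfun
      have hline : α p hp * ((x1 - x2 : ℤ) : ZMod p) + β p hp * ((y1 - y2 : ℤ) : ZMod p)
          + γ p hp * ((z1 - z2 : ℤ) : ZMod p) = 0 := by
        push_cast
        linear_combination hfun
      exact (ZMod.intCast_zmod_eq_zero_iff_dvd _ p).mp (hP p hp _ _ _ hline)
    have hNf : N ∣ (a*(x1-x2)^2 + b*(y1-y2)^2 + c*(z1-z2)^2).natAbs := by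
      rw [← Nat.prod_primeFactors_of_squarefree hNsf]
      refine Finset.prod_primes_dvd _
        (fun p hp => (Nat.prime_of_mem_primeFactors hp).prime) (fun p hp => ?_)
      exact Int.natCast_dvd.mp (hdvd p hp)
    exact dvd_trans (Int.natCast_dvd_natCast.mpr hNf) (Int.natAbs_dvd.mpr dvd_rfl)

section Cases
variable {a b c : ℤ}

lemma legendre_case1 (ha : 0 < a) (hb : b < 0) (hc : c < 0)
    (hsf : Squarefree (a * b * c))
    (h1 : ∀ p : ℕ, p.Prime → p ≠ 2 → (p:ℤ) ∣ a → IsSquare ((-(b*c) : ℤ) : ZMod p))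
    (h2 : ∀ p : ℕ, p.Prime → p ≠ 2 → (p:ℤ) ∣ b → IsSquare ((-(a*c) : ℤ) : ZMod p))
    (h3 : ∀ p : ℕ, p.Prime → p ≠ 2 → (p:ℤ) ∣ c → IsSquare ((-(a*b) : ℤ) : ZMod p)) :
    ∃ x y z : ℤ, ¬(x = 0 ∧ y = 0 ∧ z = 0) ∧ a * x^2 + b * y^2 + c * z^2 = 0 := by
  by_cases hbc1 : b * c = 1
  · -- b = c = -1 : use sum of two squares for a
    obtain ⟨hb1, hc1⟩ : b = -1 ∧ c = -1 := by
      rcases Int.mul_eq_one_iff_eq_one_or_neg_one.mp hbc1 with ⟨h', h''⟩ | ⟨h', h''⟩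
      · exact absurd h' (by linarith)
      · exact ⟨h', h''⟩
    obtain ⟨u, v, huv⟩ := sum_two_squares_int ha (fun p pp p2 pd => by
      have := h1 p pp p2 pd
      rwa [hb1, hc1, show (-((-1 : ℤ) * -1) : ℤ) = -1 by ring, Int.cast_neg,
        Int.cast_one] at this)
    exact ⟨1, u, v, by simp, by rw [hb1, hc1]; linear_combination huv⟩
  · obtain ⟨x, y, z, hnz, hbx, hby, hbz, hdvd⟩ :=
      exists_small_vec ha.ne' hb.ne hc.ne hsf h1 h2 h3
    have habc : 0 < a * b * c := by
      have := mul_pos ha (mul_pos_of_neg_of_neg hb hc); nlinarith [this]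
    have hNval : (((a*b*c).natAbs : ℤ)) = a*b*c := Int.natAbs_of_nonneg habc.le
    have hbx' : x^2 ≤ b * c := by
      rwa [Int.natAbs_of_nonneg (mul_pos_of_neg_of_neg hb hc).le] at hbx
    have hby' : y^2 ≤ -(a * c) := by
      rwa [← Int.abs_eq_natAbs, abs_of_neg (mul_neg_of_pos_of_neg ha hc)] at hby
    have hbz' : z^2 ≤ -(a * b) := by
      rwa [← Int.abs_eq_natAbs, abs_of_neg (mul_neg_of_pos_of_neg ha hb)] at hbz
    rw [hNval] at hdvd
    obtain ⟨k, hk⟩ := hdvd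
    have f1 : a * x^2 ≤ a*b*c := by nlinarith [mul_le_mul_of_nonneg_left hbx' ha.le]
    have f2 : 0 ≤ a * x^2 := by positivity
    have f3 : b * y^2 ≤ 0 := by nlinarith [sq_nonneg y]
    have f4 : -(a*b*c) ≤ b * y^2 := by
      nlinarith [mul_nonneg (neg_nonneg.mpr hb.le) (sub_nonneg.mpr hby')]
    have f5 : -(a*b*c) ≤ c * z^2 := by
      nlinarith [mul_nonneg (neg_nonneg.mpr hc.le) (sub_nonneg.mpr hbz')]
    have f6 : c * z^2 ≤ 0 := by nlinarith [sq_nonneg z]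
    have hk1 : k ≤ 1 := le_of_mul_le_mul_left (by linarith) habc
    have hk2 : -2 ≤ k := le_of_mul_le_mul_left (by linarith) habc
    interval_cases k
    · -- k = -2 : impossible
      exfalso
      have g1 : b * y^2 = -(a*b*c) := by linarith
      have g2 : c * z^2 = -(a*b*c) := by linarith
      have hy2 : y^2 = -(a*c) := mul_left_cancel₀ hb.ne (by linear_combination g1)
      have hz2 : z^2 = -(a*b) := mul_left_cancel₀ hc.ne (by linear_combination g2)
      have huy : IsUnit y := hsf y ⟨-b, by linear_combination b * hy2⟩
      have huz : IsUnit z := hsf z ⟨-c, by linear_combination c * hz2⟩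
      have hy1 : y^2 = 1 := by
        rcases Int.isUnit_iff.mp huy with h' | h' <;> rw [h'] <;> ring
      have hz1 : z^2 = 1 := by
        rcases Int.isUnit_iff.mp huz with h' | h' <;> rw [h'] <;> ring
      have hac : a * c = -1 := by linarith
      have hab : a * b = -1 := by linarith
      have hua : IsUnit a := IsUnit.of_mul_eq_one (-b) (by linarith)
      have ha1 : a = 1 := by
        rcases Int.isUnit_iff.mp hua with h' | h'
        · exact h'
        · exact absurd h' (by linarith)
      apply hbc1
      have hb1 : b = -1 := by rw [ha1] at hab; linarith
      have hc1 : c = -1 := by rw [ha1] at hac; linarith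
      rw [hb1, hc1]; ring
    · -- k = -1 : use the composition identity
      have hf0 : a*x^2 + b*y^2 + c*z^2 + a*b*c = 0 := by linarith
      by_cases hw : z^2 + a*b = 0
      · exact ⟨z, a, 0, fun h => ha.ne' h.2.1, by linear_combination a * hw⟩
      · exact ⟨x*z - b*y, a*x + y*z, z^2 + a*b, fun h => hw h.2.2,
          by linear_combination (z^2 + a*b) * hf0⟩
    · -- k = 0
      exact ⟨x, y, z, hnz, by linarith⟩
    · -- k = 1 : impossible
      exfalso
      have g1 : a * x^2 = a*b*c := by linarith
      have hx2 : x^2 = b*c := mul_left_cancel₀ ha.ne' (by linear_combination g1)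
      have hux : IsUnit x := hsf x ⟨a, by linear_combination (-a) * hx2⟩
      have hx1 : x^2 = 1 := by
        rcases Int.isUnit_iff.mp hux with h' | h' <;> rw [h'] <;> ring
      exact hbc1 (by linarith)

lemma legendre_case2 (ha : 0 < a) (hb : 0 < b) (hc : c < 0)
    (hsf : Squarefree (a * b * c))
    (h1 : ∀ p : ℕ, p.Prime → p ≠ 2 → (p:ℤ) ∣ a → IsSquare ((-(b*c) : ℤ) : ZMod p))
    (h2 : ∀ p : ℕ, p.Prime → p ≠ 2 → (p:ℤ) ∣ b → IsSquare ((-(a*c) : ℤ) : ZMod p))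
    (h3 : ∀ p : ℕ, p.Prime → p ≠ 2 → (p:ℤ) ∣ c → IsSquare ((-(a*b) : ℤ) : ZMod p)) :
    ∃ x y z : ℤ, ¬(x = 0 ∧ y = 0 ∧ z = 0) ∧ a * x^2 + b * y^2 + c * z^2 = 0 := by
  by_cases hab1 : a * b = 1
  · -- a = b = 1 : use sum of two squares for -c
    obtain ⟨ha1, hb1⟩ : a = 1 ∧ b = 1 := by
      rcases Int.mul_eq_one_iff_eq_one_or_neg_one.mp hab1 with ⟨h', h''⟩ | ⟨h', h''⟩
      · exact ⟨h', h''⟩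
      · exact absurd h' (by linarith)
    obtain ⟨u, v, huv⟩ := sum_two_squares_int (n := -c) (by linarith)
      (fun p pp p2 pd => by
        have := h3 p pp p2 ((dvd_neg).mp pd)
        rwa [ha1, hb1, show (-((1 : ℤ) * 1) : ℤ) = -1 by ring, Int.cast_neg,
          Int.cast_one] at this)
    exact ⟨u, v, 1, by simp, by rw [ha1, hb1]; linear_combination -huv⟩
  · obtain ⟨x, y, z, hnz, hbx, hby, hbz, hdvd⟩ :=
      exists_small_vec ha.ne' hb.ne' hc.ne hsf h1 h2 h3
    have habc : a * b * c < 0 := mul_neg_of_pos_of_neg (mul_pos ha hb) hc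
    have hNval : (((a*b*c).natAbs : ℤ)) = -(a*b*c) := by
      rw [← Int.abs_eq_natAbs, abs_of_neg habc]
    have hbx' : x^2 ≤ -(b * c) := by
      rwa [← Int.abs_eq_natAbs, abs_of_neg (mul_neg_of_pos_of_neg hb hc)] at hbx
    have hby' : y^2 ≤ -(a * c) := by
      rwa [← Int.abs_eq_natAbs, abs_of_neg (mul_neg_of_pos_of_neg ha hc)] at hby
    have hbz' : z^2 ≤ a * b := by
      rwa [Int.natAbs_of_nonneg (mul_pos ha hb).le] at hbz
    rw [hNval] at hdvd
    obtain ⟨k, hk⟩ := hdvd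
    have habc' : 0 < -(a*b*c) := by linarith
    have f1 : a * x^2 ≤ -(a*b*c) := by nlinarith [mul_le_mul_of_nonneg_left hbx' ha.le]
    have f2 : 0 ≤ a * x^2 := by positivity
    have f3 : b * y^2 ≤ -(a*b*c) := by nlinarith [mul_le_mul_of_nonneg_left hby' hb.le]
    have f4 : 0 ≤ b * y^2 := by positivity
    have f5 : a*b*c ≤ c * z^2 := by
      nlinarith [mul_nonneg (neg_nonneg.mpr hc.le) (sub_nonneg.mpr hbz')]
    have f6 : c * z^2 ≤ 0 := by nlinarith [sq_nonneg z]
    have hk1 : k ≤ 2 := le_of_mul_le_mul_left (by linarith) habc'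
    have hk2 : -1 ≤ k := le_of_mul_le_mul_left (by linarith) habc'
    interval_cases k
    · -- k = -1 : impossible
      exfalso
      have g1 : c * z^2 = a*b*c := by linarith
      have hz2 : z^2 = a*b := mul_left_cancel₀ hc.ne (by linear_combination g1)
      have huz : IsUnit z := hsf z ⟨c, by linear_combination (-c) * hz2⟩
      have hz1 : z^2 = 1 := by
        rcases Int.isUnit_iff.mp huz with h' | h' <;> rw [h'] <;> ring
      exact hab1 (by linarith)
    · -- k = 0
      exact ⟨x, y, z, hnz, by linarith⟩
    · -- k = 1 : composition identity, pivot z is fine since a*b > 0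
      have hf0 : a*x^2 + b*y^2 + c*z^2 + a*b*c = 0 := by linarith
      have hw : z^2 + a*b ≠ 0 := by nlinarith [sq_nonneg z, mul_pos ha hb]
      exact ⟨x*z - b*y, a*x + y*z, z^2 + a*b, fun h => hw h.2.2,
        by linear_combination (z^2 + a*b) * hf0⟩
    · -- k = 2 : impossible
      exfalso
      have g1 : a * x^2 = -(a*b*c) := by linarith
      have g2 : b * y^2 = -(a*b*c) := by linarith
      have hx2 : x^2 = -(b*c) := mul_left_cancel₀ ha.ne' (by linear_combination g1)
      have hy2 : y^2 = -(a*c) := mul_left_cancel₀ hb.ne' (by linear_combination g2)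
      have hux : IsUnit x := hsf x ⟨-a, by linear_combination a * hx2⟩
      have huy : IsUnit y := hsf y ⟨-b, by linear_combination b * hy2⟩
      have hx1 : x^2 = 1 := by
        rcases Int.isUnit_iff.mp hux with h' | h' <;> rw [h'] <;> ring
      have hy1 : y^2 = 1 := by
        rcases Int.isUnit_iff.mp huy with h' | h' <;> rw [h'] <;> ring
      have hbc : b * c = -1 := by linarith
      have hac : a * c = -1 := by linarith
      have hua : IsUnit a := IsUnit.of_mul_eq_one (-c) (by linarith)
      have ha1 : a = 1 := by
        rcases Int.isUnit_iff.mp hua with h' | h'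
        · exact h'
        · exact absurd h' (by linarith)
      have hc1 : c = -1 := by rw [ha1] at hac; linarith
      have hb1 : b = 1 := by rw [hc1] at hbc; linarith
      exact hab1 (by rw [ha1, hb1]; ring)

end Cases

lemma legendre_int {a b c : ℤ} (ha : 0 < a) (hb : b ≠ 0) (hc : c ≠ 0)
    (hsf : Squarefree (a * b * c))
    (h1 : ∀ p : ℕ, p.Prime → p ≠ 2 → (p:ℤ) ∣ a → IsSquare ((-(b*c) : ℤ) : ZMod p))
    (h2 : ∀ p : ℕ, p.Prime → p ≠ 2 → (p:ℤ) ∣ b → IsSquare ((-(a*c) : ℤ) : ZMod p))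
    (h3 : ∀ p : ℕ, p.Prime → p ≠ 2 → (p:ℤ) ∣ c → IsSquare ((-(a*b) : ℤ) : ZMod p))
    (hsign : ¬(0 < b ∧ 0 < c)) :
    ∃ x y z : ℤ, ¬(x = 0 ∧ y = 0 ∧ z = 0) ∧ a * x^2 + b * y^2 + c * z^2 = 0 := by
  rcases hb.lt_or_gt with hbneg | hbpos
  · rcases hc.lt_or_gt with hcneg | hcpos
    · exact legendre_case1 ha hbneg hcneg hsf h1 h2 h3
    · -- b < 0 < c : apply case2 with b and c swapped
      have hsf' : Squarefree (a * c * b) := by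
        rwa [show a * c * b = a * b * c by ring]
      have h1' : ∀ p : ℕ, p.Prime → p ≠ 2 → (p:ℤ) ∣ a →
          IsSquare ((-(c*b) : ℤ) : ZMod p) := fun p pp p2 pd => by
        have := h1 p pp p2 pd; rwa [mul_comm c b]
      obtain ⟨x, y, z, hnz, heq⟩ := legendre_case2 ha hcpos hbneg hsf' h1' h3 h2
      exact ⟨x, z, y, fun h => hnz ⟨h.1, h.2.2, h.2.1⟩, by linear_combination heq⟩
  · have hcneg : c < 0 := by
      rcases hc.lt_or_gt with h' | h'
      · exact h'
      · exact absurd ⟨hbpos, h'⟩ hsign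
    exact legendre_case2 ha hbpos hcneg hsf h1 h2 h3

lemma jacobi_eq_one_iff_isSquare {m : ℤ} {p : ℕ} (pp : p.Prime) (hnd : ¬ (p:ℤ) ∣ m) :
    jacobiSym m p = 1 ↔ IsSquare ((m : ℤ) : ZMod p) := by
  haveI := Fact.mk pp
  rw [← jacobiSym.legendreSym.to_jacobiSym]
  exact legendreSym.eq_one_iff p (by rwa [Ne, ZMod.intCast_zmod_eq_zero_iff_dvd])

lemma rat_to_int_sol {A B : ℤ} {x y z : ℚ} (hnz : ¬(x = 0 ∧ y = 0 ∧ z = 0))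
    (heq : x^2 = (A : ℚ) * y^2 + (B : ℚ) * z^2) :
    ∃ X Y Z : ℤ, ¬(X = 0 ∧ Y = 0 ∧ Z = 0) ∧ X^2 = A * Y^2 + B * Z^2 := by
  have key : ∀ q : ℚ, (q.num : ℚ) = q * (q.den : ℚ) := fun q =>
    (div_eq_iff (by exact_mod_cast q.den_nz : ((q.den : ℚ)) ≠ 0)).mp (Rat.num_div_den q)
  refine ⟨x.num * y.den * z.den, x.den * y.num * z.den, x.den * y.den * z.num, ?_, ?_⟩
  · rintro ⟨e1, e2, e3⟩
    apply hnz
    have hy' : (y.den : ℤ) ≠ 0 := by exact_mod_cast y.den_nz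
    have hz' : (z.den : ℤ) ≠ 0 := by exact_mod_cast z.den_nz
    have hx' : (x.den : ℤ) ≠ 0 := by exact_mod_cast x.den_nz
    refine ⟨Rat.num_eq_zero.mp ?_, Rat.num_eq_zero.mp ?_, Rat.num_eq_zero.mp ?_⟩
    · rcases mul_eq_zero.mp e1 with h' | h'
      · exact (mul_eq_zero.mp h').resolve_right hy'
      · exact absurd h' hz'
    · rcases mul_eq_zero.mp e2 with h' | h'
      · exact (mul_eq_zero.mp h').resolve_left hx'
      · exact absurd h' hz'
    · rcases mul_eq_zero.mp e3 with h' | h'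
      · exact absurd ((mul_eq_zero.mp h').resolve_right hy') hx'
      · exact h'
  · have ratEq : ((x.num * (y.den:ℤ) * z.den : ℤ) : ℚ)^2
        = (A:ℚ) * (((x.den:ℤ) * y.num * z.den : ℤ) : ℚ)^2
          + (B:ℚ) * (((x.den:ℤ) * (y.den:ℤ) * z.num : ℤ) : ℚ)^2 := by
      push_cast
      rw [key x, key y, key z]
      linear_combination ((x.den : ℚ) * y.den * z.den)^2 * heq
    exact_mod_cast ratEq

lemma primitive_sol {A B X Y Z : ℤ} (hnz : ¬(X = 0 ∧ Y = 0 ∧ Z = 0))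
    (heq : X^2 = A * Y^2 + B * Z^2) :
    ∃ x y z : ℤ, (∀ p : ℕ, p.Prime → ¬((p:ℤ) ∣ x ∧ (p:ℤ) ∣ y ∧ (p:ℤ) ∣ z)) ∧
      ¬(x = 0 ∧ y = 0 ∧ z = 0) ∧ x^2 = A * y^2 + B * z^2 := by
  set g : ℕ := Int.gcd X (Int.gcd Y Z) with hgdef
  have hg0 : g ≠ 0 := by
    intro h
    obtain ⟨h1, h2⟩ := Int.gcd_eq_zero_iff.mp h
    have h2' : Int.gcd Y Z = 0 := by exact_mod_cast h2
    obtain ⟨h3, h4⟩ := Int.gcd_eq_zero_iff.mp h2'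
    exact hnz ⟨h1, h3, h4⟩
  have hgZ : (g : ℤ) ≠ 0 := Int.natCast_ne_zero.mpr hg0
  obtain ⟨x, hx⟩ : (g:ℤ) ∣ X := Int.gcd_dvd_left _ _
  obtain ⟨y, hy⟩ : (g:ℤ) ∣ Y :=
    dvd_trans (Int.gcd_dvd_right _ _) (Int.gcd_dvd_left _ _)
  obtain ⟨z, hz⟩ : (g:ℤ) ∣ Z :=
    dvd_trans (Int.gcd_dvd_right _ _) (Int.gcd_dvd_right _ _)
  have hgcd1 : Int.gcd x ((Int.gcd y z : ℕ) : ℤ) = 1 := by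
    have step : g * Int.gcd x ((Int.gcd y z : ℕ) : ℤ) = g := by
      conv_rhs => rw [hgdef]
      rw [hx, hy, hz]
      have e2 : ((Int.gcd ((g:ℤ) * y) ((g:ℤ) * z) : ℕ) : ℤ)
          = (g:ℤ) * ((Int.gcd y z : ℕ) : ℤ) := by
        rw [Int.gcd_mul_left, Int.natAbs_natCast]
        push_cast
        ring
      rw [e2, Int.gcd_mul_left, Int.natAbs_natCast]
    exact Nat.eq_of_mul_eq_mul_left (Nat.pos_of_ne_zero hg0) (by rw [step, Nat.mul_one])
  refine ⟨x, y, z, ?_, ?_, ?_⟩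
  · rintro p pp ⟨dx, dy, dz⟩
    have hpg : (p:ℤ) ∣ ((Int.gcd x ((Int.gcd y z : ℕ) : ℤ) : ℕ) : ℤ) :=
      Int.natCast_dvd_natCast.mpr (Int.dvd_gcd dx (Int.natCast_dvd_natCast.mpr (Int.dvd_gcd dy dz)))
    rw [hgcd1] at hpg
    have hpg' : (p:ℤ) ∣ (1:ℤ) := by simpa using hpg
    have hle : (p:ℤ) ≤ 1 := Int.le_of_dvd one_pos hpg'
    have h2 : (2:ℤ) ≤ (p:ℤ) := by exact_mod_cast pp.two_le
    linarith
  · rintro ⟨e1, e2, e3⟩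
    exact hnz ⟨by rw [hx, e1, mul_zero], by rw [hy, e2, mul_zero], by rw [hz, e3, mul_zero]⟩
  · have step : (g:ℤ)^2 * x^2 = (g:ℤ)^2 * (A * y^2 + B * z^2) := by
      rw [hx, hy, hz] at heq
      linear_combination heq
    exact mul_left_cancel₀ (pow_ne_zero 2 hgZ) step

section Forward
variable {m1 m2 m3 x y z : ℤ}

lemma forward_cond1 (hsq : Squarefree (m1 * m2 * m3))
    (hprim : ∀ p : ℕ, p.Prime → ¬((p:ℤ) ∣ x ∧ (p:ℤ) ∣ y ∧ (p:ℤ) ∣ z))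
    (heq : x^2 = m1 * m2 * y^2 + m1 * m3 * z^2)
    {p : ℕ} (pp : p.Prime) (hpm1 : (p:ℤ) ∣ m1) :
    IsSquare ((-(m2 * m3) : ℤ) : ZMod p) := by
  haveI := Fact.mk pp
  have hpp : Prime (p:ℤ) := Nat.prime_iff_prime_int.mp pp
  have hpne : (p:ℤ) ≠ 0 := Int.natCast_ne_zero.mpr pp.ne_zero
  have hm10 : ((m1:ℤ) : ZMod p) = 0 := (ZMod.intCast_zmod_eq_zero_iff_dvd _ _).mpr hpm1
  have hcast : ((x:ℤ) : ZMod p)^2 = ((m1:ℤ):ZMod p) * ((m2:ℤ):ZMod p) * ((y:ℤ):ZMod p)^2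
      + ((m1:ℤ):ZMod p) * ((m3:ℤ):ZMod p) * ((z:ℤ):ZMod p)^2 := by
    exact_mod_cast congrArg (fun t : ℤ => (t : ZMod p)) heq
  have hx0 : ((x:ℤ) : ZMod p) = 0 := by
    have h2 : ((x:ℤ):ZMod p)^2 = 0 := by rw [hcast, hm10]; ring
    exact pow_eq_zero_iff two_ne_zero |>.mp h2
  have hpx : (p:ℤ) ∣ x := (ZMod.intCast_zmod_eq_zero_iff_dvd _ _).mp hx0
  obtain ⟨x1, hx1⟩ := hpx
  obtain ⟨m1', hm1'⟩ := hpm1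
  have hpm1' : ¬ (p:ℤ) ∣ m1' := by
    rintro ⟨t, rfl⟩
    exact hpp.not_unit (hsq _ ⟨t * m2 * m3, by rw [hm1']; ring⟩)
  have heq2 : m1' * (m2 * y^2 + m3 * z^2) = (p:ℤ) * x1^2 := by
    apply mul_left_cancel₀ hpne
    rw [hx1, hm1'] at heq
    linear_combination -heq
  have hdvd : (p:ℤ) ∣ m2 * y^2 + m3 * z^2 :=
    (hpp.dvd_mul.mp ⟨x1^2, heq2⟩).resolve_left hpm1'
  have hrel : ((m2:ℤ):ZMod p) * ((y:ℤ):ZMod p)^2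
      + ((m3:ℤ):ZMod p) * ((z:ℤ):ZMod p)^2 = 0 := by
    have h3 := (ZMod.intCast_zmod_eq_zero_iff_dvd _ p).mpr hdvd
    push_cast at h3
    exact_mod_cast h3
  have hz0 : ((z:ℤ) : ZMod p) ≠ 0 := by
    intro h0
    have hpz : (p:ℤ) ∣ z := (ZMod.intCast_zmod_eq_zero_iff_dvd _ _).mp h0
    have hpm2 : ¬ (p:ℤ) ∣ m2 := fun hd =>
      squarefree_aux hsq pp ⟨m1', hm1'⟩ hd ⟨m3, by ring⟩
    have hpy2 : (p:ℤ) ∣ m2 * y^2 := by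
      have h1 : (p:ℤ) ∣ m3 * z^2 := Dvd.dvd.mul_left (dvd_pow hpz two_ne_zero) m3
      have h4 := dvd_sub hdvd h1
      rwa [add_sub_cancel_right] at h4
    have hpy : (p:ℤ) ∣ y := hpp.dvd_of_dvd_pow ((hpp.dvd_mul.mp hpy2).resolve_left hpm2)
    exact hprim p pp ⟨⟨x1, hx1⟩, hpy, hpz⟩
  refine ⟨((m2:ℤ):ZMod p) * ((y:ℤ):ZMod p) * (((z:ℤ):ZMod p))⁻¹, ?_⟩
  have hinv : (((z:ℤ):ZMod p))⁻¹ * ((z:ℤ):ZMod p) = 1 := inv_mul_cancel₀ hz0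
  apply mul_right_cancel₀ (mul_ne_zero hz0 hz0)
  calc ((-(m2 * m3) : ℤ) : ZMod p) * (((z:ℤ):ZMod p) * ((z:ℤ):ZMod p))
      = (((m2:ℤ):ZMod p) * ((y:ℤ):ZMod p)) * (((m2:ℤ):ZMod p) * ((y:ℤ):ZMod p)) := by
        push_cast
        linear_combination (-((m2:ℤ):ZMod p)) * hrel
    _ = ((m2:ℤ):ZMod p) * ((y:ℤ):ZMod p) * (((z:ℤ):ZMod p))⁻¹
        * (((m2:ℤ):ZMod p) * ((y:ℤ):ZMod p) * (((z:ℤ):ZMod p))⁻¹)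
        * (((z:ℤ):ZMod p) * ((z:ℤ):ZMod p)) := by
        rw [show ((m2:ℤ):ZMod p) * ((y:ℤ):ZMod p) * (((z:ℤ):ZMod p))⁻¹
            * (((m2:ℤ):ZMod p) * ((y:ℤ):ZMod p) * (((z:ℤ):ZMod p))⁻¹)
            * (((z:ℤ):ZMod p) * ((z:ℤ):ZMod p))
            = (((m2:ℤ):ZMod p) * ((y:ℤ):ZMod p)) * (((m2:ℤ):ZMod p) * ((y:ℤ):ZMod p))
              * ((((z:ℤ):ZMod p))⁻¹ * ((z:ℤ):ZMod p))
              * ((((z:ℤ):ZMod p))⁻¹ * ((z:ℤ):ZMod p)) by ring, hinv]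
        ring

lemma forward_cond2 (hsq : Squarefree (m1 * m2 * m3))
    (hprim : ∀ p : ℕ, p.Prime → ¬((p:ℤ) ∣ x ∧ (p:ℤ) ∣ y ∧ (p:ℤ) ∣ z))
    (heq : x^2 = m1 * m2 * y^2 + m1 * m3 * z^2)
    {p : ℕ} (pp : p.Prime) (hpm2 : (p:ℤ) ∣ m2) :
    IsSquare ((m1 * m3 : ℤ) : ZMod p) := by
  haveI := Fact.mk pp
  have hpp : Prime (p:ℤ) := Nat.prime_iff_prime_int.mp pp
  have hpne : (p:ℤ) ≠ 0 := Int.natCast_ne_zero.mpr pp.ne_zero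
  have hm20 : ((m2:ℤ) : ZMod p) = 0 := (ZMod.intCast_zmod_eq_zero_iff_dvd _ _).mpr hpm2
  have hcast : ((x:ℤ) : ZMod p)^2 = ((m1:ℤ):ZMod p) * ((m2:ℤ):ZMod p) * ((y:ℤ):ZMod p)^2
      + ((m1:ℤ):ZMod p) * ((m3:ℤ):ZMod p) * ((z:ℤ):ZMod p)^2 := by
    exact_mod_cast congrArg (fun t : ℤ => (t : ZMod p)) heq
  have hrel : ((x:ℤ):ZMod p)^2
      = ((m1:ℤ):ZMod p) * ((m3:ℤ):ZMod p) * ((z:ℤ):ZMod p)^2 := by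
    rw [hm20] at hcast
    linear_combination hcast
  by_cases hz0 : ((z:ℤ) : ZMod p) = 0
  · exfalso
    have hpz : (p:ℤ) ∣ z := (ZMod.intCast_zmod_eq_zero_iff_dvd _ _).mp hz0
    have hx0 : ((x:ℤ):ZMod p) = 0 := by
      have h2 : ((x:ℤ):ZMod p)^2 = 0 := by rw [hrel, hz0]; ring
      exact pow_eq_zero_iff two_ne_zero |>.mp h2
    have hpx : (p:ℤ) ∣ x := (ZMod.intCast_zmod_eq_zero_iff_dvd _ _).mp hx0
    obtain ⟨x1, hx1⟩ := hpx
    obtain ⟨z1, hz1⟩ := hpz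
    obtain ⟨m2', hm2'⟩ := hpm2
    have hpm1 : ¬ (p:ℤ) ∣ m1 := fun hd =>
      squarefree_aux hsq pp hd ⟨m2', hm2'⟩ ⟨m3, by ring⟩
    have hpm2' : ¬ (p:ℤ) ∣ m2' := by
      rintro ⟨t, rfl⟩
      exact hpp.not_unit (hsq _ ⟨m1 * t * m3, by rw [hm2']; ring⟩)
    have heq2 : m1 * m2' * y^2 = (p:ℤ) * (x1^2 - m1 * m3 * z1^2) := by
      apply mul_left_cancel₀ hpne
      rw [hx1, hm2', hz1] at heq
      linear_combination -heq
    have hpdvd : (p:ℤ) ∣ m1 * m2' * y^2 := ⟨_, heq2⟩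
    have hpy : (p:ℤ) ∣ y := by
      refine hpp.dvd_of_dvd_pow ((hpp.dvd_mul.mp hpdvd).resolve_left ?_)
      exact fun hd => (hpp.dvd_mul.mp hd).elim hpm1 hpm2'
    exact hprim p pp ⟨⟨x1, hx1⟩, hpy, ⟨z1, hz1⟩⟩
  · refine ⟨((x:ℤ):ZMod p) * (((z:ℤ):ZMod p))⁻¹, ?_⟩
    have hinv : (((z:ℤ):ZMod p))⁻¹ * ((z:ℤ):ZMod p) = 1 := inv_mul_cancel₀ hz0
    apply mul_right_cancel₀ (mul_ne_zero hz0 hz0)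
    calc ((m1 * m3 : ℤ) : ZMod p) * (((z:ℤ):ZMod p) * ((z:ℤ):ZMod p))
        = ((x:ℤ):ZMod p) * ((x:ℤ):ZMod p) := by
          push_cast
          linear_combination -hrel
      _ = ((x:ℤ):ZMod p) * (((z:ℤ):ZMod p))⁻¹ * (((x:ℤ):ZMod p) * (((z:ℤ):ZMod p))⁻¹)
          * (((z:ℤ):ZMod p) * ((z:ℤ):ZMod p)) := by
          rw [show ((x:ℤ):ZMod p) * (((z:ℤ):ZMod p))⁻¹
              * (((x:ℤ):ZMod p) * (((z:ℤ):ZMod p))⁻¹)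
              * (((z:ℤ):ZMod p) * ((z:ℤ):ZMod p))
              = ((x:ℤ):ZMod p) * ((x:ℤ):ZMod p)
                * ((((z:ℤ):ZMod p))⁻¹ * ((z:ℤ):ZMod p))
                * ((((z:ℤ):ZMod p))⁻¹ * ((z:ℤ):ZMod p)) by ring, hinv]
          ring

end Forward

/-- The conic `x² = m₁m₂ y² + m₁m₃ z²` has a nontrivial solution over `F`. -/
def Soluble (F : Type*) [Field F] (m1 m2 m3 : ℤ) : Prop :=
  ∃ x y z : F, ¬(x = 0 ∧ y = 0 ∧ z = 0) ∧
    x ^ 2 = ((m1 * m2 : ℤ) : F) * y ^ 2 + ((m1 * m3 : ℤ) : F) * z ^ 2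

theorem conic_global_solubility (m1 m2 m3 : ℤ) (h1 : m1 ≠ 0) (h2 : m2 ≠ 0) (h3 : m3 ≠ 0)
    (hpos : 0 < m1) (hsq : Squarefree (m1 * m2 * m3)) :
    Soluble ℚ m1 m2 m3 ↔
      ((∀ p : ℕ, p.Prime → p ≠ 2 → (p : ℤ) ∣ m1 → jacobiSym (-(m2 * m3)) p = 1) ∧
       (∀ p : ℕ, p.Prime → p ≠ 2 → (p : ℤ) ∣ m2 → jacobiSym (m1 * m3) p = 1) ∧
       (∀ p : ℕ, p.Prime → p ≠ 2 → (p : ℤ) ∣ m3 → jacobiSym (m1 * m2) p = 1) ∧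
       ¬(m2 < 0 ∧ m3 < 0) ∧
       Soluble ℚ_[2] m1 m2 m3) := by
  constructor
  · rintro ⟨x, y, z, hnz, heq⟩
    obtain ⟨X, Y, Z, hnzi, heqi⟩ :=
      rat_to_int_sol (A := m1 * m2) (B := m1 * m3) hnz heq
    obtain ⟨u, v, w, hprim, hnzp, heqp⟩ := primitive_sol hnzi heqi
    refine ⟨?_, ?_, ?_, ?_, ?_⟩
    · intro p pp p2 pd
      have hnd : ¬ (p:ℤ) ∣ -(m2 * m3) := fun hd =>
        squarefree_aux hsq pp pd (dvd_neg.mp hd) ⟨1, by ring⟩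
      exact (jacobi_eq_one_iff_isSquare pp hnd).mpr (forward_cond1 hsq hprim heqp pp pd)
    · intro p pp p2 pd
      have hnd : ¬ (p:ℤ) ∣ m1 * m3 := fun hd =>
        squarefree_aux hsq pp pd hd ⟨1, by ring⟩
      exact (jacobi_eq_one_iff_isSquare pp hnd).mpr (forward_cond2 hsq hprim heqp pp pd)
    · intro p pp p2 pd
      have hnd : ¬ (p:ℤ) ∣ m1 * m2 := fun hd =>
        squarefree_aux hsq pp pd hd ⟨1, by ring⟩
      have hsq' : Squarefree (m1 * m3 * m2) := by
        rwa [show m1 * m3 * m2 = m1 * m2 * m3 by ring]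
      have hprim' : ∀ q : ℕ, q.Prime → ¬((q:ℤ) ∣ u ∧ (q:ℤ) ∣ w ∧ (q:ℤ) ∣ v) :=
        fun q qq hd => hprim q qq ⟨hd.1, hd.2.2, hd.2.1⟩
      have heqp' : u^2 = m1 * m3 * w^2 + m1 * m2 * v^2 := by linear_combination heqp
      exact (jacobi_eq_one_iff_isSquare pp hnd).mpr (forward_cond2 hsq' hprim' heqp' pp pd)
    · rintro ⟨hm2, hm3⟩
      apply hnz
      have c2 : ((m1 * m2 : ℤ) : ℚ) < 0 := by
        exact_mod_cast mul_neg_of_pos_of_neg hpos hm2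
      have c3 : ((m1 * m3 : ℤ) : ℚ) < 0 := by
        exact_mod_cast mul_neg_of_pos_of_neg hpos hm3
      have hy2 : ((m1 * m2 : ℤ) : ℚ) * y^2 ≤ 0 :=
        mul_nonpos_of_nonpos_of_nonneg c2.le (sq_nonneg y)
      have hz2 : ((m1 * m3 : ℤ) : ℚ) * z^2 ≤ 0 :=
        mul_nonpos_of_nonpos_of_nonneg c3.le (sq_nonneg z)
      have hx2 : x^2 = 0 := le_antisymm (by linarith [heq]) (sq_nonneg x)
      have hy0 : ((m1 * m2 : ℤ) : ℚ) * y^2 = 0 := by linarith [heq]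
      have hz0 : ((m1 * m3 : ℤ) : ℚ) * z^2 = 0 := by linarith [heq]
      refine ⟨pow_eq_zero_iff two_ne_zero |>.mp hx2, ?_, ?_⟩
      · exact pow_eq_zero_iff two_ne_zero |>.mp
          ((mul_eq_zero.mp hy0).resolve_left c2.ne)
      · exact pow_eq_zero_iff two_ne_zero |>.mp
          ((mul_eq_zero.mp hz0).resolve_left c3.ne)
    · refine ⟨(x : ℚ_[2]), (y : ℚ_[2]), (z : ℚ_[2]), ?_, ?_⟩
      · rintro ⟨e1, e2, e3⟩
        exact hnz ⟨by exact_mod_cast e1, by exact_mod_cast e2, by exact_mod_cast e3⟩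
      · have hcq := congrArg (fun q : ℚ => (q : ℚ_[2])) heq
        push_cast at hcq ⊢
        exact hcq
  · rintro ⟨c1, c2, c3, csign, -⟩
    have hb : (-m2 : ℤ) ≠ 0 := neg_ne_zero.mpr h2
    have hc : (-m3 : ℤ) ≠ 0 := neg_ne_zero.mpr h3
    have hsf' : Squarefree (m1 * -m2 * -m3) := by
      rwa [show m1 * -m2 * -m3 = m1 * m2 * m3 by ring]
    have H1 : ∀ p : ℕ, p.Prime → p ≠ 2 → (p:ℤ) ∣ m1 →
        IsSquare ((-(-m2 * -m3) : ℤ) : ZMod p) := by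
      intro p pp p2 pd
      have hnd : ¬ (p:ℤ) ∣ -(m2 * m3) := fun hd =>
        squarefree_aux hsq pp pd (dvd_neg.mp hd) ⟨1, by ring⟩
      have := (jacobi_eq_one_iff_isSquare pp hnd).mp (c1 p pp p2 pd)
      rwa [show (-(-m2 * -m3) : ℤ) = -(m2 * m3) by ring]
    have H2 : ∀ p : ℕ, p.Prime → p ≠ 2 → (p:ℤ) ∣ -m2 →
        IsSquare ((-(m1 * -m3) : ℤ) : ZMod p) := by
      intro p pp p2 pd
      have pd' : (p:ℤ) ∣ m2 := dvd_neg.mp pd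
      have hnd : ¬ (p:ℤ) ∣ m1 * m3 := fun hd =>
        squarefree_aux hsq pp pd' hd ⟨1, by ring⟩
      have := (jacobi_eq_one_iff_isSquare pp hnd).mp (c2 p pp p2 pd')
      rwa [show (-(m1 * -m3) : ℤ) = m1 * m3 by ring]
    have H3 : ∀ p : ℕ, p.Prime → p ≠ 2 → (p:ℤ) ∣ -m3 →
        IsSquare ((-(m1 * -m2) : ℤ) : ZMod p) := by
      intro p pp p2 pd
      have pd' : (p:ℤ) ∣ m3 := dvd_neg.mp pd
      have hnd : ¬ (p:ℤ) ∣ m1 * m2 := fun hd =>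
        squarefree_aux hsq pp pd' hd ⟨1, by ring⟩
      have := (jacobi_eq_one_iff_isSquare pp hnd).mp (c3 p pp p2 pd')
      rwa [show (-(m1 * -m2) : ℤ) = m1 * m2 by ring]
    have hsign : ¬(0 < (-m2 : ℤ) ∧ 0 < (-m3 : ℤ)) := fun ⟨hu, hv⟩ =>
      csign ⟨by linarith, by linarith⟩
    obtain ⟨x, y, z, hnz, heq⟩ := legendre_int hpos hb hc hsf' H1 H2 H3 hsign
    have intEq : (m1 * x)^2 = (m1 * m2) * y^2 + (m1 * m3) * z^2 := by
      linear_combination m1 * heq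
    refine ⟨((m1 * x : ℤ) : ℚ), ((y : ℤ) : ℚ), ((z : ℤ) : ℚ), ?_, by exact_mod_cast intEq⟩
    rintro ⟨e1, e2, e3⟩
    apply hnz
    have e1' : m1 * x = 0 := by exact_mod_cast e1
    exact ⟨(mul_eq_zero.mp e1').resolve_left h1, by exact_mod_cast e2, by exact_mod_cast e3⟩
end

section
/- Let m1, m2, m3 be nonzero integers with m1 > 0 and |m1·m2·m3| squarefree, and let p be an odd prime dividing m1. Then (m1, m2, m3) is ℚ_p-soluble, where ℚ_p is the field of p-adic numbers, if and only if the Legendre symbol (−m2·m3 / p) equals 1. -/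
open PadicInt

section aux
variable {p : ℕ} [Fact p.Prime]

lemma toZMod_eq_zero_iff_dvd' (x : ℤ_[p]) : toZMod x = 0 ↔ (p : ℤ_[p]) ∣ x := by
  rw [← RingHom.mem_ker, ker_toZMod, maximalIdeal_eq_span_p, Ideal.mem_span_singleton]

lemma norm_eq_one_of_toZMod_ne_zero {x : ℤ_[p]} (h : toZMod x ≠ 0) : ‖x‖ = 1 :=
  le_antisymm (norm_le_one x) (not_lt.mp fun hl =>
    h ((toZMod_eq_zero_iff_dvd' x).mpr ((norm_lt_one_iff_dvd x).mp hl)))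

lemma exists_sq_eq' (hodd : p ≠ 2) (c : ℤ_[p]) (hc : toZMod c ≠ 0)
    (hsq : IsSquare (toZMod c)) : ∃ s : ℤ_[p], s ^ 2 = c := by
  obtain ⟨t, ht⟩ := hsq
  have ht0 : t ≠ 0 := by rintro rfl; simp at ht; exact hc ht
  set a : ℤ_[p] := (t.val : ℤ_[p]) with ha_def
  have ha : toZMod a = t := by
    simp [ha_def, map_natCast, ZMod.natCast_val, ZMod.cast_id]
  set F : Polynomial ℤ_[p] := Polynomial.X ^ 2 - Polynomial.C c with hF
  have hFa : F.eval a = a ^ 2 - c := by simp [hF]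
  have hFa_lt : ‖F.eval a‖ < 1 := by
    rw [hFa, norm_lt_one_iff_dvd, ← toZMod_eq_zero_iff_dvd', map_sub, map_pow, ha, ht]
    ring
  have hda : F.derivative.eval a = 2 * a := by
    have : F.derivative = Polynomial.C 2 * Polynomial.X := by
      simp [hF]
      rw [one_add_one_eq_two]; exact (map_ofNat Polynomial.C 2).symm
    simp [this]
  have h2 : toZMod (2 : ℤ_[p]) ≠ 0 := by
    rw [show ((2 : ℤ_[p])) = ((2 : ℕ) : ℤ_[p]) by norm_num, map_natCast,
      Ne, ZMod.natCast_eq_zero_iff]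
    intro h
    exact hodd ((Nat.prime_dvd_prime_iff_eq (Fact.out) Nat.prime_two).mp h)
  have hna : ‖F.derivative.eval a‖ = 1 := by
    rw [hda, norm_mul, norm_eq_one_of_toZMod_ne_zero h2,
      norm_eq_one_of_toZMod_ne_zero (ha ▸ ht0), mul_one]
  have hnorm : ‖F.eval a‖ < ‖F.derivative.eval a‖ ^ 2 := by
    rw [hna]; simpa using hFa_lt
  obtain ⟨z, hz, -⟩ := hensels_lemma hnorm
  refine ⟨z, ?_⟩
  have : z ^ 2 - c = 0 := by simpa [hF] using hz
  exact sub_eq_zero.mp this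

end aux

theorem conic_local_solubility_p_dvd_m1 (m1 m2 m3 : ℤ) (h1 : m1 ≠ 0) (h2 : m2 ≠ 0)
    (h3 : m3 ≠ 0) (hpos : 0 < m1) (hsq : Squarefree (m1 * m2 * m3))
    (p : ℕ) [Fact p.Prime] (hodd : p ≠ 2) (hdvd : (p : ℤ) ∣ m1) :
    Soluble ℚ_[p] m1 m2 m3 ↔ jacobiSym (-(m2 * m3)) p = 1 := by
  have hp : p.Prime := Fact.out
  have hpint : Prime (p : ℤ) := Nat.prime_iff_prime_int.mp hp
  have hnotunit : ¬IsUnit (p : ℤ) := hpint.not_unit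
  -- p does not divide m2
  have hpm2 : ¬(p : ℤ) ∣ m2 := by
    intro h
    exact hnotunit (hsq (p : ℤ) (by
      have : (p : ℤ) * (p : ℤ) ∣ m1 * m2 := mul_dvd_mul hdvd h
      exact this.trans (Dvd.intro m3 rfl)))
  have hpm3 : ¬(p : ℤ) ∣ m3 := by
    intro h
    refine hnotunit (hsq (p : ℤ) ?_)
    have : (p : ℤ) * (p : ℤ) ∣ m1 * m3 := mul_dvd_mul hdvd h
    obtain ⟨k, hk⟩ := this
    exact ⟨k * m2, by linear_combination m2 * hk⟩
  obtain ⟨w, hw⟩ := hdvd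
  have hpw : ¬(p : ℤ) ∣ w := by
    intro h
    refine hnotunit (hsq (p : ℤ) ?_)
    obtain ⟨k, hk⟩ := h
    exact ⟨k * m2 * m3, by rw [hw, hk]; ring⟩
  have hm2z : ((m2 : ℤ) : ZMod p) ≠ 0 := by
    rw [Ne, ZMod.intCast_zmod_eq_zero_iff_dvd]; exact hpm2
  have hm3z : ((m3 : ℤ) : ZMod p) ≠ 0 := by
    rw [Ne, ZMod.intCast_zmod_eq_zero_iff_dvd]; exact hpm3
  have hwz : ((w : ℤ) : ZMod p) ≠ 0 := by
    rw [Ne, ZMod.intCast_zmod_eq_zero_iff_dvd]; exact hpw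
  have hne : ((-(m2 * m3) : ℤ) : ZMod p) ≠ 0 := by
    push_cast
    simp only [neg_ne_zero]
    exact mul_ne_zero hm2z hm3z
  constructor
  · rintro ⟨x, y, z, hnz, heq⟩
    -- pick the element of maximal norm
    obtain ⟨u, hux, huy, huz, humem⟩ :
        ∃ u : ℚ_[p], ‖x‖ ≤ ‖u‖ ∧ ‖y‖ ≤ ‖u‖ ∧ ‖z‖ ≤ ‖u‖ ∧ (u = x ∨ u = y ∨ u = z) := by
      rcases le_total ‖x‖ ‖y‖ with h1' | h1' <;> rcases le_total ‖y‖ ‖z‖ with h2' | h2' <;>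
        rcases le_total ‖x‖ ‖z‖ with h3' | h3'
      · exact ⟨z, h3', h2', le_refl _, Or.inr (Or.inr rfl)⟩
      · exact ⟨z, h1'.trans h2', h2', le_refl _, Or.inr (Or.inr rfl)⟩
      · exact ⟨y, h1', le_refl _, h2', Or.inr (Or.inl rfl)⟩
      · exact ⟨y, h1', le_refl _, h2', Or.inr (Or.inl rfl)⟩
      · exact ⟨z, h3', h2', le_refl _, Or.inr (Or.inr rfl)⟩
      · exact ⟨x, le_refl _, h1', h3', Or.inl rfl⟩
      · exact ⟨x, le_refl _, h1', h2'.trans h1', Or.inl rfl⟩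
      · exact ⟨x, le_refl _, h1', h3', Or.inl rfl⟩
    have hu0 : u ≠ 0 := by
      rintro rfl
      simp only [norm_zero] at hux huy huz
      exact hnz ⟨norm_le_zero_iff.mp hux, norm_le_zero_iff.mp huy, norm_le_zero_iff.mp huz⟩
    have hupos : (0 : ℝ) < ‖u‖ := norm_pos_iff.mpr hu0
    have hX : ‖x / u‖ ≤ 1 := by
      rw [norm_div]; exact div_le_one_of_le₀ hux (norm_nonneg _)
    have hY : ‖y / u‖ ≤ 1 := by
      rw [norm_div]; exact div_le_one_of_le₀ huy (norm_nonneg _)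
    have hZ : ‖z / u‖ ≤ 1 := by
      rw [norm_div]; exact div_le_one_of_le₀ huz (norm_nonneg _)
    set a : ℤ_[p] := ⟨x / u, hX⟩ with ha_def
    set b : ℤ_[p] := ⟨y / u, hY⟩ with hb_def
    set c : ℤ_[p] := ⟨z / u, hZ⟩ with hc_def
    have hone : ‖a‖ = 1 ∨ ‖b‖ = 1 ∨ ‖c‖ = 1 := by
      rcases humem with rfl | rfl | rfl
      · left; show ‖u / u‖ = 1; rw [div_self hu0, norm_one]
      · right; left; show ‖u / u‖ = 1; rw [div_self hu0, norm_one]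
      · right; right; show ‖u / u‖ = 1; rw [div_self hu0, norm_one]
    have heqZ : a ^ 2 = ((m1 * m2 : ℤ) : ℤ_[p]) * b ^ 2 + ((m1 * m3 : ℤ) : ℤ_[p]) * c ^ 2 := by
      apply Subtype.coe_injective
      push_cast
      show (x / u) ^ 2 = _ * (y / u) ^ 2 + _ * (z / u) ^ 2
      field_simp
      push_cast at heq ⊢
      linear_combination heq
    -- rewrite m1 = p * w
    have hcast : ∀ m : ℤ, ((m1 * m : ℤ) : ℤ_[p]) = (p : ℤ_[p]) * ((w * m : ℤ) : ℤ_[p]) := by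
      intro m; push_cast [hw]; ring
    set D : ℤ_[p] := ((w * m2 : ℤ) : ℤ_[p]) * b ^ 2 + ((w * m3 : ℤ) : ℤ_[p]) * c ^ 2 with hD_def
    have heqD : a ^ 2 = (p : ℤ_[p]) * D := by
      rw [heqZ, hcast m2, hcast m3, hD_def]; ring
    have hpa : (p : ℤ_[p]) ∣ a := by
      have : (p : ℤ_[p]) ∣ a ^ 2 := ⟨D, heqD⟩
      exact (PadicInt.prime_p.dvd_of_dvd_pow this)
    obtain ⟨a1, ha1⟩ := hpa
    have hpD : (p : ℤ_[p]) ∣ D := by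
      have hpne : (p : ℤ_[p]) ≠ 0 := PadicInt.prime_p.ne_zero
      have : (p : ℤ_[p]) * D = (p : ℤ_[p]) * ((p : ℤ_[p]) * a1 ^ 2) := by
        rw [← heqD, ha1]; ring
      have hDeq : D = (p : ℤ_[p]) * a1 ^ 2 := mul_left_cancel₀ hpne this
      exact ⟨a1 ^ 2, hDeq⟩
    -- reduce mod p
    have hmod : ((m2 : ℤ) : ZMod p) * (toZMod b) ^ 2 + ((m3 : ℤ) : ZMod p) * (toZMod c) ^ 2
        = 0 := by
      have hDz : toZMod D = 0 := (toZMod_eq_zero_iff_dvd' D).mpr hpD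
      rw [hD_def] at hDz
      simp only [map_add, map_mul, map_pow, map_intCast] at hDz
      push_cast at hDz
      have : ((w : ℤ) : ZMod p) * (((m2 : ℤ) : ZMod p) * (toZMod b) ^ 2
          + ((m3 : ℤ) : ZMod p) * (toZMod c) ^ 2) = 0 := by linear_combination hDz
      exact (mul_eq_zero.mp this).resolve_left hwz
    -- b is a unit mod p
    have hbz : toZMod b ≠ 0 := by
      intro hb0
      have hc0 : toZMod c = 0 := by
        rw [hb0] at hmod
        have hmc : ((m3 : ℤ) : ZMod p) * (toZMod c) ^ 2 = 0 := by linear_combination hmod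
        rcases mul_eq_zero.mp hmc with h | h
        · exact absurd h hm3z
        · exact pow_eq_zero_iff (two_ne_zero) |>.mp h
      -- then all of a, b, c have norm < 1, contradicting hone
      have hna : ‖a‖ < 1 := by
        rw [PadicInt.norm_lt_one_iff_dvd]; exact ⟨a1, ha1⟩
      have hnb : ‖b‖ < 1 := by
        rw [PadicInt.norm_lt_one_iff_dvd, ← toZMod_eq_zero_iff_dvd']; exact hb0
      have hnc : ‖c‖ < 1 := by
        rw [PadicInt.norm_lt_one_iff_dvd, ← toZMod_eq_zero_iff_dvd']; exact hc0
      rcases hone with h | h | h <;> linarith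
    -- conclude -(m2*m3) is a square mod p
    have hsqz : IsSquare ((-(m2 * m3) : ℤ) : ZMod p) := by
      refine ⟨((m3 : ℤ) : ZMod p) * toZMod c / toZMod b, ?_⟩
      have hb2 : (toZMod b) ^ 2 ≠ 0 := pow_ne_zero _ hbz
      field_simp
      push_cast
      linear_combination (-((m3 : ℤ) : ZMod p)) * hmod
    have hleg : legendreSym p (-(m2 * m3)) = 1 := (legendreSym.eq_one_iff p hne).mpr hsqz
    rw [← jacobiSym.legendreSym.to_jacobiSym]; exact hleg
  · intro hj
    have hleg : legendreSym p (-(m2 * m3)) = 1 := by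
      rw [jacobiSym.legendreSym.to_jacobiSym]; exact hj
    have hsqz : IsSquare ((-(m2 * m3) : ℤ) : ZMod p) := (legendreSym.eq_one_iff p hne).mp hleg
    set c : ℤ_[p] := ((-(m2 * m3) : ℤ) : ℤ_[p]) with hc_def
    have hcz : toZMod c = ((-(m2 * m3) : ℤ) : ZMod p) := by rw [hc_def, map_intCast]
    obtain ⟨s, hs⟩ := exists_sq_eq' hodd c (by rw [hcz]; exact hne) (by rw [hcz]; exact hsqz)
    refine ⟨0, (s : ℚ_[p]), ((m2 : ℤ) : ℚ_[p]), ?_, ?_⟩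
    · intro h
      exact (Int.cast_ne_zero.mpr h2 : ((m2 : ℤ) : ℚ_[p]) ≠ 0) h.2.2
    · have hs' : ((s : ℚ_[p])) ^ 2 = ((-(m2 * m3) : ℤ) : ℚ_[p]) := by
        have := congrArg (fun t : ℤ_[p] => (t : ℚ_[p])) hs
        simpa [hc_def] using this
      rw [hs']
      push_cast
      ring
end

section
/- Let m1, m2, m3 be nonzero integers with m1 > 0 and |m1·m2·m3| squarefree, and let p be an odd prime dividing m2. Then (m1, m2, m3) is ℚ_p-soluble, where ℚ_p is the field of p-adic numbers, if and only if the Legendre symbol (m1·m3 / p) equals 1. -/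
lemma toZMod_eq_zero_iff {p : ℕ} [Fact p.Prime] (x : ℤ_[p]) :
    PadicInt.toZMod x = 0 ↔ ‖x‖ < 1 := by
  rw [← RingHom.mem_ker, PadicInt.ker_toZMod, IsLocalRing.mem_maximalIdeal, mem_nonunits_iff,
    PadicInt.not_isUnit_iff]

lemma toZMod_ne_zero_of_norm_one {p : ℕ} [Fact p.Prime] {x : ℤ_[p]} (h : ‖x‖ = 1) :
    PadicInt.toZMod x ≠ 0 := by
  intro h'
  rw [toZMod_eq_zero_iff, h] at h'
  exact lt_irrefl 1 h'

lemma normalize_aux {p : ℕ} [Fact p.Prime] (A B x y z t : ℚ_[p]) (ht : t ≠ 0)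
    (hx : ‖x‖ ≤ ‖t‖) (hy : ‖y‖ ≤ ‖t‖) (hz : ‖z‖ ≤ ‖t‖)
    (hmem : t = x ∨ t = y ∨ t = z)
    (heq : x ^ 2 = A * y ^ 2 + B * z ^ 2) :
    ∃ a b c : ℤ_[p], (‖a‖ = 1 ∨ ‖b‖ = 1 ∨ ‖c‖ = 1) ∧
      (a : ℚ_[p]) ^ 2 = A * (b : ℚ_[p]) ^ 2 + B * (c : ℚ_[p]) ^ 2 := by
  have htn : (0 : ℝ) < ‖t‖ := norm_pos_iff.mpr ht
  refine ⟨⟨x / t, ?_⟩, ⟨y / t, ?_⟩, ⟨z / t, ?_⟩, ?_, ?_⟩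
  · rw [norm_div]; exact div_le_one_of_le₀ hx (le_of_lt htn)
  · rw [norm_div]; exact div_le_one_of_le₀ hy (le_of_lt htn)
  · rw [norm_div]; exact div_le_one_of_le₀ hz (le_of_lt htn)
  · rcases hmem with h | h | h
    · left; show ‖x / t‖ = 1; rw [← h, div_self ht, norm_one]
    · right; left; show ‖y / t‖ = 1; rw [← h, div_self ht, norm_one]
    · right; right; show ‖z / t‖ = 1; rw [← h, div_self ht, norm_one]
  · show (x / t) ^ 2 = A * (y / t) ^ 2 + B * (z / t) ^ 2
    field_simp
    linear_combination heq

theorem conic_local_solubility_p_dvd_m2 (m1 m2 m3 : ℤ) (h1 : m1 ≠ 0) (h2 : m2 ≠ 0)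
    (h3 : m3 ≠ 0) (hpos : 0 < m1) (hsq : Squarefree (m1 * m2 * m3))
    (p : ℕ) [Fact p.Prime] (hodd : p ≠ 2) (hdvd : (p : ℤ) ∣ m2) :
    Soluble ℚ_[p] m1 m2 m3 ↔ jacobiSym (m1 * m3) p = 1 := by
  have hp : p.Prime := Fact.out
  have hp2 : 2 ≤ p := hp.two_le
  -- p*p does not divide m1*m2*m3
  have hpp : ¬ ((p : ℤ) * (p : ℤ)) ∣ (m1 * m2 * m3) := by
    intro h
    have := hsq (p : ℤ) h
    rw [Int.isUnit_iff] at this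
    omega
  -- p does not divide m1*m3
  have hnd : ¬ (p : ℤ) ∣ m1 * m3 := by
    intro h
    refine hpp ?_
    have := mul_dvd_mul h hdvd
    have heq : (m1 * m3) * m2 = m1 * m2 * m3 := by ring
    rwa [heq] at this
  obtain ⟨k, hk⟩ := hdvd
  have hndw : ¬ (p : ℤ) ∣ m1 * k := by
    intro h
    obtain ⟨j, hj⟩ := h
    refine hpp ⟨j * m3, ?_⟩
    rw [hk]
    linear_combination ((p : ℤ) * m3) * hj
  have hm3ne : ((m1 * m3 : ℤ) : ZMod p) ≠ 0 := by
    rw [Ne, ZMod.intCast_zmod_eq_zero_iff_dvd]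
    exact hnd
  constructor
  · rintro ⟨x, y, z, hnt, heq⟩
    -- find the coordinate of maximal norm
    have hmax : ∃ t : ℚ_[p], (t = x ∨ t = y ∨ t = z) ∧ ‖x‖ ≤ ‖t‖ ∧ ‖y‖ ≤ ‖t‖ ∧ ‖z‖ ≤ ‖t‖ := by
      rcases le_total ‖x‖ ‖y‖ with h1' | h1'
      · rcases le_total ‖y‖ ‖z‖ with h2' | h2'
        · exact ⟨z, Or.inr (Or.inr rfl), le_trans h1' h2', h2', le_rfl⟩
        · exact ⟨y, Or.inr (Or.inl rfl), h1', le_rfl, h2'⟩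
      · rcases le_total ‖x‖ ‖z‖ with h2' | h2'
        · exact ⟨z, Or.inr (Or.inr rfl), h2', le_trans h1' h2', le_rfl⟩
        · exact ⟨x, Or.inl rfl, le_rfl, h1', h2'⟩
    obtain ⟨t, hmem, hx, hy, hz⟩ := hmax
    have ht : t ≠ 0 := by
      rintro rfl
      simp only [norm_zero, norm_le_zero_iff] at hx hy hz
      exact hnt ⟨hx, hy, hz⟩
    obtain ⟨a, b, c, hone, heq'⟩ := normalize_aux _ _ x y z t ht hx hy hz hmem heq
    -- transfer equation into ℤ_[p]
    have heqZ : a ^ 2 = ((m1 * m2 : ℤ) : ℤ_[p]) * b ^ 2 + ((m1 * m3 : ℤ) : ℤ_[p]) * c ^ 2 := by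
      have h' := heq'
      push_cast at h'
      have h'' : ((a ^ 2 : ℤ_[p]) : ℚ_[p]) =
          ((((m1 * m2 : ℤ) : ℤ_[p]) * b ^ 2 + ((m1 * m3 : ℤ) : ℤ_[p]) * c ^ 2 : ℤ_[p]) : ℚ_[p]) := by
        push_cast
        exact h'
      exact Subtype.coe_injective h''
    have hzm : (PadicInt.toZMod a) ^ 2 =
        ((m1 * m2 : ℤ) : ZMod p) * (PadicInt.toZMod b) ^ 2 +
        ((m1 * m3 : ℤ) : ZMod p) * (PadicInt.toZMod c) ^ 2 := by
      simpa only [map_add, map_mul, map_pow, map_intCast] using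
        congrArg (PadicInt.toZMod) heqZ
    have hm12zero : ((m1 * m2 : ℤ) : ZMod p) = 0 := by
      rw [ZMod.intCast_zmod_eq_zero_iff_dvd]
      exact ⟨m1 * k, by rw [hk]; ring⟩
    rw [hm12zero, zero_mul, zero_add] at hzm
    by_cases hc : PadicInt.toZMod c = 0
    · -- degenerate case: derive a contradiction
      exfalso
      have ha : PadicInt.toZMod a = 0 := by
        have : (PadicInt.toZMod a) ^ 2 = 0 := by rw [hzm, hc]; ring
        exact pow_eq_zero_iff (by norm_num) |>.mp this
      have hb : PadicInt.toZMod b ≠ 0 := by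
        rcases hone with h | h | h
        · exact absurd (toZMod_ne_zero_of_norm_one h) (not_not_intro ha)
        · exact toZMod_ne_zero_of_norm_one h
        · exact absurd (toZMod_ne_zero_of_norm_one h) (not_not_intro hc)
      -- p divides a and c
      have hpa : (p : ℤ_[p]) ∣ a := by
        rw [← PadicInt.norm_lt_one_iff_dvd, ← toZMod_eq_zero_iff]; exact ha
      have hpc : (p : ℤ_[p]) ∣ c := by
        rw [← PadicInt.norm_lt_one_iff_dvd, ← toZMod_eq_zero_iff]; exact hc
      obtain ⟨a1, ha1⟩ := hpa
      obtain ⟨c1, hc1⟩ := hpc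
      have hcast : ((m1 * m2 : ℤ) : ℤ_[p]) = (p : ℤ_[p]) * ((m1 * k : ℤ) : ℤ_[p]) := by
        rw [hk]; push_cast; ring
      rw [ha1, hc1, hcast] at heqZ
      have hp0 : (p : ℤ_[p]) ≠ 0 := by
        exact_mod_cast Nat.cast_ne_zero.mpr hp.ne_zero
      have key : ((m1 * k : ℤ) : ℤ_[p]) * b ^ 2 =
          (p : ℤ_[p]) * (a1 ^ 2 - ((m1 * m3 : ℤ) : ℤ_[p]) * c1 ^ 2) := by
        apply mul_left_cancel₀ hp0
        linear_combination -heqZ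
      have keyz : ((m1 * k : ℤ) : ZMod p) * (PadicInt.toZMod b) ^ 2 = 0 := by
        have := congrArg (PadicInt.toZMod) key
        simp only [map_add, map_mul, map_pow, map_intCast, map_sub, map_natCast,
          ZMod.natCast_self, zero_mul] at this
        exact this
      have hwne : ((m1 * k : ℤ) : ZMod p) ≠ 0 := by
        rw [Ne, ZMod.intCast_zmod_eq_zero_iff_dvd]
        exact hndw
      exact (mul_ne_zero hwne (pow_ne_zero 2 hb)) keyz
    · -- (m1*m3) is a square mod p
      have hM : ((m1 * m3 : ℤ) : ZMod p) = (PadicInt.toZMod a * (PadicInt.toZMod c)⁻¹) ^ 2 := by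
        push_cast at hzm ⊢
        field_simp
        linear_combination -hzm
      rw [← jacobiSym.legendreSym.to_jacobiSym]
      refine (legendreSym.eq_one_iff p hm3ne).mpr ?_
      exact ⟨PadicInt.toZMod a * (PadicInt.toZMod c)⁻¹, by rw [hM]; ring⟩
  · intro hleg
    rw [← jacobiSym.legendreSym.to_jacobiSym] at hleg
    obtain ⟨s, hs⟩ := (legendreSym.eq_one_iff p hm3ne).mp hleg
    have hsne : s ≠ 0 := by
      intro h
      rw [h, mul_zero] at hs
      exact hm3ne hs
    -- lift s to ℤ_[p]
    set a₀ : ℤ_[p] := (s.val : ℤ_[p]) with ha₀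
    have hta : PadicInt.toZMod a₀ = s := by
      rw [ha₀, map_natCast, ZMod.natCast_val, ZMod.cast_id]
    -- Hensel's lemma for X² - (m1*m3)
    set F : Polynomial ℤ_[p] :=
      Polynomial.X ^ 2 - Polynomial.C ((m1 * m3 : ℤ) : ℤ_[p]) with hF
    have hFeval : ∀ u : ℤ_[p], F.eval u = u ^ 2 - ((m1 * m3 : ℤ) : ℤ_[p]) := by
      intro u; simp [hF]
    have hFder : ∀ u : ℤ_[p], F.derivative.eval u = 2 * u := by
      intro u
      simp [hF, Polynomial.derivative_sub, Polynomial.derivative_X_pow]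
      exact Or.inl one_add_one_eq_two
    have h2s : (2 : ZMod p) * s ≠ 0 := by
      refine mul_ne_zero ?_ hsne
      intro h
      have : ((2 : ℤ) : ZMod p) = 0 := by exact_mod_cast h
      rw [ZMod.intCast_zmod_eq_zero_iff_dvd] at this
      have : (p : ℤ) ∣ ((2 : ℕ) : ℤ) := by exact_mod_cast this
      rw [Int.natCast_dvd_natCast] at this
      exact hodd ((Nat.prime_dvd_prime_iff_eq hp Nat.prime_two).mp this)
    have hdnorm : ‖F.derivative.eval a₀‖ = 1 := by
      rw [hFder]
      have hne : PadicInt.toZMod (2 * a₀) ≠ 0 := by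
        rw [map_mul, hta, map_ofNat]
        exact h2s
      have hle : ‖(2 : ℤ_[p]) * a₀‖ ≤ 1 := PadicInt.norm_le_one _
      rcases lt_or_eq_of_le hle with h | h
      · exact absurd ((toZMod_eq_zero_iff _).mpr h) hne
      · exact h
    have henorm : ‖F.eval a₀‖ < 1 := by
      rw [hFeval, ← toZMod_eq_zero_iff]
      rw [map_sub, map_pow, map_intCast, hta, hs, sq]
      exact sub_self _
    have hnorm : ‖F.eval a₀‖ < ‖F.derivative.eval a₀‖ ^ 2 := by
      rw [hdnorm]; simpa using henorm
    obtain ⟨w, hw, -⟩ := hensels_lemma hnorm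
    rw [Polynomial.coe_aeval_eq_eval, hFeval, sub_eq_zero] at hw
    refine ⟨(w : ℚ_[p]), 0, 1, ?_, ?_⟩
    · simp
    · have hw' : ((w : ℚ_[p])) ^ 2 = ((m1 * m3 : ℤ) : ℚ_[p]) := by
        exact_mod_cast congrArg (fun u : ℤ_[p] => (u : ℚ_[p])) hw
      push_cast at hw' ⊢
      linear_combination hw'
end

section
/- Let m1, m2, m3 be nonzero integers with m1 > 0 and |m1·m2·m3| squarefree, and let p be an odd prime dividing m3. Then (m1, m2, m3) is ℚ_p-soluble, where ℚ_p is the field of p-adic numbers, if and only if the Legendre symbol (m1·m2 / p) equals 1. -/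
section Aux

variable {p : ℕ} [Fact p.Prime]

lemma int_dvd_padic {k : ℤ} : (p : ℤ_[p]) ∣ (k : ℤ_[p]) ↔ (p : ℤ) ∣ k := by
  rw [← PadicInt.norm_lt_one_iff_dvd, PadicInt.norm_int_lt_one_iff_dvd]

lemma toZMod_eq_zero_iff_s10 {z : ℤ_[p]} :
    PadicInt.toZMod z = 0 ↔ (p : ℤ_[p]) ∣ z := by
  rw [← RingHom.mem_ker, PadicInt.ker_toZMod, PadicInt.maximalIdeal_eq_span_p,
    Ideal.mem_span_singleton]

lemma key_forward (A b : ℤ) (hA : ¬ (p : ℤ) ∣ A) (hb : ¬ (p : ℤ) ∣ b)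
    (X Y Z : ℤ_[p]) (hu : ¬((p : ℤ_[p]) ∣ X ∧ (p : ℤ_[p]) ∣ Y ∧ (p : ℤ_[p]) ∣ Z))
    (heq : X ^ 2 = (A : ℤ_[p]) * Y ^ 2 + (p : ℤ_[p]) * (b : ℤ_[p]) * Z ^ 2) :
    IsSquare ((A : ZMod p)) := by
  have hprime : Prime (p : ℤ_[p]) := PadicInt.prime_p
  have hp0 : (p : ℤ_[p]) ≠ 0 := hprime.ne_zero
  have hY : ¬ (p : ℤ_[p]) ∣ Y := by
    intro hY
    have hX : (p : ℤ_[p]) ∣ X := by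
      have h2 : (p : ℤ_[p]) ∣ X ^ 2 := by
        rw [heq]
        exact dvd_add (Dvd.dvd.mul_left (dvd_pow hY two_ne_zero) _) ⟨b * Z ^ 2, by ring⟩
      exact hprime.dvd_of_dvd_pow h2
    have hZ : (p : ℤ_[p]) ∣ Z := by
      have h2 : (p : ℤ_[p]) ^ 2 ∣ (p : ℤ_[p]) * (b : ℤ_[p]) * Z ^ 2 := by
        have hrw : (p : ℤ_[p]) * (b : ℤ_[p]) * Z ^ 2 = X ^ 2 - (A : ℤ_[p]) * Y ^ 2 := by
          rw [heq]; ring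
        rw [hrw]
        exact dvd_sub (pow_dvd_pow_of_dvd hX 2)
          (Dvd.dvd.mul_left (pow_dvd_pow_of_dvd hY 2) _)
      obtain ⟨c, hc⟩ := h2
      have hbz : (p : ℤ_[p]) ∣ (b : ℤ_[p]) * Z ^ 2 := by
        refine ⟨c, mul_left_cancel₀ hp0 ?_⟩
        calc (p : ℤ_[p]) * ((b : ℤ_[p]) * Z ^ 2) = (p : ℤ_[p]) * (b : ℤ_[p]) * Z ^ 2 := by ring
          _ = (p : ℤ_[p]) ^ 2 * c := hc
          _ = (p : ℤ_[p]) * ((p : ℤ_[p]) * c) := by ring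
      have hz2 : (p : ℤ_[p]) ∣ Z ^ 2 :=
        (hprime.dvd_mul.mp hbz).resolve_left (fun h => hb (int_dvd_padic.mp h))
      exact hprime.dvd_of_dvd_pow hz2
    exact hu ⟨hX, hY, hZ⟩
  have hφ := congrArg (PadicInt.toZMod (p := p)) heq
  simp only [map_add, map_mul, map_pow, map_intCast, map_natCast, CharP.cast_eq_zero,
    zero_mul, add_zero] at hφ
  have hY0 : PadicInt.toZMod Y ≠ 0 := fun h => hY (toZMod_eq_zero_iff_s10.mp h)
  refine ⟨PadicInt.toZMod X * (PadicInt.toZMod Y)⁻¹, ?_⟩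
  field_simp
  linear_combination -hφ

lemma scale (A B : ℤ) (x y z : ℚ_[p]) (hne : ¬(x = 0 ∧ y = 0 ∧ z = 0))
    (heq : x ^ 2 = (A : ℚ_[p]) * y ^ 2 + (B : ℚ_[p]) * z ^ 2) :
    ∃ X Y Z : ℤ_[p], ¬((p : ℤ_[p]) ∣ X ∧ (p : ℤ_[p]) ∣ Y ∧ (p : ℤ_[p]) ∣ Z) ∧
      X ^ 2 = (A : ℤ_[p]) * Y ^ 2 + (B : ℤ_[p]) * Z ^ 2 := by
  set M := max ‖x‖ (max ‖y‖ ‖z‖) with hM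
  have hMpos : 0 < M := by
    by_contra h
    push_neg at h
    exact hne ⟨norm_le_zero_iff.mp ((le_max_left _ _).trans h),
      norm_le_zero_iff.mp (((le_max_left _ _).trans (le_max_right _ _)).trans h),
      norm_le_zero_iff.mp (((le_max_right _ _).trans (le_max_right _ _)).trans h)⟩
  obtain ⟨w, hw_cases, hw_norm⟩ : ∃ w, (w = x ∨ w = y ∨ w = z) ∧ ‖w‖ = M := by
    rcases max_cases ‖y‖ ‖z‖ with ⟨h1, _⟩ | ⟨h1, _⟩ <;>
      rcases max_cases ‖x‖ (max ‖y‖ ‖z‖) with ⟨h2, _⟩ | ⟨h2, _⟩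
    · exact ⟨x, Or.inl rfl, h2.symm⟩
    · exact ⟨y, Or.inr (Or.inl rfl), by rw [hM, h2, h1]⟩
    · exact ⟨x, Or.inl rfl, h2.symm⟩
    · exact ⟨z, Or.inr (Or.inr rfl), by rw [hM, h2, h1]⟩
  have hw0 : w ≠ 0 := by
    intro h; rw [h, norm_zero] at hw_norm; exact absurd hw_norm.symm (ne_of_gt hMpos)
  have hxw : ‖x / w‖ ≤ 1 := by
    rw [norm_div, hw_norm]; exact div_le_one_of_le₀ (le_max_left _ _) hMpos.le
  have hyw : ‖y / w‖ ≤ 1 := by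
    rw [norm_div, hw_norm]
    exact div_le_one_of_le₀ ((le_max_left _ _).trans (le_max_right _ _)) hMpos.le
  have hzw : ‖z / w‖ ≤ 1 := by
    rw [norm_div, hw_norm]
    exact div_le_one_of_le₀ ((le_max_right _ _).trans (le_max_right _ _)) hMpos.le
  refine ⟨⟨x / w, hxw⟩, ⟨y / w, hyw⟩, ⟨z / w, hzw⟩, ?_, ?_⟩
  · rintro ⟨hX, hY, hZ⟩
    rcases hw_cases with h | h | h
    · have hlt : ‖x / w‖ < 1 := (PadicInt.norm_lt_one_iff_dvd _).mpr hX
      rw [h, div_self (h ▸ hw0), norm_one] at hlt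
      exact lt_irrefl _ hlt
    · have hlt : ‖y / w‖ < 1 := (PadicInt.norm_lt_one_iff_dvd _).mpr hY
      rw [h, div_self (h ▸ hw0), norm_one] at hlt
      exact lt_irrefl _ hlt
    · have hlt : ‖z / w‖ < 1 := (PadicInt.norm_lt_one_iff_dvd _).mpr hZ
      rw [h, div_self (h ▸ hw0), norm_one] at hlt
      exact lt_irrefl _ hlt
  · apply Subtype.ext
    push_cast
    show (x / w) ^ 2 = (A : ℚ_[p]) * (y / w) ^ 2 + (B : ℚ_[p]) * (z / w) ^ 2
    rw [div_pow, div_pow, div_pow, heq]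
    ring

end Aux

theorem conic_local_solubility_p_dvd_m3 (m1 m2 m3 : ℤ) (h1 : m1 ≠ 0) (h2 : m2 ≠ 0)
    (h3 : m3 ≠ 0) (hpos : 0 < m1) (hsq : Squarefree (m1 * m2 * m3))
    (p : ℕ) [Fact p.Prime] (hodd : p ≠ 2) (hdvd : (p : ℤ) ∣ m3) :
    Soluble ℚ_[p] m1 m2 m3 ↔ jacobiSym (m1 * m2) p = 1 := by
  have hp : p.Prime := Fact.out
  have hpz : Prime (p : ℤ) := Nat.prime_iff_prime_int.mp hp
  have hA : ¬ (p : ℤ) ∣ m1 * m2 := by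
    intro h
    exact hpz.not_unit (hsq (p : ℤ) (mul_dvd_mul h hdvd))
  obtain ⟨m3', hm3'⟩ := hdvd
  have hb : ¬ (p : ℤ) ∣ m1 * m3' := by
    intro h
    obtain ⟨c, hc⟩ := h
    apply hpz.not_unit
    apply hsq (p : ℤ)
    refine ⟨m2 * c, ?_⟩
    rw [hm3']
    linear_combination (p : ℤ) * m2 * hc
  have hA0 : ((m1 * m2 : ℤ) : ZMod p) ≠ 0 := by
    rwa [Ne, ZMod.intCast_zmod_eq_zero_iff_dvd]
  rw [← jacobiSym.legendreSym.to_jacobiSym, legendreSym.eq_one_iff p hA0]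
  constructor
  · rintro ⟨x, y, z, hne, heq⟩
    obtain ⟨X, Y, Z, hu, hEQ⟩ := scale (m1 * m2) (m1 * m3) x y z hne heq
    refine key_forward (m1 * m2) (m1 * m3') hA hb X Y Z hu ?_
    rw [hEQ, hm3']
    push_cast
    ring
  · rintro ⟨r, hr⟩
    push_cast at hr
    obtain ⟨n, hnr⟩ : ∃ n : ℤ, ((n : ℤ) : ZMod p) = r :=
      ⟨(r.val : ℤ), by simp [ZMod.natCast_val, ZMod.cast_id]⟩
    have hdiv : (p : ℤ) ∣ n ^ 2 - m1 * m2 := by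
      rw [← ZMod.intCast_zmod_eq_zero_iff_dvd]
      push_cast
      rw [hnr]
      linear_combination -hr
    have hpn : ¬ (p : ℤ) ∣ n := by
      intro h
      apply hA0
      have : ((n : ℤ) : ZMod p) = 0 := (ZMod.intCast_zmod_eq_zero_iff_dvd n p).mpr h
      push_cast
      rw [hr, ← hnr, this, mul_zero]
    have hp2n : ¬ (p : ℤ) ∣ 2 * n := by
      intro h
      rcases hpz.dvd_mul.mp h with h | h
      · have : p ∣ 2 := by exact_mod_cast h
        exact hodd ((Nat.prime_dvd_prime_iff_eq hp Nat.prime_two).mp this)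
      · exact hpn h
    have hnorm : ‖(Polynomial.X ^ 2 - Polynomial.C ((m1 * m2 : ℤ) : ℤ_[p])).eval (n : ℤ_[p])‖ <
        ‖(Polynomial.derivative
            (Polynomial.X ^ 2 - Polynomial.C ((m1 * m2 : ℤ) : ℤ_[p]))).eval (n : ℤ_[p])‖ ^ 2 := by
      have hFeval : (Polynomial.X ^ 2 - Polynomial.C ((m1 * m2 : ℤ) : ℤ_[p])).eval (n : ℤ_[p]) =
          ((n ^ 2 - m1 * m2 : ℤ) : ℤ_[p]) := by
        simp only [Polynomial.eval_sub, Polynomial.eval_pow, Polynomial.eval_X, Polynomial.eval_C]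
        push_cast
        ring
      have hFderiv : (Polynomial.derivative
          (Polynomial.X ^ 2 - Polynomial.C ((m1 * m2 : ℤ) : ℤ_[p]))).eval (n : ℤ_[p]) =
          ((2 * n : ℤ) : ℤ_[p]) := by
        simp only [Polynomial.derivative_sub, Polynomial.derivative_C, Polynomial.derivative_X_pow,
          sub_zero, Polynomial.eval_mul, Polynomial.eval_pow, Polynomial.eval_X,
          Polynomial.eval_C, Polynomial.eval_natCast]
        push_cast
        ring
      rw [hFeval, hFderiv]
      have hlt : ‖((n ^ 2 - m1 * m2 : ℤ) : ℤ_[p])‖ < 1 :=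
        (PadicInt.norm_int_lt_one_iff_dvd _).mpr hdiv
      have hone : ‖((2 * n : ℤ) : ℤ_[p])‖ = 1 := by
        refine le_antisymm (PadicInt.norm_le_one _) ?_
        by_contra h
        push_neg at h
        exact hp2n ((PadicInt.norm_int_lt_one_iff_dvd _).mp h)
      rw [hone, one_pow]
      exact hlt
    obtain ⟨s, hs, -⟩ := hensels_lemma hnorm
    have hs2 : s ^ 2 = ((m1 * m2 : ℤ) : ℤ_[p]) := by
      simp only [Polynomial.eval_sub, Polynomial.eval_pow, Polynomial.eval_X, Polynomial.eval_C,
        Polynomial.aeval_sub, Polynomial.aeval_X_pow, Polynomial.aeval_C, Algebra.algebraMap_self,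
        RingHom.id_apply, sub_eq_zero] at hs
      exact hs
    refine ⟨(s : ℚ_[p]), 1, 0, ?_, ?_⟩
    · rintro ⟨-, h, -⟩; exact one_ne_zero h
    · have hcast : ((s : ℚ_[p])) ^ 2 = ((m1 * m2 : ℤ) : ℚ_[p]) := by
        rw [← PadicInt.coe_intCast, ← hs2]
        push_cast
        ring
      rw [hcast]
      ring
end

section
/- Let m1, m2, m3 be nonzero integers and let p be an odd prime with p ∤ m1·m2·m3. Then (m1, m2, m3) is ℚ_p-soluble, where ℚ_p is the field of p-adic numbers. -/
theorem conic_local_solubility_unramified (m1 m2 m3 : ℤ) (h1 : m1 ≠ 0) (h2 : m2 ≠ 0)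
    (h3 : m3 ≠ 0) (p : ℕ) [Fact p.Prime] (hodd : p ≠ 2) (hndvd : ¬((p : ℤ) ∣ m1 * m2 * m3)) :
    Soluble ℚ_[p] m1 m2 m3 := by
  have hp : p.Prime := Fact.out
  have hpI : Prime (p : ℤ) := Nat.prime_iff_prime_int.mp hp
  -- the coefficients are nonzero mod p
  have hab : ¬ (p : ℤ) ∣ m1 * m2 ∧ ¬ (p : ℤ) ∣ m1 * m3 := by
    constructor <;> intro hd <;> apply hndvd
    · exact Dvd.dvd.mul_right hd m3
    · rcases hpI.dvd_mul.mp hd with h | h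
      · exact Dvd.dvd.mul_right (Dvd.dvd.mul_right h m2) m3
      · exact Dvd.dvd.mul_left h (m1 * m2)
  have ha : ((m1 * m2 : ℤ) : ZMod p) ≠ 0 := by
    rw [Ne, ZMod.intCast_zmod_eq_zero_iff_dvd]; exact hab.1
  have hb : ((m1 * m3 : ℤ) : ZMod p) ≠ 0 := by
    rw [Ne, ZMod.intCast_zmod_eq_zero_iff_dvd]; exact hab.2
  -- solve a y² + b z² = 1 in ZMod p
  obtain ⟨y, z, hyz⟩ := FiniteField.exists_root_sum_quadratic
    (f := Polynomial.C ((m1 * m2 : ℤ) : ZMod p) * Polynomial.X ^ 2 + Polynomial.C 0 * Polynomial.X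
      + Polynomial.C (-1))
    (g := Polynomial.C ((m1 * m3 : ℤ) : ZMod p) * Polynomial.X ^ 2 + Polynomial.C 0 * Polynomial.X
      + Polynomial.C 0)
    (Polynomial.degree_quadratic ha) (Polynomial.degree_quadratic hb)
    (by rw [ZMod.card]; exact Nat.odd_iff.mp (hp.odd_of_ne_two hodd))
  simp only [Polynomial.eval_add, Polynomial.eval_mul, Polynomial.eval_pow, Polynomial.eval_C,
    Polynomial.eval_X, Polynomial.map_zero, zero_mul, add_zero, zero_add] at hyz
  -- integer representatives
  obtain ⟨y0, hy0⟩ : ∃ t : ℤ, ((t : ZMod p)) = y :=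
    ⟨(y.val : ℤ), by push_cast [ZMod.natCast_val, ZMod.cast_id]; rfl⟩
  obtain ⟨z0, hz0⟩ : ∃ t : ℤ, ((t : ZMod p)) = z :=
    ⟨(z.val : ℤ), by push_cast [ZMod.natCast_val, ZMod.cast_id]; rfl⟩
  obtain ⟨c, hc⟩ : ∃ c : ℤ, c = m1 * m2 * y0 ^ 2 + m1 * m3 * z0 ^ 2 := ⟨_, rfl⟩
  have hcp : (p : ℤ) ∣ c - 1 := by
    rw [← ZMod.intCast_zmod_eq_zero_iff_dvd]
    push_cast [hc, hy0, hz0]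
    push_cast at hyz
    linear_combination hyz
  have hc0 : c ≠ 0 := by
    intro h0
    rw [h0, zero_sub] at hcp
    have h1 : (p : ℤ) ∣ 1 := (dvd_neg).mp hcp
    have h2 := Int.le_of_dvd one_pos h1
    have h3 := hp.two_le
    omega
  -- Hensel: c is a square in ℤ_[p]
  have hF : ‖(Polynomial.X ^ 2 - Polynomial.C (c : ℤ_[p])).eval 1‖
      < ‖(Polynomial.X ^ 2 - Polynomial.C (c : ℤ_[p])).derivative.eval 1‖ ^ 2 := by
    have hd : (Polynomial.X ^ 2 - Polynomial.C (c : ℤ_[p])).derivative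
        = Polynomial.C 2 * Polynomial.X := by
      simp [Polynomial.derivative_sub, Polynomial.derivative_pow]
    rw [hd]
    simp only [Polynomial.eval_sub, Polynomial.eval_pow, Polynomial.eval_C, Polynomial.eval_mul,
      Polynomial.eval_X, Polynomial.eval_one, one_pow, mul_one]
    have hnd2 : ¬ ((p : ℤ) ∣ 2) := by
      intro hd2
      have h2 := Int.le_of_dvd (by norm_num) hd2
      have h3 := hp.two_le
      have h4 : p ≤ 2 := by exact_mod_cast h2
      have : p = 2 := le_antisymm h4 h3
      exact hodd this
    have h2 : ‖(2 : ℤ_[p])‖ = 1 := by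
      refine le_antisymm (PadicInt.norm_le_one _) (not_lt.mp ?_)
      intro hlt
      have : ‖((2 : ℤ) : ℤ_[p])‖ < 1 := by norm_num at hlt ⊢; exact hlt
      exact hnd2 ((PadicInt.norm_int_lt_one_iff_dvd 2).mp this)
    rw [h2, one_pow]
    have hrw : ((1 : ℤ_[p]) - (c : ℤ_[p])) = (((1 - c : ℤ)) : ℤ_[p]) := by push_cast; ring
    rw [hrw, PadicInt.norm_int_lt_one_iff_dvd]
    exact (dvd_sub_comm).mp hcp
  obtain ⟨w, hw, -⟩ := hensels_lemma hF
  simp only [Polynomial.aeval_sub, Polynomial.aeval_X_pow, Polynomial.aeval_C,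
    Algebra.algebraMap_self, RingHom.id_apply,
    sub_eq_zero] at hw
  have hwq : ((w : ℚ_[p])) ^ 2 = ((c : ℤ) : ℚ_[p]) := by
    rw [← PadicInt.coe_pow, hw]; push_cast; ring
  -- conclude
  refine ⟨(w : ℚ_[p]), (y0 : ℚ_[p]), (z0 : ℚ_[p]), ?_, ?_⟩
  · rintro ⟨hx, -, -⟩
    rw [hx] at hwq
    have h0 : ((c : ℤ) : ℚ_[p]) = 0 := by rw [← hwq]; ring
    exact hc0 (by exact_mod_cast h0)
  · rw [hwq, hc]; push_cast; ring
end
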